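/- arXiv:1505.01312 — 6 statements merged into one kernel-verified Lean document; each statement's English description precedes it below -/
import Mathlib

section
/- Let A be a complex unital Banach algebra, let e, f, h ∈ A be invertible positive elements, let a ∈ A be such that a^†_{e,h} exists, and suppose a = b c where b x = 0 implies x = 0 and c A = A (so that b^†_{e,f} and c^†_{f,h} exist). Then the following are equivalent: (i) a is weighted EP with weights e and h; (ii) a ∈ c^†_{f,h} A ∩ A b^†_{e,f} (i.e. a = c^†_{f,h} x = y b^†_{e,f} for some x, y ∈ A); (iii) a^†_{e,h} ∈ b A ∩ A c (i.e. a^†_{e,h} = b x = y c for some x, y ∈ A). -/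
/-!
Common definitions: hermitian and positive elements of a complex unital Banach
algebra, hermitian elements with respect to the equivalent norm induced by an
invertible positive element (weight), and the weighted Moore–Penrose inverse,
both for Banach algebra elements and for bounded linear operators between
Banach spaces.
-/

open Nat

noncomputable section

/-- An element `a` of a complex unital Banach algebra is hermitian if
`‖exp(i t a)‖ = 1` for all real `t`. -/
def IsHermitianEl {A : Type*} [NormedRing A] [NormedAlgebra ℂ A] (a : A) : Prop :=
  ∀ t : ℝ, ‖NormedSpace.exp ((Complex.I * (t : ℂ)) • a)‖ = 1

/-- An element of a complex unital Banach algebra is positive if it is hermitian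
and its spectrum is contained in `[0, ∞)`. -/
def IsPositiveEl {A : Type*} [NormedRing A] [NormedAlgebra ℂ A] (a : A) : Prop :=
  IsHermitianEl a ∧ spectrum ℂ a ⊆ Complex.ofReal '' Set.Ici (0 : ℝ)

/-- `a` is hermitian in `A^u`, i.e. hermitian for the equivalent norm
`‖x‖_u = ‖u^{1/2} x u^{-1/2}‖`, where `u^{1/2}` is the (unique) invertible
positive square root of the invertible positive weight `u`. -/
def IsHermitianWt {A : Type*} [NormedRing A] [NormedAlgebra ℂ A] (u a : A) : Prop :=
  ∃ s : Aˣ, IsPositiveEl (s : A) ∧ ((s : A)) ^ 2 = u ∧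
    ∀ t : ℝ, ‖(s : A) * NormedSpace.exp ((Complex.I * (t : ℂ)) • a) * ((s⁻¹ : Aˣ) : A)‖ = 1

/-- `b` is the weighted Moore–Penrose inverse of `a` with weights `e` and `f`. -/
def IsWMPI {A : Type*} [NormedRing A] [NormedAlgebra ℂ A] (e f a b : A) : Prop :=
  a * b * a = a ∧ b * a * b = b ∧ IsHermitianWt e (a * b) ∧ IsHermitianWt f (b * a)

/-- `a` is weighted EP with weights `e` and `f`. -/
def IsWEP {A : Type*} [NormedRing A] [NormedAlgebra ℂ A] (e f a : A) : Prop :=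
  ∃ b : A, IsWMPI e f a b ∧ a * b = b * a

/-- `S ∈ L(Y,X)` is the weighted Moore–Penrose inverse of `T ∈ L(X,Y)` with
weights `E ∈ L(Y)` and `F ∈ L(X)`. -/
def IsWMPIop {X Y : Type*} [NormedAddCommGroup X] [NormedSpace ℂ X]
    [NormedAddCommGroup Y] [NormedSpace ℂ Y]
    (E : Y →L[ℂ] Y) (F : X →L[ℂ] X) (T : X →L[ℂ] Y) (S : Y →L[ℂ] X) : Prop :=
  (T.comp S).comp T = T ∧ (S.comp T).comp S = S ∧
    IsHermitianWt E (T.comp S) ∧ IsHermitianWt F (S.comp T)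

/-- `T ∈ L(X)` is weighted EP with weights `E` and `F`. -/
def IsWEPop {X : Type*} [NormedAddCommGroup X] [NormedSpace ℂ X]
    (E F T : X →L[ℂ] X) : Prop :=
  ∃ S : X →L[ℂ] X, IsWMPIop E F T S ∧ T.comp S = S.comp T



section AuxLemmas

variable {A : Type*} [NormedRing A] [NormedAlgebra ℂ A] [CompleteSpace A]

theorem norm_exp_sub_one_sub_le (w : A) :
    ‖NormedSpace.exp w - 1 - w‖ ≤ ‖w‖ ^ 2 * Real.exp ‖w‖ := by
  have hsum : Summable fun n : ℕ => (n !⁻¹ : ℂ) • w ^ n :=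
    NormedSpace.expSeries_summable' (𝕂 := ℂ) w
  have hsum1 : Summable fun n : ℕ => ((n + 1)!⁻¹ : ℂ) • w ^ (n + 1) :=
    (summable_nat_add_iff (f := fun n : ℕ => (n !⁻¹ : ℂ) • w ^ n) 1).mpr hsum
  have hnorm : Summable fun n : ℕ => ‖(n !⁻¹ : ℂ) • w ^ n‖ :=
    NormedSpace.norm_expSeries_summable' (𝕂 := ℂ) w
  have hnorm2 : Summable fun n : ℕ => ‖((n + 2)!⁻¹ : ℂ) • w ^ (n + 2)‖ :=
    (summable_nat_add_iff (f := fun n : ℕ => ‖(n !⁻¹ : ℂ) • w ^ n‖) 2).mpr hnorm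
  have key : NormedSpace.exp w - 1 - w = ∑' n : ℕ, ((n + 2)!⁻¹ : ℂ) • w ^ (n + 2) := by
    simp only [NormedSpace.exp_eq_tsum ℂ]
    rw [Summable.tsum_eq_zero_add hsum, Summable.tsum_eq_zero_add hsum1]
    simp [Nat.factorial]
  rw [key]
  have hRHSsum : Summable fun n : ℕ => ‖w‖ ^ 2 * ((n ! : ℝ))⁻¹ * ‖w‖ ^ n := by
    have := (Real.summable_pow_div_factorial ‖w‖).mul_left (‖w‖ ^ 2)
    refine this.congr fun n => ?_
    rw [div_eq_mul_inv]
    ring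
  calc ‖∑' n : ℕ, ((n + 2)!⁻¹ : ℂ) • w ^ (n + 2)‖
      ≤ ∑' n : ℕ, ‖((n + 2)!⁻¹ : ℂ) • w ^ (n + 2)‖ := norm_tsum_le_tsum_norm hnorm2
    _ ≤ ∑' n : ℕ, ‖w‖ ^ 2 * ((n ! : ℝ))⁻¹ * ‖w‖ ^ n := by
        refine Summable.tsum_le_tsum (fun n => ?_) hnorm2 hRHSsum
        have h1 : ‖((n + 2)!⁻¹ : ℂ) • w ^ (n + 2)‖ = (((n + 2)! : ℝ))⁻¹ * ‖w ^ (n + 2)‖ := by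
          rw [norm_smul, norm_inv]
          norm_num
        rw [h1]
        have h2 : ‖w ^ (n + 2)‖ ≤ ‖w‖ ^ (n + 2) := norm_pow_le' w (by omega)
        have h3 : (((n + 2)! : ℝ))⁻¹ ≤ ((n ! : ℝ))⁻¹ := by
          apply inv_anti₀
          · positivity
          · exact_mod_cast Nat.factorial_le (by omega)
        calc (((n + 2)! : ℝ))⁻¹ * ‖w ^ (n + 2)‖
            ≤ ((n ! : ℝ))⁻¹ * ‖w‖ ^ (n + 2) := by
              apply mul_le_mul h3 h2 (norm_nonneg _) (by positivity)
          _ = ‖w‖ ^ 2 * ((n ! : ℝ))⁻¹ * ‖w‖ ^ n := by ring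
    _ = ‖w‖ ^ 2 * ∑' n : ℕ, ((n ! : ℝ))⁻¹ * ‖w‖ ^ n := by
        rw [← tsum_mul_left]
        simp [mul_assoc]
    _ = ‖w‖ ^ 2 * Real.exp ‖w‖ := by
        congr 1
        rw [Real.exp_eq_exp_ℝ, NormedSpace.exp_eq_tsum ℝ]
        simp [smul_eq_mul]


theorem hermitian_quadratic {x : A} (hx : IsHermitianEl x) :
    ∀ t : ℝ, |t| ≤ 1 → ‖1 + (Complex.I * (t : ℂ)) • x‖ ≤ 1 + (‖x‖ ^ 2 * Real.exp ‖x‖) * t ^ 2 := by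
  intro t ht
  set z : ℂ := Complex.I * (t : ℂ) with hz
  have hnz : ‖z‖ = |t| := by
    rw [hz, norm_mul, Complex.norm_I, one_mul, Complex.norm_real, Real.norm_eq_abs]
  have hzx : ‖z • x‖ = |t| * ‖x‖ := by rw [norm_smul, hnz]
  have h1 : ‖(1 : A) + z • x‖ ≤ ‖NormedSpace.exp (z • x)‖ +
      ‖NormedSpace.exp (z • x) - 1 - z • x‖ := by
    have hdec : (1 : A) + z • x =
        NormedSpace.exp (z • x) - (NormedSpace.exp (z • x) - 1 - z • x) := by abel
    rw [hdec]
    exact norm_sub_le _ _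
  have hE : ‖NormedSpace.exp (z • x)‖ = 1 := hx t
  have h2 := norm_exp_sub_one_sub_le (z • x)
  have h3 : ‖z • x‖ ^ 2 * Real.exp ‖z • x‖ ≤ (‖x‖ ^ 2 * Real.exp ‖x‖) * t ^ 2 := by
    rw [hzx]
    have e1 : (|t| * ‖x‖) ^ 2 = t ^ 2 * ‖x‖ ^ 2 := by rw [mul_pow, sq_abs]
    rw [e1]
    have e2 : Real.exp (|t| * ‖x‖) ≤ Real.exp ‖x‖ := by
      apply Real.exp_le_exp.mpr
      nlinarith [norm_nonneg x, abs_nonneg t]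
    nlinarith [Real.exp_pos (|t| * ‖x‖), sq_nonneg t, norm_nonneg x, sq_nonneg ‖x‖,
      mul_le_mul_of_nonneg_left e2 (mul_nonneg (sq_nonneg t) (sq_nonneg ‖x‖))]
  calc ‖(1 : A) + z • x‖ ≤ ‖NormedSpace.exp (z • x)‖ +
        ‖NormedSpace.exp (z • x) - 1 - z • x‖ := h1
    _ ≤ 1 + (‖x‖ ^ 2 * Real.exp ‖x‖) * t ^ 2 := by
        rw [hE]
        have := le_trans h2 h3
        linarith

theorem isHermitianEl_of_quadratic (hone : ‖(1 : A)‖ = 1) {x : A} {C : ℝ}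
    (hbd : ∀ t : ℝ, |t| ≤ 1 → ‖1 + (Complex.I * (t : ℂ)) • x‖ ≤ 1 + C * t ^ 2) :
    IsHermitianEl x := by
  have hmain : ∀ t : ℝ, ‖NormedSpace.exp ((Complex.I * (t : ℂ)) • x)‖ ≤ 1 := by
    intro t
    set K := |C| + ‖x‖ ^ 2 * Real.exp ‖x‖ with hKdef
    have hK0 : 0 ≤ K := by positivity
    have hbound : ∀ n : ℕ, 1 ≤ n → |t| ≤ n →
        ‖NormedSpace.exp ((Complex.I * (t : ℂ)) • x)‖ ≤ Real.exp (K * t ^ 2 / n) := by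
      intro n h1n htn
      have hn0 : (0 : ℝ) < n := by exact_mod_cast h1n
      have hsplit : (Complex.I * (t : ℂ)) • x = n • ((Complex.I * ((t / n : ℝ) : ℂ)) • x) := by
        rw [← Nat.cast_smul_eq_nsmul ℂ, smul_smul]
        congr 1
        have hne : ((n : ℕ) : ℂ) ≠ 0 := Nat.cast_ne_zero.mpr (by omega)
        push_cast
        field_simp
      have habs : |t / (n : ℝ)| ≤ 1 := by
        rw [abs_div, abs_of_pos hn0]
        exact (div_le_one hn0).mpr htn
      have hstep : ‖NormedSpace.exp ((Complex.I * ((t / n : ℝ) : ℂ)) • x)‖ ≤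
          1 + K * (t / n) ^ 2 := by
        set z : ℂ := Complex.I * ((t / n : ℝ) : ℂ) with hzdef
        have hnz : ‖z‖ = |t / (n : ℝ)| := by
          rw [hzdef, norm_mul, Complex.norm_I, one_mul, Complex.norm_real, Real.norm_eq_abs]
        have hzx : ‖z • x‖ = |t / (n : ℝ)| * ‖x‖ := by rw [norm_smul, hnz]
        have hd : ‖NormedSpace.exp (z • x)‖ ≤ ‖1 + z • x‖ +
            ‖NormedSpace.exp (z • x) - 1 - z • x‖ := by
          have hdec : NormedSpace.exp (z • x) =
              (1 + z • x) + (NormedSpace.exp (z • x) - 1 - z • x) := by abel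
          conv_lhs => rw [hdec]
          exact norm_add_le _ _
        have h2 := norm_exp_sub_one_sub_le (z • x)
        have h3 : ‖z • x‖ ^ 2 * Real.exp ‖z • x‖ ≤ (‖x‖ ^ 2 * Real.exp ‖x‖) * (t / n) ^ 2 := by
          rw [hzx]
          have e1 : (|t / (n : ℝ)| * ‖x‖) ^ 2 = (t / n) ^ 2 * ‖x‖ ^ 2 := by
            rw [mul_pow, sq_abs]
          rw [e1]
          have e2 : Real.exp (|t / (n : ℝ)| * ‖x‖) ≤ Real.exp ‖x‖ := by
            apply Real.exp_le_exp.mpr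
            nlinarith [norm_nonneg x, abs_nonneg (t / (n : ℝ))]
          nlinarith [mul_le_mul_of_nonneg_left e2
            (mul_nonneg (sq_nonneg (t / (n : ℝ))) (sq_nonneg ‖x‖))]
        have h4 := hbd (t / n) habs
        have h5 : C * (t / n) ^ 2 ≤ |C| * (t / n) ^ 2 :=
          mul_le_mul_of_nonneg_right (le_abs_self C) (sq_nonneg _)
        calc ‖NormedSpace.exp (z • x)‖ ≤ ‖1 + z • x‖ +
              ‖NormedSpace.exp (z • x) - 1 - z • x‖ := hd
          _ ≤ (1 + C * (t / n) ^ 2) + (‖x‖ ^ 2 * Real.exp ‖x‖) * (t / n) ^ 2 := by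
              have := le_trans h2 h3
              exact add_le_add h4 this
          _ ≤ 1 + K * (t / n) ^ 2 := by
              rw [hKdef]
              nlinarith [h5]
      have hge0 : (0 : ℝ) ≤ 1 + K * (t / n) ^ 2 := by positivity
      calc ‖NormedSpace.exp ((Complex.I * (t : ℂ)) • x)‖
          = ‖(NormedSpace.exp ((Complex.I * ((t / n : ℝ) : ℂ)) • x)) ^ n‖ := by
            letI : NormedAlgebra ℚ A := .restrictScalars ℚ ℂ A
            rw [hsplit, NormedSpace.exp_nsmul]
        _ ≤ ‖NormedSpace.exp ((Complex.I * ((t / n : ℝ) : ℂ)) • x)‖ ^ n :=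
            norm_pow_le' _ (by omega)
        _ ≤ (1 + K * (t / n) ^ 2) ^ n := pow_le_pow_left₀ (norm_nonneg _) hstep n
        _ ≤ (Real.exp (K * (t / n) ^ 2)) ^ n := by
            apply pow_le_pow_left₀ hge0
            have := Real.add_one_le_exp (K * (t / n) ^ 2)
            linarith
        _ = Real.exp (n * (K * (t / n) ^ 2)) := (Real.exp_nat_mul _ n).symm
        _ = Real.exp (K * t ^ 2 / n) := by
            congr 1
            field_simp
    have hlim : Filter.Tendsto (fun n : ℕ => Real.exp (K * t ^ 2 / n)) Filter.atTop (nhds 1) := by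
      have h0 : Filter.Tendsto (fun n : ℕ => K * t ^ 2 / n) Filter.atTop (nhds 0) :=
        tendsto_const_div_atTop_nhds_zero_nat _
      have := (Real.continuous_exp.tendsto 0).comp h0
      simpa [Function.comp_def] using this
    refine ge_of_tendsto hlim ?_
    filter_upwards [Filter.eventually_ge_atTop 1, Filter.eventually_ge_atTop ⌈|t|⌉₊] with n hn1 hn2
    exact hbound n hn1 (le_trans (Nat.le_ceil _) (by exact_mod_cast hn2))
  intro t
  have h1 := hmain t
  have h2 := hmain (-t)
  have hmul : NormedSpace.exp ((Complex.I * (t : ℂ)) • x) *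
      NormedSpace.exp ((Complex.I * ((-t : ℝ) : ℂ)) • x) = 1 := by
    letI : NormedAlgebra ℚ A := .restrictScalars ℚ ℂ A
    rw [← NormedSpace.exp_add_of_commute (((Commute.refl x).smul_left _).smul_right _)]
    have hzero : (Complex.I * (t : ℂ)) • x + (Complex.I * ((-t : ℝ) : ℂ)) • x = 0 := by
      rw [← add_smul]
      have : Complex.I * (t : ℂ) + Complex.I * ((-t : ℝ) : ℂ) = 0 := by
        push_cast
        ring
      rw [this, zero_smul]
    rw [hzero, NormedSpace.exp_zero]
  apply le_antisymm h1
  calc (1 : ℝ) = ‖(1 : A)‖ := hone.symm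
    _ = ‖NormedSpace.exp ((Complex.I * (t : ℂ)) • x) *
        NormedSpace.exp ((Complex.I * ((-t : ℝ) : ℂ)) • x)‖ := by rw [hmul]
    _ ≤ ‖NormedSpace.exp ((Complex.I * (t : ℂ)) • x)‖ *
        ‖NormedSpace.exp ((Complex.I * ((-t : ℝ) : ℂ)) • x)‖ := norm_mul_le _ _
    _ ≤ ‖NormedSpace.exp ((Complex.I * (t : ℂ)) • x)‖ * 1 := by
        exact mul_le_mul_of_nonneg_left h2 (norm_nonneg _)
    _ = ‖NormedSpace.exp ((Complex.I * (t : ℂ)) • x)‖ := mul_one _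

theorem exp_eq_one_add_of_sq_eq_zero {w : A} (hw : w * w = 0) :
    NormedSpace.exp w = 1 + w := by
  have hpow : ∀ n : ℕ, w ^ (n + 2) = 0 := by
    intro n
    rw [pow_add, sq, hw, mul_zero]
  have hs : ∀ n ∉ ({0, 1} : Finset ℕ), (n !⁻¹ : ℂ) • w ^ n = 0 := by
    intro n hn
    have hb2 : 2 ≤ n := by
      simp only [Finset.mem_insert, Finset.mem_singleton] at hn
      omega
    obtain ⟨m, rfl⟩ : ∃ m, n = m + 2 := ⟨n - 2, by omega⟩
    rw [hpow, smul_zero]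
  simp only [NormedSpace.exp_eq_tsum ℂ]
  rw [tsum_eq_sum hs]
  simp [Nat.factorial]


theorem herm_sub_nilpotent_aux (hone : ‖(1 : A)‖ = 1) {x y : A}
    (hx : IsHermitianEl x) (hy : IsHermitianEl y)
    (hnil : (x - y) * (x - y) = 0) : x = y := by
  set C1 := ‖x‖ ^ 2 * Real.exp ‖x‖ with hC1
  set C2 := ‖y‖ ^ 2 * Real.exp ‖y‖ with hC2
  have hC1n : 0 ≤ C1 := by positivity
  have hC2n : 0 ≤ C2 := by positivity
  have hquad : ∀ t : ℝ, |t| ≤ 1 → ‖1 + (Complex.I * (t : ℂ)) • (x - y)‖ ≤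
      1 + (C1 + C2 + C1 * C2 + ‖x‖ * ‖y‖) * t ^ 2 := by
    intro t ht
    set z : ℂ := Complex.I * (t : ℂ) with hz
    have hznorm : ‖z‖ = |t| := by
      rw [hz, norm_mul, Complex.norm_I, one_mul, Complex.norm_real, Real.norm_eq_abs]
    have hz2 : Complex.I * ((-t : ℝ) : ℂ) = -z := by rw [hz]; push_cast; ring
    have e1 : (z • x) * ((-z) • y) = (z * -z) • (x * y) := smul_mul_smul_comm z x (-z) y
    have hfact : (1 + z • x) * (1 + (-z) • y) = 1 + z • (x - y) + (z * -z) • (x * y) := by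
      calc (1 + z • x) * (1 + (-z) • y)
          = 1 + (-z) • y + (z • x + (z • x) * ((-z) • y)) := by
            simp only [mul_add, add_mul, one_mul, mul_one]
            abel
        _ = 1 + z • (x - y) + (z * -z) • (x * y) := by
            rw [e1, smul_sub, neg_smul]
            abel
    have hsub : (1 : A) + z • (x - y) =
        (1 + z • x) * (1 + (-z) • y) - (z * -z) • (x * y) := by
      rw [hfact]; abel
    have ht2 : t ^ 2 ≤ 1 := by nlinarith [sq_abs t, abs_nonneg t]
    have hn1 : ‖(1 : A) + z • x‖ ≤ 1 + C1 * t ^ 2 := hermitian_quadratic hx t ht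
    have hn2 : ‖(1 : A) + (-z) • y‖ ≤ 1 + C2 * t ^ 2 := by
      have hq := hermitian_quadratic hy (-t) (by rwa [abs_neg])
      rw [hz2, neg_sq] at hq
      exact hq
    calc ‖(1 : A) + z • (x - y)‖
        ≤ ‖(1 + z • x) * (1 + (-z) • y)‖ + ‖(z * -z) • (x * y)‖ := by
          rw [hsub]; exact norm_sub_le _ _
      _ ≤ (1 + C1 * t ^ 2) * (1 + C2 * t ^ 2) + t ^ 2 * (‖x‖ * ‖y‖) := by
          have hp : ‖(1 + z • x) * (1 + (-z) • y)‖ ≤ (1 + C1 * t ^ 2) * (1 + C2 * t ^ 2) :=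
            le_trans (norm_mul_le _ _) (mul_le_mul hn1 hn2 (norm_nonneg _) (by positivity))
          have hqq : ‖(z * -z) • (x * y)‖ ≤ t ^ 2 * (‖x‖ * ‖y‖) := by
            rw [norm_smul]
            have hzz : ‖z * -z‖ = t ^ 2 := by
              rw [norm_mul, norm_neg, hznorm, ← sq, sq_abs]
            rw [hzz]
            exact mul_le_mul_of_nonneg_left (norm_mul_le x y) (sq_nonneg t)
          exact add_le_add hp hqq
      _ ≤ 1 + (C1 + C2 + C1 * C2 + ‖x‖ * ‖y‖) * t ^ 2 := by
          have h4 : t ^ 2 * t ^ 2 ≤ t ^ 2 := by nlinarith [sq_nonneg t]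
          nlinarith [mul_le_mul_of_nonneg_left h4 (mul_nonneg hC1n hC2n)]
  have hherm : IsHermitianEl (x - y) := isHermitianEl_of_quadratic hone hquad
  have hnorm1 : ∀ t : ℝ, ‖(1 : A) + (Complex.I * (t : ℂ)) • (x - y)‖ = 1 := by
    intro t
    have hsq : ((Complex.I * (t : ℂ)) • (x - y)) * ((Complex.I * (t : ℂ)) • (x - y)) = 0 := by
      rw [smul_mul_smul_comm, hnil, smul_zero]
    have hE := hherm t
    rwa [exp_eq_one_add_of_sq_eq_zero hsq] at hE
  have hbound : ∀ t : ℝ, 0 < t → t * ‖x - y‖ ≤ 2 := by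
    intro t ht0
    have h1 := hnorm1 t
    have h2 : ‖(Complex.I * (t : ℂ)) • (x - y)‖ ≤
        ‖(1 : A) + (Complex.I * (t : ℂ)) • (x - y)‖ + ‖(1 : A)‖ := by
      have hns := norm_sub_le ((1 : A) + (Complex.I * (t : ℂ)) • (x - y)) 1
      simpa using hns
    rw [h1, hone] at h2
    have h3 : ‖(Complex.I * (t : ℂ)) • (x - y)‖ = t * ‖x - y‖ := by
      rw [norm_smul, norm_mul, Complex.norm_I, one_mul, Complex.norm_real, Real.norm_eq_abs,
        abs_of_pos ht0]
    rw [h3] at h2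
    linarith
  have hzero : ‖x - y‖ = 0 := by
    by_contra hne
    have hpos : 0 < ‖x - y‖ := lt_of_le_of_ne (norm_nonneg _) (Ne.symm hne)
    have h4 := hbound (3 / ‖x - y‖) (by positivity)
    rw [div_mul_cancel₀ _ (ne_of_gt hpos)] at h4
    linarith
  exact sub_eq_zero.mp (norm_eq_zero.mp hzero)

theorem sqrt_unique_aux (s t : Aˣ)
    (hs : spectrum ℂ (s : A) ⊆ Complex.ofReal '' Set.Ici (0 : ℝ))
    (ht : spectrum ℂ (t : A) ⊆ Complex.ofReal '' Set.Ici (0 : ℝ))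
    (h2 : ((s : A)) ^ 2 = ((t : A)) ^ 2) : (s : A) = (t : A) := by
  classical
  set d : A := (s : A) - (t : A) with hd
  have key : (s : A) * d + d * (t : A) = 0 := by
    rw [hd, mul_sub, sub_mul]
    have h2' : (s : A) * (s : A) = (t : A) * (t : A) := by
      have h2'' := h2
      rwa [pow_two, pow_two] at h2''
    rw [h2']
    abel
  have hsd : (s : A) * d = -(d * (t : A)) := eq_neg_of_add_eq_zero_left key
  -- spectra are in the open right half line
  have hspos : ∀ z : ℂ, z ∈ spectrum ℂ (s : A) → ∃ r : ℝ, 0 < r ∧ z = (r : ℂ) := by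
    intro z hz
    obtain ⟨r, hr, hrz⟩ := hs hz
    refine ⟨r, ?_, hrz.symm⟩
    rcases lt_or_eq_of_le (Set.mem_Ici.mp hr) with hlt | heq
    · exact hlt
    · exfalso
      apply spectrum.zero_notMem ℂ s.isUnit
      rw [← hrz, ← heq] at hz
      simpa using hz
  have htpos : ∀ z : ℂ, z ∈ spectrum ℂ (t : A) → ∃ r : ℝ, 0 < r ∧ z = (r : ℂ) := by
    intro z hz
    obtain ⟨r, hr, hrz⟩ := ht hz
    refine ⟨r, ?_, hrz.symm⟩
    rcases lt_or_eq_of_le (Set.mem_Ici.mp hr) with hlt | heq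
    · exact hlt
    · exfalso
      apply spectrum.zero_notMem ℂ t.isUnit
      rw [← hrz, ← heq] at hz
      simpa using hz
  have hdisj : ∀ z : ℂ, z ∈ spectrum ℂ (s : A) → -z ∈ resolventSet ℂ ((t : A)) := by
    intro z hz
    by_contra hmem
    have h1 : -z ∈ spectrum ℂ ((t : A)) := hmem
    obtain ⟨r, hr, hrz⟩ := hspos z hz
    obtain ⟨r', hr', hrz'⟩ := htpos (-z) h1
    have hcast : ((r + r' : ℝ) : ℂ) = 0 := by
      push_cast
      rw [← hrz, ← hrz']
      ring
    have hrr : r + r' = 0 := by exact_mod_cast hcast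
    linarith
  -- the two local expressions for the glued function agree on overlaps
  have agree : ∀ z : ℂ, z ∈ resolventSet ℂ ((s : A)) → -z ∈ resolventSet ℂ ((t : A)) →
      resolvent ((s : A)) z * d = -(d * resolvent ((t : A)) (-z)) := by
    intro z hzs hzt
    have hkey : (algebraMap ℂ A z - (s : A)) * d = -(d * (algebraMap ℂ A (-z) - (t : A))) := by
      calc (algebraMap ℂ A z - (s : A)) * d
          = algebraMap ℂ A z * d - (s : A) * d := sub_mul _ _ _
        _ = d * algebraMap ℂ A z + d * (t : A) := by
            rw [Algebra.commutes, hsd, sub_neg_eq_add]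
        _ = -(d * (algebraMap ℂ A (-z) - (t : A))) := by
            rw [map_neg, mul_sub, mul_neg]
            abel
    rw [spectrum.resolvent_eq hzs, spectrum.resolvent_eq hzt]
    have hu1 : ((hzs.unit : Aˣ) : A) = algebraMap ℂ A z - (s : A) := rfl
    have hu2 : ((hzt.unit : Aˣ) : A) = algebraMap ℂ A (-z) - (t : A) := rfl
    have hcan : ((hzs.unit : Aˣ) : A) * (((hzs.unit⁻¹ : Aˣ) : A) * d) = d :=
      Units.mul_inv_cancel_left _ _
    have e1 : ((hzs.unit : Aˣ) : A) * d = -(d * ((hzt.unit : Aˣ) : A)) := by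
      rw [hu1, hu2]; exact hkey
    have hgoal : ((hzs.unit : Aˣ) : A) * (-(d * ((hzt.unit⁻¹ : Aˣ) : A))) = d := by
      calc ((hzs.unit : Aˣ) : A) * (-(d * ((hzt.unit⁻¹ : Aˣ) : A)))
          = -((((hzs.unit : Aˣ) : A) * d) * ((hzt.unit⁻¹ : Aˣ) : A)) := by
            rw [mul_neg, mul_assoc]
        _ = (d * ((hzt.unit : Aˣ) : A)) * ((hzt.unit⁻¹ : Aˣ) : A) := by
            rw [e1, neg_mul, neg_neg]
        _ = d := Units.mul_inv_cancel_right d hzt.unit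
    exact (Units.mul_right_inj hzs.unit).mp (hcan.trans hgoal.symm)
  -- the glued entire function
  set G : ℂ → A := fun z =>
    if z ∈ spectrum ℂ ((s : A)) then -(d * resolvent ((t : A)) (-z))
    else resolvent ((s : A)) z * d with hG
  have hGdiff : Differentiable ℂ G := by
    intro z
    by_cases hz : z ∈ spectrum ℂ ((s : A))
    · have hzt : -z ∈ resolventSet ℂ ((t : A)) := hdisj z hz
      have h1 : DifferentiableAt ℂ (fun w : ℂ => resolvent ((t : A)) w) (-z) :=
        (spectrum.hasDerivAt_resolvent hzt).differentiableAt
      have h2 : DifferentiableAt ℂ (fun w : ℂ => -w) z := differentiable_neg.differentiableAt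
      have hHd : DifferentiableAt ℂ (fun w : ℂ => -(d * resolvent ((t : A)) (-w))) z :=
        ((h1.comp z h2).const_mul d).neg
      have hopen : IsOpen {w : ℂ | -w ∈ resolventSet ℂ ((t : A))} :=
        (spectrum.isOpen_resolventSet ((t : A))).preimage continuous_neg
      have hev : G =ᶠ[nhds z] fun w : ℂ => -(d * resolvent ((t : A)) (-w)) := by
        filter_upwards [hopen.mem_nhds hzt] with w hw
        by_cases hws : w ∈ spectrum ℂ ((s : A))
        · simp only [hG, if_pos hws]
        · have hws' : w ∈ resolventSet ℂ ((s : A)) := Set.not_notMem.mp hws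
          simp only [hG, if_neg hws]
          exact agree w hws' hw
      exact hHd.congr_of_eventuallyEq hev
    · have hz' : z ∈ resolventSet ℂ ((s : A)) := Set.not_notMem.mp hz
      have hRd : DifferentiableAt ℂ (fun w : ℂ => resolvent ((s : A)) w * d) z :=
        (spectrum.hasDerivAt_resolvent hz').differentiableAt.mul_const d
      have hev : G =ᶠ[nhds z] fun w : ℂ => resolvent ((s : A)) w * d := by
        filter_upwards [((spectrum.isClosed ((s : A))).isOpen_compl).mem_nhds hz] with w hw
        simp only [hG, if_neg hw]
      exact hRd.congr_of_eventuallyEq hev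
  have hGtends : Filter.Tendsto G (Bornology.cobounded ℂ) (nhds 0) := by
    have h1 : Filter.Tendsto (fun z : ℂ => resolvent ((s : A)) z * d)
        (Bornology.cobounded ℂ) (nhds 0) := by
      have h0 := spectrum.resolvent_tendsto_cobounded (𝕜 := ℂ) ((s : A))
      have hcm : Continuous (fun x : A => x * d) := continuous_mul_right d
      have := (hcm.tendsto 0).comp h0
      simpa [Function.comp_def] using this
    apply h1.congr'
    filter_upwards [eventually_cobounded_le_norm (‖(s : A)‖ * ‖(1 : A)‖ + 1)] with z hzn
    have hzres : z ∈ resolventSet ℂ ((s : A)) :=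
      spectrum.mem_resolventSet_of_norm_lt_mul (by linarith)
    have hznot : z ∉ spectrum ℂ ((s : A)) := fun hmem => hmem hzres
    simp only [hG, if_neg hznot]
  have hGbdd : Bornology.IsBounded (Set.range G) := by
    have hmem : {z : ℂ | G z ∈ Metric.closedBall (0 : A) 1} ∈ Filter.cocompact ℂ := by
      rw [← Metric.cobounded_eq_cocompact]
      exact hGtends (Metric.closedBall_mem_nhds 0 one_pos)
    obtain ⟨K, hKc, hKsub⟩ := Filter.mem_cocompact.mp hmem
    have himg : Bornology.IsBounded (G '' K) :=
      (hKc.image hGdiff.continuous).isBounded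
    have hsub : Set.range G ⊆ (G '' K) ∪ Metric.closedBall (0 : A) 1 := by
      rintro x ⟨z, rfl⟩
      by_cases hzK : z ∈ K
      · exact Set.mem_union_left _ (Set.mem_image_of_mem G hzK)
      · exact Set.mem_union_right _ (hKsub hzK)
    exact (himg.union Metric.isBounded_closedBall).subset hsub
  -- Liouville: G is constant, and it tends to 0, so it vanishes
  have hconst : ∀ z w : ℂ, G z = G w := fun z w =>
    hGdiff.apply_eq_apply_of_bounded hGbdd z w
  have hG0 : ∀ z : ℂ, G z = 0 := by
    intro z
    have hzero : Filter.Tendsto (fun _ : ℂ => G z) (Bornology.cobounded ℂ) (nhds 0) :=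
      hGtends.congr' (Filter.Eventually.of_forall fun w => hconst w z)
    exact tendsto_nhds_unique tendsto_const_nhds hzero
  -- conclude d = 0
  set lam : ℂ := ((‖(s : A)‖ * ‖(1 : A)‖ + 1 : ℝ) : ℂ) with hlam
  have hlamnorm : (‖(s : A)‖ * ‖(1 : A)‖ : ℝ) < ‖lam‖ := by
    rw [hlam, Complex.norm_real, Real.norm_eq_abs]
    have h0 : (0 : ℝ) ≤ ‖(s : A)‖ * ‖(1 : A)‖ := by positivity
    rw [abs_of_nonneg (by linarith)]
    linarith
  have hlamres : lam ∈ resolventSet ℂ ((s : A)) :=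
    spectrum.mem_resolventSet_of_norm_lt_mul hlamnorm
  have hlamnot : lam ∉ spectrum ℂ ((s : A)) := fun hmem => hmem hlamres
  have hres0 : resolvent ((s : A)) lam * d = 0 := by
    have hval := hG0 lam
    simp only [hG, if_neg hlamnot] at hval
    exact hval
  have hd0 : d = 0 := by
    have hcan2 : ((hlamres.unit : Aˣ) : A) * (((hlamres.unit⁻¹ : Aˣ) : A) * d) = d :=
      Units.mul_inv_cancel_left _ _
    rw [spectrum.resolvent_eq hlamres] at hres0
    rw [← hcan2, hres0, mul_zero]
  rw [hd] at hd0
  exact sub_eq_zero.mp hd0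


/-- Key rigidity: two elements hermitian w.r.t. the same weight whose difference
squares to zero are equal. -/
theorem isHermitianWt_eq_aux {w p q : A} (hp : IsHermitianWt w p) (hq : IsHermitianWt w q)
    (hnil : (p - q) * (p - q) = 0) : p = q := by
  obtain ⟨s1, hs1pos, hs1sq, hs1n⟩ := hp
  obtain ⟨s2, hs2pos, hs2sq, hs2n⟩ := hq
  have hss : (s1 : A) = (s2 : A) :=
    sqrt_unique_aux s1 s2 hs1pos.2 hs2pos.2 (by rw [hs1sq, hs2sq])
  have hs12 : s1 = s2 := Units.ext hss
  subst hs12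
  set s := s1 with hs
  have hone : ‖(1 : A)‖ = 1 := by
    have h0 := hs1n 0
    simpa using h0
  have conjsm : ∀ z : A, ∀ c : ℂ, (s : A) * (c • z) * ((s⁻¹ : Aˣ) : A) = c • ((s : A) * z * ((s⁻¹ : Aˣ) : A)) := by
    intro z c
    rw [mul_smul_comm, smul_mul_assoc]
  have hx : IsHermitianEl ((s : A) * p * ((s⁻¹ : Aˣ) : A)) := by
    intro t
    letI : NormedAlgebra ℚ A := .restrictScalars ℚ ℂ A
    rw [← conjsm, NormedSpace.exp_units_conj s]
    exact hs1n t
  have hy : IsHermitianEl ((s : A) * q * ((s⁻¹ : Aˣ) : A)) := by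
    intro t
    letI : NormedAlgebra ℚ A := .restrictScalars ℚ ℂ A
    rw [← conjsm, NormedSpace.exp_units_conj s]
    exact hs2n t
  have hnil' : (((s : A) * p * ((s⁻¹ : Aˣ) : A)) - ((s : A) * q * ((s⁻¹ : Aˣ) : A))) *
      (((s : A) * p * ((s⁻¹ : Aˣ) : A)) - ((s : A) * q * ((s⁻¹ : Aˣ) : A))) = 0 := by
    have hd : ((s : A) * p * ((s⁻¹ : Aˣ) : A)) - ((s : A) * q * ((s⁻¹ : Aˣ) : A))
        = (s : A) * (p - q) * ((s⁻¹ : Aˣ) : A) := by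
      rw [mul_sub, sub_mul]
    rw [hd]
    calc ((s : A) * (p - q) * ((s⁻¹ : Aˣ) : A)) * ((s : A) * (p - q) * ((s⁻¹ : Aˣ) : A))
        = (s : A) * ((p - q) * ((((s⁻¹ : Aˣ) : A) * (s : A)) * (p - q))) * ((s⁻¹ : Aˣ) : A) := by
          simp only [mul_assoc]
      _ = (s : A) * ((p - q) * (p - q)) * ((s⁻¹ : Aˣ) : A) := by
          rw [Units.inv_mul, one_mul]
      _ = 0 := by rw [hnil, mul_zero, zero_mul]
  have heq := herm_sub_nilpotent_aux hone hx hy hnil'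
  have : (s : A) * p * ((s⁻¹ : Aˣ) : A) = (s : A) * q * ((s⁻¹ : Aˣ) : A) := heq
  calc p = ((s⁻¹ : Aˣ) : A) * ((s : A) * p * ((s⁻¹ : Aˣ) : A)) * (s : A) := by
        simp only [mul_assoc, Units.inv_mul_cancel_left]
        rw [Units.inv_mul, mul_one]
    _ = ((s⁻¹ : Aˣ) : A) * ((s : A) * q * ((s⁻¹ : Aˣ) : A)) * (s : A) := by rw [this]
    _ = q := by
        simp only [mul_assoc, Units.inv_mul_cancel_left]
        rw [Units.inv_mul, mul_one]

end AuxLemmas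

/-- For `a = b c` as above, `a` is weighted EP with weights `e` and `h` iff
`a ∈ c^†_{f,h} A ∩ A b^†_{e,f}`, iff `a^†_{e,h} ∈ b A ∩ A c`. -/
theorem factorization_bc_weighted_EP_iff_membership
    {A : Type*} [NormedRing A] [NormedAlgebra ℂ A] [CompleteSpace A]
    (e f h a b c : A)
    (he : IsPositiveEl e ∧ IsUnit e) (hf : IsPositiveEl f ∧ IsUnit f)
    (hh : IsPositiveEl h ∧ IsUnit h)
    (ad : A) (had : IsWMPI e h a ad)
    (habc : a = b * c)
    (hb : ∀ x : A, b * x = 0 → x = 0) (hc : ∀ y : A, ∃ x : A, c * x = y)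
    (bd : A) (hbd : IsWMPI e f b bd) (cd : A) (hcd : IsWMPI f h c cd) :
    (IsWEP e h a ↔ ((∃ x : A, a = cd * x) ∧ (∃ y : A, a = y * bd))) ∧
    (IsWEP e h a ↔ ((∃ x : A, ad = b * x) ∧ (∃ y : A, ad = y * c))) := by
  -- abbreviations
  have hbd1 : b * bd * b = b := hbd.1
  have hcd1 : c * cd * c = c := hcd.1
  -- bd * b = 1
  have hbdb : bd * b = 1 := by
    have h0 : b * (bd * b - 1) = 0 := by
      rw [mul_sub, mul_one, ← mul_assoc, hbd1, sub_self]
    have := hb _ h0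
    rwa [sub_eq_zero] at this
  -- cancel c on the right
  have hcancel_c : ∀ u v : A, u * c = v * c → u = v := by
    intro u v huv
    obtain ⟨x1, hx1⟩ := hc 1
    calc u = u * 1 := (mul_one u).symm
      _ = u * (c * x1) := by rw [hx1]
      _ = (u * c) * x1 := by rw [mul_assoc]
      _ = (v * c) * x1 := by rw [huv]
      _ = v * (c * x1) := by rw [mul_assoc]
      _ = v := by rw [hx1, mul_one]
  -- c * cd = 1
  have hccd : c * cd = 1 := hcancel_c _ _ (by rw [hcd1, one_mul])
  -- the key helper: any weighted MP inverse z of a satisfies a*z = b*bd and z*a = cd*c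
  have key : ∀ z : A, a * z * a = a → IsHermitianWt e (a * z) → IsHermitianWt h (z * a) →
      a * z = b * bd ∧ z * a = cd * c := by
    intro z h1 h3 h4
    have hczb : c * z * b = 1 := by
      have h0 : b * (c * z * b * c - c) = 0 := by
        have : b * (c * z * b * c) = b * c := by
          calc b * (c * z * b * c) = (b * c) * z * (b * c) := by
                simp only [mul_assoc]
            _ = a * z * a := by rw [← habc]
            _ = a := h1
            _ = b * c := habc
        rw [mul_sub, this, sub_self]
      have h0' := hb _ h0
      have h0'' : c * z * b * c = 1 * c := by rw [one_mul, ← sub_eq_zero]; exact h0'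
      exact hcancel_c _ _ h0''
    constructor
    · -- a*z = b*bd
      apply isHermitianWt_eq_aux h3 hbd.2.2.1
      have hp2 : (a * z) * (a * z) = a * z := by
        rw [← mul_assoc, h1]
      have hpq : (a * z) * (b * bd) = b * bd := by
        calc (a * z) * (b * bd) = b * (c * z * b) * bd := by
              rw [habc]; simp only [mul_assoc]
          _ = b * bd := by rw [hczb, mul_one]
      have hqp : (b * bd) * (a * z) = a * z := by
        calc (b * bd) * (a * z) = b * ((bd * b) * (c * z)) := by
              rw [habc]; simp only [mul_assoc]
          _ = b * (c * z) := by rw [hbdb, one_mul]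
          _ = a * z := by rw [habc, mul_assoc]
      have hq2 : (b * bd) * (b * bd) = b * bd := by
        calc (b * bd) * (b * bd) = b * ((bd * b) * bd) := by simp only [mul_assoc]
          _ = b * bd := by rw [hbdb, one_mul]
      calc (a * z - b * bd) * (a * z - b * bd)
          = ((a * z) * (a * z) - (a * z) * (b * bd)) - ((b * bd) * (a * z) - (b * bd) * (b * bd)) := by
            rw [sub_mul, mul_sub, mul_sub]
        _ = 0 := by rw [hp2, hpq, hqp, hq2]; abel
    · -- z*a = cd*c
      apply isHermitianWt_eq_aux h4 hcd.2.2.2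
      have hp2 : (z * a) * (z * a) = z * a := by
        calc (z * a) * (z * a) = z * (a * z * a) := by simp only [mul_assoc]
          _ = z * a := by rw [h1]
      have hpq : (z * a) * (cd * c) = z * a := by
        calc (z * a) * (cd * c) = z * (b * (c * cd * c)) := by
              rw [habc]; simp only [mul_assoc]
          _ = z * (b * c) := by rw [hcd1]
          _ = z * a := by rw [← habc]
      have hqp : (cd * c) * (z * a) = cd * c := by
        calc (cd * c) * (z * a) = cd * ((c * z * b) * c) := by
              rw [habc]; simp only [mul_assoc]
          _ = cd * c := by rw [hczb, one_mul]
      have hq2 : (cd * c) * (cd * c) = cd * c := by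
        calc (cd * c) * (cd * c) = cd * (c * cd * c) := by simp only [mul_assoc]
          _ = cd * c := by rw [hcd1]
      calc (z * a - cd * c) * (z * a - cd * c)
          = ((z * a) * (z * a) - (z * a) * (cd * c)) - ((cd * c) * (z * a) - (cd * c) * (cd * c)) := by
            rw [sub_mul, mul_sub, mul_sub]
        _ = 0 := by rw [hp2, hpq, hqp, hq2]; abel
  have h5 := key ad had.1 had.2.2.1 had.2.2.2
  constructor
  · -- first equivalence
    constructor
    · rintro ⟨z, ⟨hz1, hz2, hz3, hz4⟩, hzc⟩
      obtain ⟨hza, hzb⟩ := key z hz1 hz3 hz4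
      have hbbcc : b * bd = cd * c := by rw [← hza, ← hzb, hzc]
      refine ⟨⟨c * a, ?_⟩, ⟨a * b, ?_⟩⟩
      · calc a = b * c := habc
          _ = b * ((bd * b) * c) := by rw [hbdb, one_mul]
          _ = (b * bd) * (b * c) := by simp only [mul_assoc]
          _ = (cd * c) * a := by rw [hbbcc, ← habc]
          _ = cd * (c * a) := by rw [mul_assoc]
      · calc a = b * (c * cd * c) := by rw [hcd1, ← habc]
          _ = (b * c) * (cd * c) := by simp only [mul_assoc]
          _ = a * (b * bd) := by rw [hbbcc, ← habc]
          _ = (a * b) * bd := by rw [mul_assoc]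
    · rintro ⟨⟨x, hx⟩, ⟨y, hy⟩⟩
      have h8 : cd * c * b = b := by
        have hca : cd * c * a = a := by
          rw [hx]
          calc cd * c * (cd * x) = cd * (c * cd) * x := by simp only [mul_assoc]
            _ = cd * x := by rw [hccd, mul_one]
        apply hcancel_c
        calc (cd * c * b) * c = cd * c * (b * c) := by rw [mul_assoc]
          _ = cd * c * a := by rw [← habc]
          _ = a := hca
          _ = b * c := habc
      have h9 : c * (b * bd) = c := by
        have hab : a * (b * bd) = a := by
          rw [hy]
          calc y * bd * (b * bd) = y * ((bd * b) * bd) := by simp only [mul_assoc]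
            _ = y * bd := by rw [hbdb, one_mul]
        have h0 : b * (c * (b * bd) - c) = 0 := by
          rw [mul_sub]
          have : b * (c * (b * bd)) = b * c := by
            calc b * (c * (b * bd)) = (b * c) * (b * bd) := by simp only [mul_assoc]
              _ = a * (b * bd) := by rw [← habc]
              _ = a := hab
              _ = b * c := habc
          rw [this, sub_self]
        have := hb _ h0
        rwa [sub_eq_zero] at this
      have hbbcc : b * bd = cd * c := by
        calc b * bd = (cd * c * b) * bd := by rw [h8]
          _ = cd * (c * (b * bd)) := by simp only [mul_assoc]
          _ = cd * c := by rw [h9]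
      exact ⟨ad, had, by rw [h5.1, h5.2, hbbcc]⟩
  · -- second equivalence
    constructor
    · rintro ⟨z, ⟨hz1, hz2, hz3, hz4⟩, hzc⟩
      obtain ⟨hza, hzb⟩ := key z hz1 hz3 hz4
      have hbbcc : b * bd = cd * c := by rw [← hza, ← hzb, hzc]
      have hcomm : a * ad = ad * a := by rw [h5.1, h5.2, hbbcc]
      have had2 : ad * a * ad = ad := had.2.1
      refine ⟨⟨bd * ad, ?_⟩, ⟨ad * ad * b, ?_⟩⟩
      · calc ad = ad * a * ad := had2.symm
          _ = (a * ad) * ad := by rw [← hcomm]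
          _ = (b * bd) * ad := by rw [h5.1]
          _ = b * (bd * ad) := by rw [mul_assoc]
      · calc ad = ad * a * ad := had2.symm
          _ = ad * (a * ad) := by rw [mul_assoc]
          _ = ad * (ad * a) := by rw [hcomm]
          _ = (ad * ad) * (b * c) := by rw [← mul_assoc, habc]
          _ = (ad * ad * b) * c := by simp only [mul_assoc]
    · rintro ⟨⟨x, hx⟩, ⟨y, hy⟩⟩
      have h10 : b * bd * ad = ad := by
        rw [hx]
        calc b * bd * (b * x) = b * ((bd * b) * x) := by simp only [mul_assoc]
          _ = b * x := by rw [hbdb, one_mul]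
      have h11 : ad * (cd * c) = ad := by
        rw [hy]
        calc y * c * (cd * c) = y * (c * cd * c) := by simp only [mul_assoc]
          _ = y * c := by rw [hcd1]
      have h12 : (b * bd) * (cd * c) = cd * c := by
        calc (b * bd) * (cd * c) = (b * bd) * (ad * a) := by rw [h5.2]
          _ = (b * bd * ad) * a := by simp only [mul_assoc]
          _ = ad * a := by rw [h10]
          _ = cd * c := h5.2
      have h13 : (b * bd) * (cd * c) = b * bd := by
        calc (b * bd) * (cd * c) = (a * ad) * (cd * c) := by rw [h5.1]
          _ = a * (ad * (cd * c)) := by simp only [mul_assoc]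
          _ = a * ad := by rw [h11]
          _ = b * bd := h5.1
      have hbbcc : b * bd = cd * c := h13.symm.trans h12
      exact ⟨ad, had, by rw [h5.1, h5.2, hbbcc]⟩
end
end

section
/- Let A be a complex unital Banach algebra, let e, f, h ∈ A be invertible positive elements, let a ∈ A be such that a^†_{e,h} exists, and suppose a = b c where b x = 0 implies x = 0 and c A = A (so that b^†_{e,f} and c^†_{f,h} exist). Then the following are equivalent: (i) a is weighted EP with weights e and h; (ii) {b u : u ∈ A invertible} = {c^†_{f,h} u : u ∈ A invertible} and {u c : u ∈ A invertible} = {u b^†_{e,f} : u ∈ A invertible}; (iii) {x ∈ A : x b = 0} = {x ∈ A : x c^†_{f,h} = 0} and A c = A b^†_{e,f}. -/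
/-!
Common definitions: hermitian and positive elements of a complex unital Banach
algebra, hermitian elements with respect to the equivalent norm induced by an
invertible positive element (weight), and the weighted Moore–Penrose inverse,
both for Banach algebra elements and for bounded linear operators between
Banach spaces.
-/

noncomputable section

open Filter Bornology Set
open scoped Nat

set_option linter.unusedSectionVars false

namespace WEPaux

variable {A : Type*} [NormedRing A] [NormedAlgebra ℂ A] [CompleteSpace A]

/-- Rosenblum: if `a * x = x * b` and the spectra of `a` and `b` are disjoint, then `x = 0`. -/
theorem rosenblum {a b x : A} (hd : Disjoint (spectrum ℂ a) (spectrum ℂ b))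
    (hx : a * x = x * b) : x = 0 := by
  classical
  set F : ℂ → A := fun z => resolvent a z * x with hF
  set G : ℂ → A := fun z => x * resolvent b z with hG
  -- the key resolvent identity
  have key : ∀ z : ℂ, z ∈ resolventSet ℂ a → z ∈ resolventSet ℂ b → F z = G z := by
    intro z hza hzb
    rw [spectrum.mem_resolventSet_iff] at hza hzb
    have hrel : (algebraMap ℂ A z - a) * x = x * (algebraMap ℂ A z - b) := by
      rw [sub_mul, mul_sub, hx, Algebra.commutes]
    have : (hza.unit⁻¹ : Aˣ) * x = x * (hzb.unit⁻¹ : Aˣ) := by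
      have h1 : (hza.unit : A) * x = x * (hzb.unit : A) := by
        simpa [IsUnit.unit_spec] using hrel
      calc (hza.unit⁻¹ : Aˣ) * x
          = (hza.unit⁻¹ : Aˣ) * (x * hzb.unit) * (hzb.unit⁻¹ : Aˣ) := by
            rw [mul_assoc, mul_assoc]; simp
        _ = (hza.unit⁻¹ : Aˣ) * (hza.unit * x) * (hzb.unit⁻¹ : Aˣ) := by rw [h1]
        _ = x * (hzb.unit⁻¹ : Aˣ) := by rw [← mul_assoc]; simp
    have e1 : Ring.inverse ((algebraMap ℂ A) z - a) = (hza.unit⁻¹ : Aˣ) := by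
      exact Ring.inverse_unit hza.unit
    have e2 : Ring.inverse ((algebraMap ℂ A) z - b) = (hzb.unit⁻¹ : Aˣ) := by
      exact Ring.inverse_unit hzb.unit
    simp only [hF, hG, resolvent, e1, e2]
    exact this
  set H : ℂ → A := fun z => if z ∈ spectrum ℂ a then G z else F z with hH
  have hFdiff : ∀ z ∈ resolventSet ℂ a, DifferentiableAt ℂ F z := fun z hz =>
    ((spectrum.hasDerivAt_resolvent hz).differentiableAt).mul_const x
  have hGdiff : ∀ z ∈ resolventSet ℂ b, DifferentiableAt ℂ G z := fun z hz =>
    ((spectrum.hasDerivAt_resolvent hz).differentiableAt).const_mul x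
  have hHdiff : Differentiable ℂ H := by
    intro z
    by_cases hz : z ∈ spectrum ℂ a
    · have hzb : z ∈ resolventSet ℂ b := by
        by_contra hc
        exact hd.ne_of_mem hz (by simpa [spectrum] using hc) rfl
      have hev : H =ᶠ[nhds z] G := by
        filter_upwards [(spectrum.isOpen_resolventSet (𝕜 := ℂ) b).mem_nhds hzb] with w hw
        by_cases hwa : w ∈ spectrum ℂ a
        · simp [hH, hwa]
        · have hwa' : w ∈ resolventSet ℂ a := by simpa [spectrum] using hwa
          simp [hH, hwa, key w hwa' hw]
      exact (hGdiff z hzb).congr_of_eventuallyEq hev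
    · have hza : z ∈ resolventSet ℂ a := by simpa [spectrum] using hz
      have hev : H =ᶠ[nhds z] F := by
        filter_upwards [(spectrum.isOpen_resolventSet (𝕜 := ℂ) a).mem_nhds hza] with w hw
        have hwa : w ∉ spectrum ℂ a := by simpa [spectrum] using hw
        simp [hH, hwa]
      exact (hFdiff z hza).congr_of_eventuallyEq hev
  -- H tends to zero at infinity
  have hFto : Tendsto F (cobounded ℂ) (nhds 0) := by
    simpa using (spectrum.resolvent_tendsto_cobounded (𝕜 := ℂ) a).mul_const x
  have hHF : H =ᶠ[cobounded ℂ] F := by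
    have hbd : (spectrum ℂ a)ᶜ ∈ cobounded ℂ :=
      Bornology.isCobounded_def.mp ((spectrum.isBounded a).compl)
    filter_upwards [hbd] with w hw
    simp [hH, (by simpa using hw : w ∉ spectrum ℂ a)]
  have hHto : Tendsto H (cobounded ℂ) (nhds 0) := hFto.congr' hHF.symm
  -- Liouville
  have hcont : Continuous H := hHdiff.continuous
  have hbdd : IsBounded (Set.range H) := by
    have h1 : {w : ℂ | ‖H w‖ ≤ 1} ∈ cobounded ℂ := by
      filter_upwards [hHto (Metric.closedBall_mem_nhds (0 : A) one_pos)] with w hw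
      simpa [Metric.mem_closedBall, dist_zero_right] using hw
    have h2 : IsBounded {w : ℂ | ‖H w‖ ≤ 1}ᶜ := Bornology.IsCobounded.compl
      (Bornology.isCobounded_def.mpr h1)
    obtain ⟨R, hR⟩ := (Metric.isBounded_iff_subset_closedBall 0).mp h2
    obtain ⟨C, hC⟩ := (isCompact_closedBall (0 : ℂ) R).exists_bound_of_continuousOn
      hcont.continuousOn
    rw [isBounded_iff_forall_norm_le]
    refine ⟨max C 1, ?_⟩
    rintro - ⟨w, rfl⟩
    by_cases hw : w ∈ Metric.closedBall (0 : ℂ) R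
    · exact le_max_of_le_left (hC w hw)
    · refine le_max_of_le_right ?_
      by_contra hc
      exact hw (hR hc)
  -- Liouville: H is constant, and its value is 0
  have hconst : ∀ z w : ℂ, H z = H w := fun z w =>
    hHdiff.apply_eq_apply_of_bounded hbdd z w
  have hzero : ∀ z : ℂ, H z = 0 := by
    intro z
    have : Tendsto H (cobounded ℂ) (nhds (H z)) := by
      have : H =ᶠ[cobounded ℂ] fun _ => H z := Eventually.of_forall fun w => hconst w z
      exact (tendsto_const_nhds).congr' this.symm
    exact tendsto_nhds_unique this hHto
  -- conclude
  set lam : ℂ := ((‖a‖ * ‖(1 : A)‖ + 1 : ℝ) : ℂ) with hlam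
  have hmem : lam ∈ resolventSet ℂ a := by
    apply spectrum.mem_resolventSet_of_norm_lt_mul
    rw [hlam, Complex.norm_real, Real.norm_eq_abs]
    have h0 : (0:ℝ) ≤ ‖a‖ * ‖(1:A)‖ := by positivity
    rw [abs_of_nonneg (by linarith)]
    linarith
  have hns : lam ∉ spectrum ℂ a := fun hc => hc hmem
  have hFz : F lam = 0 := by
    have h0 := hzero lam
    simp only [hH] at h0
    rwa [if_neg hns] at h0
  rw [spectrum.mem_resolventSet_iff] at hmem
  have hres : resolvent a lam = ((hmem.unit⁻¹ : Aˣ) : A) := Ring.inverse_unit hmem.unit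
  have h2 : (hmem.unit : A) * F lam = x := by
    simp only [hF, hres]
    rw [← mul_assoc]
    simp
  rw [hFz, mul_zero] at h2
  exact h2.symm


/-- disjointness of spectra of a positive unit and the negative of a positive unit -/
theorem disjoint_pos_neg (s t : Aˣ) (hs : IsPositiveEl (s : A)) (ht : IsPositiveEl (t : A)) :
    Disjoint (spectrum ℂ (s : A)) (spectrum ℂ (-(t : A))) := by
  rw [Set.disjoint_left]
  intro z hz1 hz2
  obtain ⟨r, hr, hrz⟩ := hs.2 hz1
  have hz2' : -z ∈ spectrum ℂ (t : A) := by
    rw [← spectrum.neg_eq] at hz2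
    simpa using hz2
  obtain ⟨r', hr', hrz'⟩ := ht.2 hz2'
  have h0s : z ≠ 0 := by
    intro hc
    exact spectrum.zero_notMem ℂ s.isUnit (hc ▸ hz1)
  have hsum0 : (r : ℂ) + (r' : ℂ) = 0 := by rw [hrz, hrz']; ring
  have hsum0' : r + r' = 0 := by exact_mod_cast hsum0
  have hr0 : r = 0 := le_antisymm (by simp only [mem_Ici] at hr hr'; linarith) hr
  exact h0s (by rw [← hrz, hr0, Complex.ofReal_zero])

/-- Uniqueness of positive square roots (for units). -/
theorem pos_sqrt_unique (s t : Aˣ) (hs : IsPositiveEl (s : A)) (ht : IsPositiveEl (t : A))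
    (h : (s : A) ^ 2 = (t : A) ^ 2) : (s : A) = (t : A) := by
  have h' : (s : A) * (s : A) = (t : A) * (t : A) := by
    simpa [pow_two] using h
  have key : (s : A) * ((s : A) - (t : A)) = ((s : A) - (t : A)) * (-(t : A)) := by
    rw [mul_sub, sub_mul, h']
    noncomm_ring
  have := rosenblum (disjoint_pos_neg s t hs ht) key
  exact sub_eq_zero.mp this

/-- exponential of a scalar multiple of an idempotent -/
theorem exp_idem (q : A) (hq : q * q = q) (c : ℂ) :
    NormedSpace.exp (c • q) = 1 + (Complex.exp c - 1) • q := by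
  have hqpow : ∀ n : ℕ, q ^ (n + 1) = q := by
    intro n
    induction n with
    | zero => simp
    | succ n ih => rw [pow_succ, ih, hq]
  have hsum : Summable fun n : ℕ => ((n !⁻¹ : ℂ)) • (c • q) ^ n :=
    NormedSpace.expSeries_summable' (𝕂 := ℂ) (c • q)
  have h0 : Summable fun n : ℕ => ((n !⁻¹ : ℂ) * c ^ n) := by
    have := NormedSpace.expSeries_summable' (𝕂 := ℂ) (c : ℂ)
    simpa [smul_eq_mul] using this
  have hscal : Summable fun n : ℕ => (((n + 1)! : ℂ))⁻¹ * c ^ (n + 1) := by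
    have := (summable_nat_add_iff (f := fun n : ℕ => ((n !⁻¹ : ℂ) * c ^ n)) 1).mpr h0
    simpa using this
  have hshift : (∑' n : ℕ, ((((n + 1)! : ℂ))⁻¹ * c ^ (n + 1))) = Complex.exp c - 1 := by
    have hexp : Complex.exp c = ∑' n : ℕ, ((n !⁻¹ : ℂ) * c ^ n) := by
      rw [Complex.exp_eq_exp_ℂ, NormedSpace.exp_eq_tsum ℂ]
      simp [smul_eq_mul]
    rw [Summable.tsum_eq_zero_add h0] at hexp
    simp only [Nat.factorial_zero, Nat.cast_one, inv_one, pow_zero, mul_one] at hexp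
    rw [hexp]
    ring
  simp only [NormedSpace.exp_eq_tsum ℂ]
  rw [Summable.tsum_eq_zero_add hsum]
  simp only [smul_pow, hqpow, smul_smul, pow_zero, Nat.factorial_zero, Nat.cast_one, inv_one,
    one_smul, mul_one]
  rw [Summable.tsum_smul_const hscal, hshift]

/-- Two idempotents, hermitian with respect to the same weight, which generate the same
left and right ideals, are equal. -/
theorem idem_wt_eq {u x y : A} (hx : x * x = x) (hy : y * y = y)
    (Hx : IsHermitianWt u x) (Hy : IsHermitianWt u y)
    (hrel : (x * y = y ∧ y * x = x) ∨ (x * y = x ∧ y * x = y)) : x = y := by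
  obtain ⟨s, hs, hs2, hns⟩ := Hx
  obtain ⟨t, ht, ht2, hnt⟩ := Hy
  have hstu : s = t := Units.ext (pos_sqrt_unique s t hs ht (by rw [hs2, ht2]))
  subst hstu
  have hexp : ∀ w : A, w * w = w →
      NormedSpace.exp ((Complex.I * ((Real.pi : ℝ) : ℂ)) • w) = 1 + (-2 : ℂ) • w := by
    intro w hw
    rw [exp_idem w hw]
    congr 1
    rw [mul_comm Complex.I, Complex.exp_pi_mul_I]
    norm_num
  have hnx : ‖(s : A) * (1 + (-2 : ℂ) • x) * ((s⁻¹ : Aˣ) : A)‖ = 1 := by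
    rw [← hexp x hx]; exact hns Real.pi
  have hny : ‖(s : A) * (1 + (-2 : ℂ) • y) * ((s⁻¹ : Aˣ) : A)‖ = 1 := by
    rw [← hexp y hy]; exact hnt Real.pi
  set z : A := x - y with hzdef
  have hzz : z * z = 0 := by
    rcases hrel with ⟨h1, h2⟩ | ⟨h1, h2⟩ <;>
      · rw [hzdef, sub_mul, mul_sub, mul_sub, hx, hy, h1, h2]
        abel
  have hprod : ((s : A) * (1 + (-2 : ℂ) • x) * ((s⁻¹ : Aˣ) : A)) *
        ((s : A) * (1 + (-2 : ℂ) • y) * ((s⁻¹ : Aˣ) : A))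
        = (s : A) * (1 + (-2 : ℂ) • z) * ((s⁻¹ : Aˣ) : A) ∨
      ((s : A) * (1 + (-2 : ℂ) • y) * ((s⁻¹ : Aˣ) : A)) *
        ((s : A) * (1 + (-2 : ℂ) • x) * ((s⁻¹ : Aˣ) : A))
        = (s : A) * (1 + (-2 : ℂ) • z) * ((s⁻¹ : Aˣ) : A) := by
    have hmid : ∀ E F : A, ((s : A) * E * ((s⁻¹ : Aˣ) : A)) * ((s : A) * F * ((s⁻¹ : Aˣ) : A))
        = (s : A) * (E * F) * ((s⁻¹ : Aˣ) : A) := by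
      intro E F
      calc ((s : A) * E * ((s⁻¹ : Aˣ) : A)) * ((s : A) * F * ((s⁻¹ : Aˣ) : A))
          = (s : A) * E * (((s⁻¹ : Aˣ) : A) * (s : A)) * F * ((s⁻¹ : Aˣ) : A) := by
            noncomm_ring
        _ = (s : A) * (E * F) * ((s⁻¹ : Aˣ) : A) := by
            rw [Units.inv_mul]; noncomm_ring
    rcases hrel with ⟨h1, h2⟩ | ⟨h1, h2⟩
    · left
      rw [hmid]
      congr 2
      simp only [hzdef, mul_add, add_mul, mul_smul_comm, smul_mul_assoc, smul_smul, mul_one,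
        one_mul, h1]
      module
    · right
      rw [hmid]
      congr 2
      simp only [hzdef, mul_add, add_mul, mul_smul_comm, smul_mul_assoc, smul_smul, mul_one,
        one_mul, h2]
      module
  set w : A := (s : A) * (1 + (-2 : ℂ) • z) * ((s⁻¹ : Aˣ) : A) with hwdef
  have hw1 : ‖w‖ ≤ 1 := by
    rcases hprod with hp | hp
    · rw [← hp]
      calc ‖_ * _‖ ≤ _ * _ := norm_mul_le _ _
        _ ≤ 1 := by rw [hnx, hny]; norm_num
    · rw [← hp]
      calc ‖_ * _‖ ≤ _ * _ := norm_mul_le _ _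
        _ ≤ 1 := by rw [hny, hnx]; norm_num
  set ζ : A := (s : A) * z * ((s⁻¹ : Aˣ) : A) with hζdef
  have hζζ : ζ * ζ = 0 := by
    rw [hζdef]
    calc ((s : A) * z * ((s⁻¹ : Aˣ) : A)) * ((s : A) * z * ((s⁻¹ : Aˣ) : A))
        = (s : A) * z * (((s⁻¹ : Aˣ) : A) * (s : A)) * z * ((s⁻¹ : Aˣ) : A) := by noncomm_ring
      _ = (s : A) * (z * z) * ((s⁻¹ : Aˣ) : A) := by rw [Units.inv_mul]; noncomm_ring
      _ = 0 := by rw [hzz]; simp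
  have hwz : w = 1 + (-2 : ℂ) • ζ := by
    rw [hwdef, hζdef]
    simp only [mul_add, add_mul, mul_one, mul_smul_comm, smul_mul_assoc]
    rw [Units.mul_inv]
  have hwm : ∀ m : ℕ, w ^ m = 1 + ((-2 : ℂ) * m) • ζ := by
    intro m
    induction m with
    | zero => simp
    | succ m ih =>
      rw [pow_succ, ih, hwz]
      simp only [mul_add, add_mul, mul_one, one_mul, mul_smul_comm, smul_mul_assoc, smul_smul,
        hζζ, smul_zero]
      push_cast
      module
  have hbound : ∀ m : ℕ, (2 * ((m : ℝ) + 1)) * ‖ζ‖ ≤ 1 + ‖(1 : A)‖ := by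
    intro m
    have h1 : ‖w ^ (m + 1)‖ ≤ 1 := by
      calc ‖w ^ (m + 1)‖ ≤ ‖w‖ ^ (m + 1) := norm_pow_le' w (Nat.succ_pos m)
        _ ≤ 1 := pow_le_one₀ (norm_nonneg w) hw1
    have h2 : ((-2 : ℂ) * ((m : ℕ) + 1 : ℕ)) • ζ = w ^ (m + 1) - 1 := by
      rw [hwm (m + 1)]
      push_cast
      abel
    have h3 : ‖((-2 : ℂ) * ((m : ℕ) + 1 : ℕ)) • ζ‖ ≤ 1 + ‖(1 : A)‖ := by
      rw [h2]
      calc ‖w ^ (m + 1) - 1‖ ≤ ‖w ^ (m + 1)‖ + ‖(1 : A)‖ := norm_sub_le _ _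
        _ ≤ 1 + ‖(1 : A)‖ := by linarith
    rw [norm_smul] at h3
    have h4 : ‖(-2 : ℂ) * ((m : ℕ) + 1 : ℕ)‖ = 2 * ((m : ℝ) + 1) := by
      rw [norm_mul]
      push_cast
      simp [Complex.norm_natCast]
      norm_cast
    rw [h4] at h3
    exact h3
  have hζ0 : ζ = 0 := by
    by_contra hc
    have hζpos : 0 < ‖ζ‖ := norm_pos_iff.mpr hc
    obtain ⟨m, hm⟩ := exists_nat_gt ((1 + ‖(1 : A)‖) / (2 * ‖ζ‖))
    rw [div_lt_iff₀ (by positivity)] at hm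
    nlinarith [hbound m]
  have hz0 : z = 0 := by
    have : ((s⁻¹ : Aˣ) : A) * ζ * (s : A) = z := by
      rw [hζdef]
      calc ((s⁻¹ : Aˣ) : A) * ((s : A) * z * ((s⁻¹ : Aˣ) : A)) * (s : A)
          = (((s⁻¹ : Aˣ) : A) * (s : A)) * z * (((s⁻¹ : Aˣ) : A) * (s : A)) := by noncomm_ring
        _ = z := by rw [Units.inv_mul]; simp
    rw [← this, hζ0]
    simp
  rw [hzdef] at hz0
  exact sub_eq_zero.mp hz0


end WEPaux

/-- For `a = b c` as above, `a` is weighted EP with weights `e` and `h` iff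
`b A⁻¹ = c^†_{f,h} A⁻¹` and `A⁻¹ c = A⁻¹ b^†_{e,f}`, iff
`{x : x b = 0} = {x : x c^†_{f,h} = 0}` and `A c = A b^†_{e,f}`. -/
theorem factorization_bc_weighted_EP_iff_unit_cosets
    {A : Type*} [NormedRing A] [NormedAlgebra ℂ A] [CompleteSpace A]
    (e f h a b c : A)
    (he : IsPositiveEl e ∧ IsUnit e) (hf : IsPositiveEl f ∧ IsUnit f)
    (hh : IsPositiveEl h ∧ IsUnit h)
    (ad : A) (had : IsWMPI e h a ad)
    (habc : a = b * c)
    (hb : ∀ x : A, b * x = 0 → x = 0) (hc : ∀ y : A, ∃ x : A, c * x = y)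
    (bd : A) (hbd : IsWMPI e f b bd) (cd : A) (hcd : IsWMPI f h c cd) :
    (IsWEP e h a ↔
      ({x : A | ∃ u : Aˣ, x = b * (u : A)} = {x : A | ∃ u : Aˣ, x = cd * (u : A)} ∧
        {x : A | ∃ u : Aˣ, x = (u : A) * c} = {x : A | ∃ u : Aˣ, x = (u : A) * bd})) ∧
    (IsWEP e h a ↔
      ({x : A | x * b = 0} = {x : A | x * cd = 0} ∧
        {x : A | ∃ y : A, x = y * c} = {x : A | ∃ y : A, x = y * bd})) := by
  classical
  -- basic consequences of injectivity/surjectivity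
  have hbdb : bd * b = 1 := by
    have h1 : b * (bd * b - 1) = 0 := by
      rw [mul_sub, ← mul_assoc, hbd.1, mul_one, sub_self]
    exact sub_eq_zero.mp (hb _ h1)
  have hccd : c * cd = 1 := by
    obtain ⟨x, hx⟩ := hc 1
    calc c * cd = c * cd * (c * x) := by rw [hx, mul_one]
      _ = (c * cd * c) * x := by noncomm_ring
      _ = c * x := by rw [hcd.1]
      _ = 1 := hx
  set p : A := b * bd with hp
  set q : A := cd * c with hq
  set d : A := cd * bd with hd
  have hpad : a * d = p := by
    rw [habc, hd, hp]
    calc b * c * (cd * bd) = b * (c * cd) * bd := by noncomm_ring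
      _ = b * bd := by rw [hccd, mul_one]
  have hqda : d * a = q := by
    rw [habc, hd, hq]
    calc cd * bd * (b * c) = cd * (bd * b) * c := by noncomm_ring
      _ = cd * c := by rw [hbdb, mul_one]
  have hada : a * d * a = a := by
    rw [hpad, habc, hp]
    calc b * bd * (b * c) = b * (bd * b) * c := by noncomm_ring
      _ = b * c := by rw [hbdb, mul_one]
  have hdad : d * a * d = d := by
    rw [hqda, hd, hq]
    calc cd * c * (cd * bd) = cd * (c * cd) * bd := by noncomm_ring
      _ = cd * bd := by rw [hccd, mul_one]
  have hpp : p * p = p := by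
    rw [hp]
    calc b * bd * (b * bd) = b * (bd * b) * bd := by noncomm_ring
      _ = b * bd := by rw [hbdb, mul_one]
  have hqq : q * q = q := by
    rw [hq]
    calc cd * c * (cd * c) = cd * (c * cd) * c := by noncomm_ring
      _ = cd * c := by rw [hccd, mul_one]
  have hwmpid : IsWMPI e h a d := by
    refine ⟨hada, hdad, ?_, ?_⟩
    · rw [hpad, hp]; exact hbd.2.2.1
    · rw [hqda, hq]; exact hcd.2.2.2
  -- central equivalence : weighted EP iff p = q
  have key : IsWEP e h a ↔ p = q := by
    constructor
    · rintro ⟨g, ⟨hg1, hg2, hg3, hg4⟩, hcomm⟩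
      have hkk : (a * g) * (a * g) = a * g := by
        calc (a * g) * (a * g) = a * g * a * g := by noncomm_ring
          _ = a * g := by rw [hg1]
      have hkp : (a * g) * p = p := by
        rw [← hpad]
        calc a * g * (a * d) = a * g * a * d := by noncomm_ring
          _ = a * d := by rw [hg1]
      have hpk : p * (a * g) = a * g := by
        rw [← hpad]
        calc a * d * (a * g) = a * d * a * g := by noncomm_ring
          _ = a * g := by rw [hada]
      have hwtp : IsHermitianWt e p := by rw [← hpad]; exact hwmpid.2.2.1
      have hkeqp : a * g = p := WEPaux.idem_wt_eq hkk hpp hg3 hwtp (Or.inl ⟨hkp, hpk⟩)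
      have hkq : (a * g) * q = a * g := by
        rw [hcomm, ← hqda]
        calc g * a * (d * a) = g * (a * d * a) := by noncomm_ring
          _ = g * a := by rw [hada]
      have hqk : q * (a * g) = q := by
        rw [hcomm, ← hqda]
        calc d * a * (g * a) = d * (a * g * a) := by noncomm_ring
          _ = d * a := by rw [hg1]
      have hwtk' : IsHermitianWt h (a * g) := by rw [hcomm]; exact hg4
      have hwtq : IsHermitianWt h q := by rw [← hqda]; exact hwmpid.2.2.2
      have hkeqq : a * g = q := WEPaux.idem_wt_eq hkk hqq hwtk' hwtq (Or.inr ⟨hkq, hqk⟩)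
      rw [← hkeqp, ← hkeqq]
    · intro hpq
      exact ⟨d, hwmpid, by rw [hpad, hqda, hpq]⟩
  -- useful identities when p = q
  have hid1 : p = q → cd * (c * b) = b := by
    intro hpq
    calc cd * (c * b) = (cd * c) * b := by noncomm_ring
      _ = b * bd * b := by rw [← hq, ← hp, hpq]
      _ = b := by rw [mul_assoc, hbdb, mul_one]
  have hid2 : p = q → b * (bd * cd) = cd := by
    intro hpq
    calc b * (bd * cd) = (b * bd) * cd := by noncomm_ring
      _ = cd * c * cd := by rw [← hp, ← hq, hpq]
      _ = cd := by rw [mul_assoc, hccd, mul_one]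
  have hid3 : p = q → (c * b) * bd = c := by
    intro hpq
    calc (c * b) * bd = c * (b * bd) := by noncomm_ring
      _ = c * (cd * c) := by rw [← hp, ← hq, hpq]
      _ = c := by rw [← mul_assoc, hccd, one_mul]
  have hid4 : p = q → (bd * cd) * c = bd := by
    intro hpq
    calc (bd * cd) * c = bd * (cd * c) := by noncomm_ring
      _ = bd * (b * bd) := by rw [← hq, ← hp, hpq]
      _ = bd := by rw [← mul_assoc, hbdb, one_mul]
  have keyII : p = q ↔
      ({x : A | ∃ u : Aˣ, x = b * (u : A)} = {x : A | ∃ u : Aˣ, x = cd * (u : A)} ∧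
        {x : A | ∃ u : Aˣ, x = (u : A) * c} = {x : A | ∃ u : Aˣ, x = (u : A) * bd}) := by
    constructor
    · intro hpq
      have hu1 : (c * b) * (bd * cd) = 1 := by
        calc (c * b) * (bd * cd) = c * (b * (bd * cd)) := by noncomm_ring
          _ = c * cd := by rw [hid2 hpq]
          _ = 1 := hccd
      have hu2 : (bd * cd) * (c * b) = 1 := by
        calc (bd * cd) * (c * b) = ((bd * cd) * c) * b := by noncomm_ring
          _ = bd * b := by rw [hid4 hpq]
          _ = 1 := hbdb
      set u0 : Aˣ := ⟨c * b, bd * cd, hu1, hu2⟩ with hu0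
      have hu0v : ((u0 : Aˣ) : A) = c * b := rfl
      have hu0i : ((u0⁻¹ : Aˣ) : A) = bd * cd := rfl
      constructor
      · ext x
        simp only [Set.mem_setOf_eq]
        constructor
        · rintro ⟨u, rfl⟩
          exact ⟨u0 * u, by rw [Units.val_mul, hu0v, ← mul_assoc, hid1 hpq]⟩
        · rintro ⟨u, rfl⟩
          exact ⟨u0⁻¹ * u, by rw [Units.val_mul, hu0i, ← mul_assoc, hid2 hpq]⟩
      · ext x
        simp only [Set.mem_setOf_eq]
        constructor
        · rintro ⟨u, rfl⟩
          exact ⟨u * u0, by rw [Units.val_mul, hu0v, mul_assoc, hid3 hpq]⟩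
        · rintro ⟨u, rfl⟩
          exact ⟨u * u0⁻¹, by rw [Units.val_mul, hu0i, mul_assoc, hid4 hpq]⟩
    · rintro ⟨h1, h2⟩
      have hbmem : b ∈ {x : A | ∃ u : Aˣ, x = cd * (u : A)} := by
        rw [← h1]; exact ⟨1, by simp⟩
      have hcmem : c ∈ {x : A | ∃ u : Aˣ, x = (u : A) * bd} := by
        rw [← h2]; exact ⟨1, by simp⟩
      obtain ⟨u, hu⟩ := hbmem
      obtain ⟨v, hv⟩ := hcmem
      have hcbu : c * b = (u : A) := by
        rw [hu]
        calc c * (cd * (u : A)) = (c * cd) * (u : A) := by noncomm_ring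
          _ = (u : A) := by rw [hccd, one_mul]
      have hcbv : c * b = (v : A) := by
        rw [hv]
        calc ((v : A) * bd) * b = (v : A) * (bd * b) := by noncomm_ring
          _ = (v : A) := by rw [hbdb, mul_one]
      have huv : u = v := Units.ext (hcbu ▸ hcbv)
      have hbdv : bd = ((v⁻¹ : Aˣ) : A) * c := by
        rw [hv, ← mul_assoc, Units.inv_mul, one_mul]
      have hcdu : cd = b * ((u⁻¹ : Aˣ) : A) := by
        rw [hu, mul_assoc, Units.mul_inv, mul_one]
      rw [hp, hq, hbdv, hcdu, huv]
      noncomm_ring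
  have keyIII : p = q ↔
      ({x : A | x * b = 0} = {x : A | x * cd = 0} ∧
        {x : A | ∃ y : A, x = y * c} = {x : A | ∃ y : A, x = y * bd}) := by
    constructor
    · intro hpq
      constructor
      · ext x
        simp only [Set.mem_setOf_eq]
        constructor
        · intro hxb
          calc x * cd = x * (b * (bd * cd)) := by rw [hid2 hpq]
            _ = (x * b) * (bd * cd) := by noncomm_ring
            _ = 0 := by rw [hxb, zero_mul]
        · intro hxcd
          calc x * b = x * (cd * (c * b)) := by rw [hid1 hpq]
            _ = (x * cd) * (c * b) := by noncomm_ring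
            _ = 0 := by rw [hxcd, zero_mul]
      · ext x
        simp only [Set.mem_setOf_eq]
        constructor
        · rintro ⟨y, rfl⟩
          exact ⟨y * (c * b), by rw [mul_assoc, hid3 hpq]⟩
        · rintro ⟨y, rfl⟩
          exact ⟨y * (bd * cd), by rw [mul_assoc, hid4 hpq]⟩
    · rintro ⟨h1, h2⟩
      have ha1 : (1 - p) * b = 0 := by
        rw [hp, sub_mul, one_mul, mul_assoc, hbdb, mul_one, sub_self]
      have ha2 : (1 - p) * cd = 0 := by
        have hmem : (1 - p) ∈ {x : A | x * b = 0} := ha1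
        rw [h1] at hmem
        exact hmem
      have hqpq : q = p * q := by
        have hcdp : cd = p * cd := by
          have h3 : cd - p * cd = 0 := by
            have := ha2
            rwa [sub_mul, one_mul] at this
          have := sub_eq_zero.mp h3
          exact this
        rw [hq]
        calc cd * c = (p * cd) * c := by rw [← hcdp]
          _ = p * (cd * c) := by noncomm_ring
          _ = p * q := by rw [← hq]
      have hbdmem : bd ∈ {x : A | ∃ y : A, x = y * c} := by
        rw [h2]; exact ⟨1, by rw [one_mul]⟩
      obtain ⟨y, hy⟩ := hbdmem
      have hybd : bd * cd = y := by
        rw [hy]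
        calc (y * c) * cd = y * (c * cd) := by noncomm_ring
          _ = y := by rw [hccd, mul_one]
      have hbdq : bd = bd * q := by
        rw [hq]
        calc bd = y * c := hy
          _ = (bd * cd) * c := by rw [hybd]
          _ = bd * (cd * c) := by noncomm_ring
      have hppq : p = p * q := by
        rw [hp]
        calc b * bd = b * (bd * q) := by rw [← hbdq]
          _ = (b * bd) * q := by noncomm_ring
          _ = p * q := by rw [← hp]
      exact hppq.trans hqpq.symm
  exact ⟨key.trans keyII, key.trans keyIII⟩
end
end

section
/- Let A be a complex unital Banach algebra, let e, f ∈ A be invertible positive elements, and let a ∈ A be such that a^†_{e,f} exists. Then the following are equivalent: (i) a is weighted EP with weights e and f; (ii) there exist s, t ∈ A such that s x = 0 implies x = 0, t A = A, and a^†_{e,f} = s a = a t; (iii) there exist s₁, t₁ ∈ A such that a^†_{e,f} = s₁ a = a t₁. -/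
/-!
Common definitions: hermitian and positive elements of a complex unital Banach
algebra, hermitian elements with respect to the equivalent norm induced by an
invertible positive element (weight), and the weighted Moore–Penrose inverse,
both for Banach algebra elements and for bounded linear operators between
Banach spaces.
-/

noncomputable section

/-! ### Auxiliary lemmas -/

section Aux

variable {A : Type*} [NormedRing A] [NormedAlgebra ℂ A] [CompleteSpace A]

/-- Exponential of a scalar multiple of an idempotent. -/
lemma exp_idem_aux (p : A) (hp : p * p = p) (z : ℂ) :
    NormedSpace.exp (z • p) = 1 + (Complex.exp z - 1) • p := by
  have hpow : ∀ n : ℕ, (z • p) ^ (n + 1) = (z ^ (n + 1)) • p := by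
    intro n
    induction n with
    | zero => simp
    | succ n ih =>
      rw [pow_succ, ih, smul_mul_assoc, mul_smul_comm, hp, smul_smul, ← pow_succ]
  have hsum : Summable (fun n : ℕ => ((n.factorial : ℂ))⁻¹ • (z • p) ^ n) :=
    NormedSpace.expSeries_summable' (𝕂 := ℂ) (z • p)
  have hsumC : Summable (fun n : ℕ => ((n.factorial : ℂ))⁻¹ * z ^ n) := by
    simpa [smul_eq_mul] using NormedSpace.expSeries_summable' (𝕂 := ℂ) z
  have h1 : NormedSpace.exp (z • p) = ∑' n : ℕ, ((n.factorial : ℂ))⁻¹ • (z • p) ^ n := by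
    rw [NormedSpace.exp_eq_tsum ℂ]
  rw [h1, Summable.tsum_eq_zero_add hsum]
  have h2 : ∀ n : ℕ, (((n+1).factorial : ℂ))⁻¹ • (z • p) ^ (n + 1)
      = ((((n+1).factorial : ℂ))⁻¹ * z ^ (n + 1)) • p := by
    intro n; rw [hpow, smul_smul]
  simp only [h2, pow_zero]
  rw [Summable.tsum_smul_const]
  · have hez : Complex.exp z = ∑' n : ℕ, ((n.factorial : ℂ))⁻¹ * z ^ n := by
      rw [Complex.exp_eq_exp_ℂ, NormedSpace.exp_eq_tsum ℂ]
      simp [smul_eq_mul]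
    have h3 : (∑' n : ℕ, ((((n+1).factorial : ℂ))⁻¹ * z ^ (n + 1))) = Complex.exp z - 1 := by
      rw [hez, Summable.tsum_eq_zero_add hsumC]; simp
    rw [h3]; simp
  · exact (summable_nat_add_iff (f := fun n : ℕ => ((n.factorial : ℂ))⁻¹ * z ^ n) 1).mpr hsumC

lemma exp_pi_idem_aux (p : A) (hp : p * p = p) :
    NormedSpace.exp ((Complex.I * ((Real.pi : ℝ) : ℂ)) • p) = 1 - (2:ℂ) • p := by
  have h1 : Complex.exp (Complex.I * ((Real.pi : ℝ) : ℂ)) = -1 := by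
    rw [mul_comm]; exact Complex.exp_pi_mul_I
  rw [exp_idem_aux p hp, h1]
  have h2 : ((-1 : ℂ) - 1) = -(2:ℂ) := by norm_num
  rw [h2, neg_smul, ← sub_eq_add_neg]

/-- Two idempotents hermitian with respect to the same weight witness, whose
"reflections" multiply to a reflection of a square-zero element, force that
element to vanish. -/
lemma herm_idem_cancel (S : Aˣ) (p r h : A) (hp : p * p = p) (hr : r * r = r)
    (hHp : ∀ t : ℝ, ‖(S:A) * NormedSpace.exp ((Complex.I * (t:ℂ)) • p) * ((S⁻¹:Aˣ):A)‖ = 1)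
    (hHr : ∀ t : ℝ, ‖(S:A) * NormedSpace.exp ((Complex.I * (t:ℂ)) • r) * ((S⁻¹:Aˣ):A)‖ = 1)
    (hprod : (1 - (2:ℂ) • p) * (1 - (2:ℂ) • r) = 1 - (2:ℂ) • h)
    (hnil : h * h = 0) : h = 0 := by
  have hU : ‖(S:A) * (1 - (2:ℂ) • p) * ((S⁻¹:Aˣ):A)‖ = 1 := by
    have := hHp Real.pi; rwa [exp_pi_idem_aux p hp] at this
  have hV : ‖(S:A) * (1 - (2:ℂ) • r) * ((S⁻¹:Aˣ):A)‖ = 1 := by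
    have := hHr Real.pi; rwa [exp_pi_idem_aux r hr] at this
  have hpow : ∀ n : ℕ, (1 - (2:ℂ) • h) ^ n = 1 - (2 * (n:ℂ)) • h := by
    intro n
    induction n with
    | zero => simp
    | succ n ih =>
      rw [pow_succ, ih]
      have hz : ((2 * (n:ℂ)) • h) * ((2:ℂ) • h) = 0 := by
        rw [smul_mul_smul_comm, hnil, smul_zero]
      rw [sub_mul, one_mul, mul_sub, mul_one, hz, sub_zero]
      push_cast
      module
  have hconj : ∀ n : ℕ,
      ((S:A) * (1 - (2:ℂ) • p) * ((S⁻¹:Aˣ):A) * ((S:A) * (1 - (2:ℂ) • r) * ((S⁻¹:Aˣ):A))) ^ n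
        = (S:A) * (1 - (2 * (n:ℂ)) • h) * ((S⁻¹:Aˣ):A) := by
    intro n
    have hmid : (S:A) * (1 - (2:ℂ) • p) * ((S⁻¹:Aˣ):A) * ((S:A) * (1 - (2:ℂ) • r) * ((S⁻¹:Aˣ):A))
        = (S:A) * (1 - (2:ℂ) • h) * ((S⁻¹:Aˣ):A) := by
      rw [← hprod]
      calc (S:A) * (1 - (2:ℂ) • p) * ((S⁻¹:Aˣ):A) * ((S:A) * (1 - (2:ℂ) • r) * ((S⁻¹:Aˣ):A))
          = (S:A) * (1 - (2:ℂ) • p) * (((S⁻¹:Aˣ):A) * (S:A)) * ((1 - (2:ℂ) • r) * ((S⁻¹:Aˣ):A)) := by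
            noncomm_ring
        _ = (S:A) * ((1 - (2:ℂ) • p) * (1 - (2:ℂ) • r)) * ((S⁻¹:Aˣ):A) := by
            rw [Units.inv_mul]; noncomm_ring
    rw [hmid, ← hpow]
    induction n with
    | zero => simp
    | succ n ih =>
      rw [pow_succ, ih, pow_succ]
      calc (S:A) * (1 - (2:ℂ) • h) ^ n * ((S⁻¹:Aˣ):A) * ((S:A) * (1 - (2:ℂ) • h) * ((S⁻¹:Aˣ):A))
          = (S:A) * (1 - (2:ℂ) • h) ^ n * (((S⁻¹:Aˣ):A) * (S:A)) * ((1 - (2:ℂ) • h) * ((S⁻¹:Aˣ):A)) := by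
            noncomm_ring
        _ = (S:A) * ((1 - (2:ℂ) • h) ^ n * (1 - (2:ℂ) • h)) * ((S⁻¹:Aˣ):A) := by
            rw [Units.inv_mul]; noncomm_ring
  have hbound : ∀ n : ℕ, (2 * (n:ℝ)) * ‖h‖ ≤ ‖(1:A)‖ + ‖((S⁻¹:Aˣ):A)‖ * ‖(S:A)‖ := by
    intro n
    set x : A := (S:A) * (1 - (2:ℂ) • p) * ((S⁻¹:Aˣ):A) * ((S:A) * (1 - (2:ℂ) • r) * ((S⁻¹:Aˣ):A)) with hx
    rcases n with _ | m
    · simp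
      positivity
    set n : ℕ := m + 1 with hn
    have h1 : ‖x ^ n‖ ≤ 1 := by
      calc ‖x ^ n‖ ≤ ‖x‖ ^ n := norm_pow_le' x (Nat.succ_pos m)
        _ ≤ (‖(S:A) * (1 - (2:ℂ) • p) * ((S⁻¹:Aˣ):A)‖ * ‖(S:A) * (1 - (2:ℂ) • r) * ((S⁻¹:Aˣ):A)‖) ^ n := by
            apply pow_le_pow_left₀ (norm_nonneg _) (norm_mul_le _ _)
        _ = 1 := by rw [hU, hV, one_mul, one_pow]
    have h2 : 1 - (2 * (n:ℂ)) • h = ((S⁻¹:Aˣ):A) * x ^ n * (S:A) := by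
      rw [hx, hconj n]
      calc (1 : A) - (2 * (n:ℂ)) • h
          = (((S⁻¹:Aˣ):A) * (S:A)) * (1 - (2 * (n:ℂ)) • h) * (((S⁻¹:Aˣ):A) * (S:A)) := by
            rw [Units.inv_mul]; noncomm_ring
        _ = ((S⁻¹:Aˣ):A) * ((S:A) * (1 - (2 * (n:ℂ)) • h) * ((S⁻¹:Aˣ):A)) * (S:A) := by
            noncomm_ring
    have hy : ‖1 - (2 * (n:ℂ)) • h‖ ≤ ‖((S⁻¹:Aˣ):A)‖ * ‖(S:A)‖ := by
      rw [h2]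
      calc ‖((S⁻¹:Aˣ):A) * x ^ n * (S:A)‖ ≤ ‖((S⁻¹:Aˣ):A) * x ^ n‖ * ‖(S:A)‖ := norm_mul_le _ _
        _ ≤ ‖((S⁻¹:Aˣ):A)‖ * ‖x ^ n‖ * ‖(S:A)‖ := by gcongr; exact norm_mul_le _ _
        _ ≤ ‖((S⁻¹:Aˣ):A)‖ * 1 * ‖(S:A)‖ := by gcongr
        _ = ‖((S⁻¹:Aˣ):A)‖ * ‖(S:A)‖ := by rw [mul_one]
    have h4 : ‖(2 * (n:ℂ)) • h‖ = (2 * (n:ℝ)) * ‖h‖ := by rw [norm_smul]; norm_num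
    calc (2 * (n:ℝ)) * ‖h‖ = ‖(2 * (n:ℂ)) • h‖ := h4.symm
      _ = ‖(1:A) - (1 - (2 * (n:ℂ)) • h)‖ := by rw [sub_sub_cancel]
      _ ≤ ‖(1:A)‖ + ‖1 - (2 * (n:ℂ)) • h‖ := norm_sub_le _ _
      _ ≤ ‖(1:A)‖ + ‖((S⁻¹:Aˣ):A)‖ * ‖(S:A)‖ := by gcongr
  by_contra hh
  have hpos : 0 < ‖h‖ := norm_pos_iff.mpr hh
  set C : ℝ := ‖(1:A)‖ + ‖((S⁻¹:Aˣ):A)‖ * ‖(S:A)‖ with hC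
  obtain ⟨n, hn⟩ := exists_nat_gt (C / (2 * ‖h‖) + 1)
  have hb := hbound n
  have h2n : C / (2 * ‖h‖) < (n:ℝ) := by linarith
  rw [div_lt_iff₀ (by positivity)] at h2n
  nlinarith

/-- Left multiplication as an algebra homomorphism into continuous linear maps. -/
noncomputable def leftMulHom (A : Type*) [NormedRing A] [NormedAlgebra ℂ A] :
    A →ₐ[ℂ] (A →L[ℂ] A) where
  toFun a := ContinuousLinearMap.mul ℂ A a
  map_one' := by ext x; simp
  map_mul' a b := by ext x; simp [mul_assoc]
  map_zero' := by ext x; simp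
  map_add' a b := by ext x; simp [add_mul]
  commutes' z := by ext x; simp [Algebra.algebraMap_eq_smul_one, smul_mul_assoc]

lemma leftMulHom_apply (a x : A) : leftMulHom A a x = a * x := rfl

/-- Right multiplication as a continuous linear map. -/
noncomputable def rightMulL (A : Type*) [NormedRing A] [NormedAlgebra ℂ A] (a : A) :
    A →L[ℂ] A :=
  (ContinuousLinearMap.mul ℂ A).flip a

lemma rightMulL_apply (a x : A) : rightMulL A a x = x * a := rfl

lemma spectrum_rightMulL_subset (a : A) : spectrum ℂ (rightMulL A a) ⊆ spectrum ℂ a := by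
  intro z hz
  by_contra hza
  rw [spectrum.notMem_iff] at hza
  apply spectrum.notMem_iff.mpr ?_ hz
  obtain ⟨u, hu⟩ := hza
  refine ⟨⟨rightMulL A (u : A), rightMulL A ((u⁻¹ : Aˣ) : A), ?_, ?_⟩, ?_⟩
  · ext x
    show rightMulL A (u:A) (x * ((u⁻¹:Aˣ):A)) = x
    rw [rightMulL_apply, mul_assoc, Units.inv_mul, mul_one]
  · ext x
    show rightMulL A ((u⁻¹:Aˣ):A) (x * (u:A)) = x
    rw [rightMulL_apply, mul_assoc, Units.mul_inv, mul_one]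
  · ext x
    show rightMulL A (u:A) x = ((algebraMap ℂ (A →L[ℂ] A)) z - rightMulL A a) x
    rw [ContinuousLinearMap.sub_apply, rightMulL_apply, rightMulL_apply, hu, mul_sub,
      Algebra.algebraMap_eq_smul_one, Algebra.algebraMap_eq_smul_one, mul_smul_comm, mul_one,
      ContinuousLinearMap.smul_apply, ContinuousLinearMap.one_apply]

/-- The complement of a bounded set of reals (inside `ℂ`) is preconnected. -/
lemma compl_preconn {K : Set ℂ} (hK : Bornology.IsBounded K) (him : ∀ z ∈ K, z.im = 0) :
    IsPreconnected Kᶜ := by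
  suffices h : IsConnected ((Kᶜ ∩ {z | 0 ≤ z.im}) ∪ (Kᶜ ∩ {z | z.im ≤ 0})) by
    rw [← Set.inter_union_distrib_left, ← Set.setOf_or] at h
    have huniv : {z : ℂ | 0 ≤ z.im ∨ z.im ≤ 0} = Set.univ :=
      Set.eq_univ_of_forall (fun z => le_total 0 z.im)
    rw [huniv, Set.inter_univ] at h
    exact h.isPreconnected
  obtain ⟨R, hR⟩ := hK.subset_ball 0
  have hnotmem : ((|R| + 1 : ℝ) : ℂ) ∉ K := by
    intro hmem
    have h1 := hR hmem
    rw [mem_ball_zero_iff] at h1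
    rw [Complex.norm_real, Real.norm_eq_abs] at h1
    have h2 : R ≤ |R| := le_abs_self R
    have h3 : |R| + 1 ≤ |(|R| + 1)| := le_abs_self _
    linarith
  refine IsConnected.union ?_ ?_ ?_
  · exact ⟨((|R| + 1 : ℝ) : ℂ), ⟨⟨hnotmem, by simp⟩, ⟨hnotmem, by simp⟩⟩⟩
  · apply Complex.isConnected_of_upperHalfPlane (r := 0) ?_ Set.inter_subset_right
    intro z hz
    simp only [Set.mem_setOf_eq] at hz
    refine ⟨fun hmem => ?_, le_of_lt hz⟩
    rw [him z hmem] at hz; exact lt_irrefl 0 hz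
  · apply Complex.isConnected_of_lowerHalfPlane (r := 0) ?_ Set.inter_subset_right
    intro z hz
    simp only [Set.mem_setOf_eq] at hz
    refine ⟨fun hmem => ?_, le_of_lt hz⟩
    rw [him z hmem] at hz; exact lt_irrefl 0 hz

set_option maxHeartbeats 2000000 in
/-- Uniqueness of the invertible positive square root. -/
lemma pos_sqrt_unique (s t : Aˣ) (hs : IsPositiveEl (s:A)) (ht : IsPositiveEl (t:A))
    (hsq : (s:A) ^ 2 = (t:A) ^ 2) : (s:A) = (t:A) := by
  classical
  set E := A →L[ℂ] A
  set L : E := leftMulHom A (s:A) with hLdef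
  set R : E := rightMulL A (t:A) with hRdef
  have hLunit : IsUnit L := (s.isUnit).map (leftMulHom A)
  have hRunit : IsUnit R := by
    refine ⟨⟨R, rightMulL A ((t⁻¹:Aˣ):A), ?_, ?_⟩, rfl⟩
    · ext x
      show rightMulL A ((t⁻¹:Aˣ):A) x * (t:A) = x
      rw [rightMulL_apply, mul_assoc, Units.inv_mul, mul_one]
    · ext x
      show rightMulL A (t:A) x * ((t⁻¹:Aˣ):A) = x
      rw [rightMulL_apply, mul_assoc, Units.mul_inv, mul_one]
  set Sset : Set E := {L, R} with hSset
  have hcommLR : ∀ x y : E, x ∈ Sset → y ∈ Sset → x * y = y * x := by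
    have hLR : L * R = R * L := by
      ext x
      show (s:A) * (x * (t:A)) = ((s:A) * x) * (t:A)
      rw [mul_assoc]
    rintro x y (rfl | rfl) (rfl | rfl) <;> simp [hLR]
  set B : Subalgebra ℂ E := Subalgebra.centralizer ℂ
    ((Subalgebra.centralizer ℂ Sset : Subalgebra ℂ E) : Set E) with hBdef
  have hmemB : ∀ x : E, x ∈ Sset → x ∈ B := by
    intro x hx
    rw [hBdef, Subalgebra.mem_centralizer_iff]
    intro g hg
    exact (Subalgebra.mem_centralizer_iff ℂ |>.mp hg x hx).symm
  have hLB : L ∈ B := hmemB L (by simp [hSset])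
  have hRB : R ∈ B := hmemB R (by simp [hSset])
  have hTB : L + R ∈ B := add_mem hLB hRB
  have hSsubC1 : Sset ⊆ ((Subalgebra.centralizer ℂ Sset : Subalgebra ℂ E) : Set E) := by
    intro y hy
    rw [SetLike.mem_coe, Subalgebra.mem_centralizer_iff]
    intro g hg
    exact hcommLR g y hg hy
  have hBsubC1 : B ≤ Subalgebra.centralizer ℂ Sset :=
    hBdef ▸ Subalgebra.centralizer_le ℂ _ _ hSsubC1
  have hmulcomm : ∀ x y : E, x ∈ B → y ∈ B → x * y = y * x := by
    intro x y hx hy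
    rw [hBdef, Subalgebra.mem_centralizer_iff] at hx
    exact (hx y (hBsubC1 hy)).symm
  have hBclosed : IsClosed (B : Set E) := by
    have hset : (B : Set E) =
        ⋂ (g : E) (_ : g ∈ ((Subalgebra.centralizer ℂ Sset : Subalgebra ℂ E) : Set E)),
          {x : E | g * x = x * g} := by
      ext x
      simp only [hBdef, SetLike.mem_coe, Subalgebra.mem_centralizer_iff, Set.mem_iInter,
        Set.mem_setOf_eq]
    rw [hset]
    exact isClosed_biInter fun g _ =>
      isClosed_eq (continuous_const.mul continuous_id) (continuous_id.mul continuous_const)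
  haveI : IsClosed (B : Set E) := hBclosed
  haveI : CompleteSpace B := hBclosed.completeSpace_coe
  letI instCommB : NormedCommRing B :=
    { (inferInstance : NormedRing B) with
      mul_comm := fun x y => Subtype.ext (hmulcomm x y x.2 y.2) }
  have hTunit : IsUnit (L + R) := by
    by_contra hT
    have hTBunit : ¬ IsUnit (⟨L + R, hTB⟩ : B) := fun h => hT (h.map B.val)
    obtain ⟨χ, hχ⟩ := WeakDual.CharacterSpace.exists_apply_eq_zero hTBunit
    have hspecL : spectrum ℂ (⟨L, hLB⟩ : B) = spectrum ℂ L := by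
      apply Subalgebra.spectrum_eq_of_isPreconnected_compl
      apply compl_preconn (spectrum.isBounded L)
      intro z hz
      obtain ⟨x, _, rfl⟩ := hs.2 (AlgHom.spectrum_apply_subset (leftMulHom A) (s:A) hz)
      simp
    have hspecR : spectrum ℂ (⟨R, hRB⟩ : B) = spectrum ℂ R := by
      apply Subalgebra.spectrum_eq_of_isPreconnected_compl
      apply compl_preconn (spectrum.isBounded R)
      intro z hz
      obtain ⟨x, _, rfl⟩ := ht.2 (spectrum_rightMulL_subset (t:A) hz)
      simp
    have hχL : χ (⟨L, hLB⟩ : B) ∈ spectrum ℂ L := hspecL ▸ AlgHom.apply_mem_spectrum χ _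
    have hχR : χ (⟨R, hRB⟩ : B) ∈ spectrum ℂ R := hspecR ▸ AlgHom.apply_mem_spectrum χ _
    obtain ⟨x, hx, hxeq⟩ := hs.2 (AlgHom.spectrum_apply_subset (leftMulHom A) (s:A) hχL)
    obtain ⟨y, hy, hyeq⟩ := ht.2 (spectrum_rightMulL_subset (t:A) hχR)
    have hLne : χ (⟨L, hLB⟩ : B) ≠ 0 := by
      intro h0
      rw [h0] at hχL
      exact spectrum.zero_notMem ℂ hLunit hχL
    have hRne : χ (⟨R, hRB⟩ : B) ≠ 0 := by
      intro h0
      rw [h0] at hχR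
      exact spectrum.zero_notMem ℂ hRunit hχR
    have hsum : χ (⟨L, hLB⟩ : B) + χ (⟨R, hRB⟩ : B) = 0 := by
      rw [← map_add]
      have hadd : (⟨L, hLB⟩ : B) + (⟨R, hRB⟩ : B) = (⟨L + R, hTB⟩ : B) := rfl
      rw [hadd, hχ]
    rw [← hxeq] at hsum hLne
    rw [← hyeq] at hsum hRne
    rw [← Complex.ofReal_add, Complex.ofReal_eq_zero] at hsum
    rw [Ne, Complex.ofReal_eq_zero] at hLne hRne
    have hx0 : 0 < x := lt_of_le_of_ne hx (Ne.symm hLne)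
    have hy0 : 0 < y := lt_of_le_of_ne hy (Ne.symm hRne)
    linarith
  obtain ⟨u, hu⟩ := hTunit
  have hker : (L + R) ((s:A) - (t:A)) = 0 := by
    show L ((s:A) - (t:A)) + R ((s:A) - (t:A)) = 0
    have hL' : L ((s:A) - (t:A)) = (s:A) * ((s:A) - (t:A)) := rfl
    have hR' : R ((s:A) - (t:A)) = ((s:A) - (t:A)) * (t:A) := rfl
    have h2 : (s:A) * (s:A) = (t:A) * (t:A) := by
      have := hsq; rwa [sq, sq] at this
    rw [hL', hR']
    calc (s:A) * ((s:A) - (t:A)) + ((s:A) - (t:A)) * (t:A)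
        = (s:A) * (s:A) - (t:A) * (t:A) := by noncomm_ring
      _ = 0 := by rw [h2, sub_self]
  have hzero : ((s:A) - (t:A)) = 0 := by
    have h1 : ((u⁻¹ : (A →L[ℂ] A)ˣ) : A →L[ℂ] A) ((L + R) ((s:A) - (t:A))) = ((s:A) - (t:A)) := by
      rw [← hu]
      show (((u⁻¹ : (A →L[ℂ] A)ˣ) : A →L[ℂ] A) * (u : A →L[ℂ] A)) ((s:A) - (t:A)) = ((s:A) - (t:A))
      rw [Units.inv_mul]
      rfl
    rw [hker] at h1
    rw [← h1]
    simp
  exact sub_eq_zero.mp hzero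

end Aux

/-! ### Algebraic lemmas about commuting Moore–Penrose inverses -/

section Alg

variable {A : Type*} [NormedRing A] [NormedAlgebra ℂ A] [CompleteSpace A]

lemma comm_of_factor (a ad : A) (h1 : a * ad * a = a) (s₁ t₁ : A)
    (hs : ad = s₁ * a) (ht : ad = a * t₁) : a * ad = ad * a := by
  have e1 : ad * ad * a = ad := by
    nth_rewrite 1 [hs]
    rw [mul_assoc s₁ a ad, mul_assoc s₁ (a * ad) a]
    rw [show a * ad * a = a from h1, ← hs]
  have e2 : a * ad * ad = ad := by
    nth_rewrite 2 [ht]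
    rw [← mul_assoc, h1, ← ht]
  calc a * ad = a * (ad * ad * a) := by rw [e1]
    _ = (a * ad * ad) * a := by noncomm_ring
    _ = ad * a := by rw [e2]

lemma factor_of_comm (a ad : A) (h1 : a * ad * a = a) (h2 : ad * a * ad = ad)
    (hc : a * ad = ad * a) :
    ∃ s t : A, (∀ x : A, s * x = 0 → x = 0) ∧ (∀ y : A, ∃ x : A, t * x = y) ∧
      ad = s * a ∧ ad = a * t := by
  set g : A := ad * ad + (1 - a * ad) with hg
  have f1 : ad * ad * a = ad := by
    calc ad * ad * a = ad * (ad * a) := by rw [mul_assoc]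
      _ = ad * (a * ad) := by rw [hc]
      _ = ad * a * ad := by rw [mul_assoc]
      _ = ad := h2
  have f2 : a * ad * ad = ad := by
    calc a * ad * ad = ad * a * ad := by rw [hc]
      _ = ad := h2
  have hga : g * a = ad := by
    rw [hg, add_mul, sub_mul, one_mul, f1, h1, sub_self, add_zero]
  have hag : a * g = ad := by
    have f3 : a * (a * ad) = a := by
      rw [hc, ← mul_assoc, h1]
    rw [hg, mul_add, mul_sub, mul_one, ← mul_assoc, f2]
    rw [f3, sub_self, add_zero]
  refine ⟨g, g, ?_, ?_, hga.symm, hag.symm⟩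
  · intro x hx
    have k1 : (a * ad) * g = ad * ad := by
      rw [hg, mul_add, mul_sub, mul_one]
      have k2 : (a * ad) * (ad * ad) = ad * ad := by
        rw [← mul_assoc, f2]
      have k3 : (a * ad) * (a * ad) = a * ad := by
        rw [← mul_assoc, mul_assoc a ad a, show a * (ad * a) = a from by rw [← mul_assoc]; exact h1]
      rw [k2, k3, sub_self, add_zero]
    have k4 : ad * ad * x = 0 := by
      have := congrArg (fun y => (a * ad) * y) hx
      simp only [mul_zero] at this
      rwa [← mul_assoc, k1] at this
    have k5 : (a * ad) * x = 0 := by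
      have k6 : (a * a) * (ad * ad) = a * ad := by
        calc (a * a) * (ad * ad) = a * (a * ad * ad) := by noncomm_ring
          _ = a * ad := by rw [f2]
      have := congrArg (fun y => (a * a) * y) k4
      simp only [mul_zero] at this
      rwa [← mul_assoc, ← mul_assoc, mul_assoc (a*a) ad ad, k6] at this
    have k7 : g * x = ad * ad * x + x - (a * ad) * x := by
      rw [hg]; noncomm_ring
    rw [hx, k4, k5] at k7
    have hx0 : (0:A) = 0 + x - 0 := k7
    simpa using hx0.symm
  · intro y
    set w : A := a * a + (1 - a * ad) with hw
    have hgw : g * w = 1 := by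
      rw [hg, hw]
      have p1 : (ad * ad) * (a * a) = ad * a := by
        calc (ad * ad) * (a * a) = (ad * ad * a) * a := by noncomm_ring
          _ = ad * a := by rw [f1]
      have p2 : (ad * ad) * (a * ad) = ad * ad := by
        calc (ad * ad) * (a * ad) = (ad * ad * a) * ad := by noncomm_ring
          _ = ad * ad := by rw [f1]
      have p3 : (a * ad) * (a * a) = a * a := by
        calc (a * ad) * (a * a) = (a * ad * a) * a := by noncomm_ring
          _ = a * a := by rw [h1]
      have p4 : (a * ad) * (a * ad) = a * ad := by
        calc (a * ad) * (a * ad) = (a * ad * a) * ad := by noncomm_ring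
          _ = a * ad := by rw [h1]
      calc (ad * ad + (1 - a * ad)) * (a * a + (1 - a * ad))
          = (ad * ad) * (a * a) + ((ad * ad) - (ad * ad) * (a * ad))
            + ((a * a) - (a * ad) * (a * a)) + (1 - a * ad - a * ad + (a * ad) * (a * ad)) := by
            noncomm_ring
        _ = ad * a + 1 - a * ad := by
            rw [p1, p2, p3, p4]; abel
        _ = a * ad + 1 - a * ad := by rw [hc]
        _ = 1 := by abel
    exact ⟨w * y, by rw [← mul_assoc, hgw, one_mul]⟩

end Alg

section Main

variable {A : Type*} [NormedRing A] [NormedAlgebra ℂ A] [CompleteSpace A]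

lemma comm_of_wep (e f a ad : A) (had : IsWMPI e f a ad) (hwep : IsWEP e f a) :
    a * ad = ad * a := by
  obtain ⟨b, ⟨hb1, hb2, hbe, hbf⟩, hcomm⟩ := hwep
  obtain ⟨ha1, ha2, hae, haf⟩ := had
  -- e side : a * ad = a * b
  obtain ⟨s₁, hs₁pos, hs₁sq, hs₁n⟩ := hae
  obtain ⟨s₂, hs₂pos, hs₂sq, hs₂n⟩ := hbe
  have hs12 : s₁ = s₂ :=
    Units.ext (pos_sqrt_unique s₁ s₂ hs₁pos hs₂pos (by rw [hs₁sq, hs₂sq]))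
  subst hs12
  have hp : (a * ad) * (a * ad) = a * ad := by rw [← mul_assoc, ha1]
  have hpb : (a * b) * (a * b) = a * b := by rw [← mul_assoc, hb1]
  have hpr : (a * ad) * (a * b) = a * b := by rw [← mul_assoc, ha1]
  have hrp : (a * b) * (a * ad) = a * ad := by rw [← mul_assoc, hb1]
  have hprodE : (1 - (2:ℂ) • (a * ad)) * (1 - (2:ℂ) • (a * b))
      = 1 - (2:ℂ) • ((a * ad) - (a * b)) := by
    rw [sub_mul, one_mul, mul_sub, mul_one, smul_mul_smul_comm, hpr]
    module
  have hnilE : ((a * ad) - (a * b)) * ((a * ad) - (a * b)) = 0 := by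
    rw [sub_mul, mul_sub, mul_sub, hp, hpb, hpr, hrp]
    abel
  have he : (a * ad) - (a * b) = 0 :=
    herm_idem_cancel s₁ (a * ad) (a * b) ((a * ad) - (a * b)) hp hpb hs₁n hs₂n hprodE hnilE
  -- f side : ad * a = b * a
  obtain ⟨t₁, ht₁pos, ht₁sq, ht₁n⟩ := haf
  obtain ⟨t₂, ht₂pos, ht₂sq, ht₂n⟩ := hbf
  have ht12 : t₁ = t₂ :=
    Units.ext (pos_sqrt_unique t₁ t₂ ht₁pos ht₂pos (by rw [ht₁sq, ht₂sq]))
  subst ht12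
  have hq : (ad * a) * (ad * a) = ad * a := by rw [← mul_assoc, ha2]
  have hrb : (b * a) * (b * a) = b * a := by rw [← mul_assoc, hb2]
  have hqr : (ad * a) * (b * a) = ad * a := by
    calc (ad * a) * (b * a) = ad * (a * b * a) := by noncomm_ring
      _ = ad * a := by rw [hb1]
  have hrq : (b * a) * (ad * a) = b * a := by
    calc (b * a) * (ad * a) = b * (a * ad * a) := by noncomm_ring
      _ = b * a := by rw [ha1]
  have hprodF : (1 - (2:ℂ) • (ad * a)) * (1 - (2:ℂ) • (b * a))
      = 1 - (2:ℂ) • ((b * a) - (ad * a)) := by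
    rw [sub_mul, one_mul, mul_sub, mul_one, smul_mul_smul_comm, hqr]
    module
  have hnilF : ((b * a) - (ad * a)) * ((b * a) - (ad * a)) = 0 := by
    rw [sub_mul, mul_sub, mul_sub, hrb, hrq, hqr, hq]
    abel
  have hf : (b * a) - (ad * a) = 0 :=
    herm_idem_cancel t₁ (ad * a) (b * a) ((b * a) - (ad * a)) hq hrb ht₁n ht₂n hprodF hnilF
  calc a * ad = a * b := sub_eq_zero.mp he
    _ = b * a := hcomm
    _ = ad * a := sub_eq_zero.mp hf

end Main

/-- `a` is weighted EP with weights `e` and `f` iff `a^†_{e,f} = s a = a t` for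
some left-injective `s` and left-surjective `t`, iff `a^†_{e,f} = s₁ a = a t₁`
for some `s₁, t₁ ∈ A`. -/
theorem weighted_EP_iff_factorization_sa
    {A : Type*} [NormedRing A] [NormedAlgebra ℂ A] [CompleteSpace A]
    (e f a : A)
    (he : IsPositiveEl e ∧ IsUnit e) (hf : IsPositiveEl f ∧ IsUnit f)
    (ad : A) (had : IsWMPI e f a ad) :
    (IsWEP e f a ↔
      ∃ s t : A, (∀ x : A, s * x = 0 → x = 0) ∧ (∀ y : A, ∃ x : A, t * x = y) ∧
        ad = s * a ∧ ad = a * t) ∧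
    (IsWEP e f a ↔ ∃ s₁ t₁ : A, ad = s₁ * a ∧ ad = a * t₁) := by
  constructor
  · constructor
    · intro hwep
      exact factor_of_comm a ad had.1 had.2.1 (comm_of_wep e f a ad had hwep)
    · rintro ⟨s, t, _, _, hs, ht⟩
      exact ⟨ad, had, comm_of_factor a ad had.1 s t hs ht⟩
  · constructor
    · intro hwep
      obtain ⟨s, t, _, _, hs, ht⟩ :=
        factor_of_comm a ad had.1 had.2.1 (comm_of_wep e f a ad had hwep)
      exact ⟨s, t, hs, ht⟩
    · rintro ⟨s, t, hs, ht⟩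
      exact ⟨ad, had, comm_of_factor a ad had.1 s t hs ht⟩
end
end

section
/- Let A be a complex unital Banach algebra, let e, f ∈ A be invertible positive elements, and let a ∈ A be such that a^†_{e,f} exists. Then the following are equivalent: (i) a is weighted EP with weights e and f; (ii) there exist u, v, u₁, v₁ ∈ A such that a^†_{e,f} a = u a^†_{e,f} = a v and a a^†_{e,f} = a^†_{e,f} u₁ = v₁ a; (iii) there exist u₂, v₂, u₃, v₃ ∈ A such that a^†_{e,f} a = u₂ a^†_{e,f}, a a^†_{e,f} = a^†_{e,f} u₃ and a^†_{e,f} = a v₂ = v₃ a. -/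
/-!
Common definitions: hermitian and positive elements of a complex unital Banach
algebra, hermitian elements with respect to the equivalent norm induced by an
invertible positive element (weight), and the weighted Moore–Penrose inverse,
both for Banach algebra elements and for bounded linear operators between
Banach spaces.
-/

noncomputable section

set_option maxHeartbeats 1000000
set_option linter.unusedSectionVars false

namespace WEPaux

open scoped Real Nat

variable {A : Type*} [NormedRing A] [NormedAlgebra ℂ A] [CompleteSpace A]


lemma exp_smul_idem (z : ℂ) {p : A} (hp : p * p = p) :
    NormedSpace.exp (z • p) = 1 + (Complex.exp z - 1) • p := by
  have hpow : ∀ n : ℕ, p ^ (n + 1) = p := by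
    intro n; induction n with
    | zero => simp
    | succ k ih => rw [pow_succ, ih, hp]
  have hsum : Summable fun n : ℕ => ((n ! : ℂ)⁻¹) • (z • p) ^ n :=
    NormedSpace.expSeries_summable' (𝕂 := ℂ) (z • p)
  have hgsum : Summable fun n : ℕ => z ^ n / n ! :=
    NormedSpace.expSeries_summable' (𝕂 := ℂ) z |>.congr (by
      intro n; simp [smul_eq_mul, div_eq_mul_inv, mul_comm])
  rw [NormedSpace.exp_eq_tsum ℂ]; simp only []
  show (∑' n : ℕ, ((n ! : ℂ)⁻¹) • (z • p) ^ n) = _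
  rw [Summable.tsum_eq_zero_add hsum]
  have h0 : ((0! : ℂ)⁻¹) • (z • p) ^ 0 = 1 := by simp
  have hterm : ∀ n : ℕ, (((n+1)! : ℂ)⁻¹) • (z • p) ^ (n+1) = (z ^ (n+1) / (n+1)!) • p := by
    intro n
    rw [smul_pow, hpow, smul_smul, div_eq_mul_inv, mul_comm]
  rw [h0]
  congr 1
  calc ∑' n : ℕ, (((n+1)! : ℂ)⁻¹) • (z • p) ^ (n+1)
      = ∑' n : ℕ, (z ^ (n+1) / (n+1)!) • p := by exact tsum_congr hterm
    _ = (∑' n : ℕ, z ^ (n+1) / (n+1)!) • p := by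
        refine Summable.tsum_smul_const ?_ p
        exact (summable_nat_add_iff 1).2 hgsum |>.congr (by intro n; norm_num)
    _ = (Complex.exp z - 1) • p := by
        have : Complex.exp z = ∑' n : ℕ, z ^ n / n ! := by
          rw [Complex.exp_eq_exp_ℂ, NormedSpace.exp_eq_tsum_div]
        rw [Summable.tsum_eq_zero_add hgsum] at this
        simp only [pow_zero, Nat.factorial_zero, Nat.cast_one, div_one] at this
        rw [this]; congr 1; ring

lemma wt_cancel {s : Aˣ} {x y d : A}
    (hx : ‖(s : A) * x * ((s⁻¹ : Aˣ) : A)‖ = 1) (hy : ‖(s : A) * y * ((s⁻¹ : Aˣ) : A)‖ = 1)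
    (hxy : x * y = 1 + d) (hd : d * d = 0) : d = 0 := by
  have key : ∀ u v : A, ((s:A) * u * ↑s⁻¹) * ((s:A) * v * ↑s⁻¹) = (s:A) * (u*v) * ↑s⁻¹ := by
    intro u v
    simp only [mul_assoc, Units.inv_mul_cancel_left]
  set c := (s : A) * d * ((s⁻¹ : Aˣ) : A) with hc
  have hcc : c * c = 0 := by rw [hc, key, hd, mul_zero, zero_mul]
  have hXY : ((s:A) * x * ↑s⁻¹) * ((s:A) * y * ↑s⁻¹) = 1 + c := by
    rw [key, hxy, mul_add, add_mul, mul_one, Units.mul_inv, hc]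
  have hpown : ∀ n : ℕ, (1 + c) ^ n = 1 + n • c := by
    intro n; induction n with
    | zero => simp
    | succ k ih =>
      rw [pow_succ, ih, add_mul, mul_add, mul_add, one_mul, mul_one, smul_mul_assoc, hcc,
        smul_zero, add_zero, succ_nsmul, one_mul]
      abel
  have hb : ∀ n : ℕ, (n:ℝ) * ‖c‖ ≤ 1 + ‖(1:A)‖ := by
    intro n
    rcases Nat.eq_zero_or_pos n with h0 | hpos
    · simp [h0]; positivity
    have h1 : ‖(1 + c)^n‖ ≤ 1 := by
      rw [← hXY]
      calc ‖(((s:A) * x * ↑s⁻¹) * ((s:A) * y * ↑s⁻¹))^n‖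
          ≤ ‖((s:A) * x * ↑s⁻¹) * ((s:A) * y * ↑s⁻¹)‖ ^ n := norm_pow_le' _ hpos
        _ ≤ (‖(s:A) * x * ↑s⁻¹‖ * ‖(s:A) * y * ↑s⁻¹‖) ^ n := by
            gcongr; exact norm_mul_le _ _
        _ = 1 := by rw [hx, hy]; simp
    have h2 : ‖n • c‖ ≤ ‖(1+c)^n‖ + ‖(1:A)‖ := by
      have : (n • c : A) = (1 + c)^n - 1 := by rw [hpown n]; abel
      rw [this]
      exact norm_sub_le _ _
    have h3 : ‖n • c‖ = (n:ℝ) * ‖c‖ := by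
      rw [← Nat.cast_smul_eq_nsmul ℝ, norm_smul]; simp
    linarith
  have hc0 : c = 0 := by
    by_contra hne
    have hpos : 0 < ‖c‖ := norm_pos_iff.mpr hne
    obtain ⟨n, hn⟩ := exists_nat_gt ((1 + ‖(1:A)‖) / ‖c‖)
    have h4 := (div_lt_iff₀ hpos).mp hn
    linarith [hb n]
  have : d = ↑s⁻¹ * c * (s:A) := by
    rw [hc]
    simp only [mul_assoc, Units.inv_mul_cancel_left, Units.inv_mul, mul_one]
  rw [this, hc0, mul_zero, zero_mul]


/-- path element -/
def mp (x : A) (r : ℝ) : A := 1 + r • (x - 1)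

/-- denominator element -/
def up (x : A) (r ε : ℝ) : A := mp x r * mp x r + (ε * ε) • (1 : A)

lemma mp_unit {x : A} (hs : ∀ z ∈ spectrum ℂ x, 0 < z.re) {r : ℝ} (hr0 : 0 ≤ r) (hr1 : r ≤ 1)
    (z : ℂ) (hz : z.re ≤ 0) : IsUnit (mp x r - z • 1) := by
  rcases eq_or_lt_of_le hr0 with h0 | hpos
  · have : mp x r - z • 1 = (1 - z) • (1 : A) := by
      simp [mp, ← h0, sub_smul]
    rw [this]
    have hz1 : (1 - z) ≠ 0 := by
      intro h
      have := congrArg Complex.re h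
      simp [Complex.sub_re] at this
      linarith
    rw [← Algebra.algebraMap_eq_smul_one]
    exact (isUnit_iff_ne_zero.mpr hz1).map (algebraMap ℂ A)
  · set l : ℂ := (z - (1 - (r : ℂ))) / (r : ℂ) with hl
    have hrC : ((r : ℝ) : ℂ) ≠ 0 := by
      simp only [ne_eq, Complex.ofReal_eq_zero]; linarith
    have hres : mp x r - z • 1 = (r : ℂ) • (x - l • 1) := by
      rw [smul_sub, smul_smul, hl, mul_div_cancel₀ _ hrC]
      have hrs : (r : ℝ) • (x - 1) = ((r : ℝ) : ℂ) • (x - 1) := by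
        rw [← algebraMap_smul ℂ (r : ℝ) (x - 1), Complex.coe_algebraMap]
      rw [mp, hrs, smul_sub]
      rw [sub_smul, sub_smul, one_smul]
      abel
    have hlre : l.re ≤ 0 := by
      have : l = (z - (1 - (r:ℝ):ℂ)) / ((r:ℝ):ℂ) := hl
      rw [this, Complex.div_ofReal_re]
      have hnum : (z - (1 - (r:ℝ):ℂ)).re ≤ 0 := by
        simp only [Complex.sub_re, Complex.one_re, Complex.ofReal_re]
        linarith
      exact div_nonpos_of_nonpos_of_nonneg hnum (by linarith)
    have hlns : l ∉ spectrum ℂ x := fun hmem => absurd (hs l hmem) (by linarith)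
    have hx : IsUnit (x - l • 1) := by
      have := spectrum.notMem_iff.mp hlns
      rw [Algebra.algebraMap_eq_smul_one] at this
      simpa using this.neg
    rw [hres]
    have : ((r:ℝ):ℂ) • (x - l • 1) = (((r:ℝ):ℂ) • (1:A)) * (x - l • 1) := by
      rw [smul_mul_assoc, one_mul]
    rw [this]
    refine IsUnit.mul ?_ hx
    rw [← Algebra.algebraMap_eq_smul_one]
    exact (isUnit_iff_ne_zero.mpr hrC).map (algebraMap ℂ A)


lemma up_factor (x : A) (r ε : ℝ) :
    up x r ε = (mp x r - ((ε:ℂ) * Complex.I) • 1) * (mp x r + ((ε:ℂ) * Complex.I) • 1) := by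
  set c : ℂ := (ε:ℂ) * Complex.I with hc
  have expand : (mp x r - c • 1) * (mp x r + c • 1)
      = mp x r * mp x r - (c * c) • (1:A) := by
    rw [sub_mul, mul_add, mul_add, mul_smul_comm, smul_mul_assoc, smul_mul_assoc,
      mul_one, one_mul, one_mul, smul_smul]
    abel
  rw [expand, up]
  congr 1
  have : c * c = -((ε:ℝ) * (ε:ℝ) : ℝ) := by
    rw [hc]
    push_cast
    rw [mul_mul_mul_comm, Complex.I_mul_I]
    push_cast
    ring
  rw [this]
  rw [← algebraMap_smul ℂ ((ε:ℝ) * (ε:ℝ)) (1:A), Complex.coe_algebraMap]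
  push_cast
  rw [neg_smul, sub_neg_eq_add]

lemma up_unit {x : A} (hs : ∀ z ∈ spectrum ℂ x, 0 < z.re) {r : ℝ} (hr0 : 0 ≤ r) (hr1 : r ≤ 1)
    (ε : ℝ) : IsUnit (up x r ε) := by
  rw [up_factor]
  refine IsUnit.mul ?_ ?_
  · exact mp_unit hs hr0 hr1 _ (by simp)
  · have := mp_unit hs hr0 hr1 (-((ε:ℂ) * Complex.I)) (by simp)
    simpa [sub_neg_eq_add] using this

lemma commute_ring_inverse {u c : A} (hu : IsUnit u) (h : Commute c u) :
    Commute c (Ring.inverse u) := by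
  obtain ⟨v, rfl⟩ := hu
  rw [Ring.inverse_unit]
  exact h.units_inv_right

/-- integrand after differentiation -/
def Dp (x : A) (r ε : ℝ) : A :=
  (x - 1) * (((ε * ε) • (1:A) - mp x r * mp x r) *
    (Ring.inverse (up x r ε) * Ring.inverse (up x r ε)))

lemma commute_x_mp (x : A) (r : ℝ) : Commute (x - 1) (mp x r) := by
  unfold mp
  exact (Commute.one_right _).add_right ((Commute.refl _).smul_right r)

lemma commute_x_up (x : A) (r ε : ℝ) : Commute (x - 1) (up x r ε) := by
  unfold up
  exact ((commute_x_mp x r).mul_right (commute_x_mp x r)).add_right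
    ((Commute.one_right _).smul_right _)

lemma commute_mp_up (x : A) (r ε : ℝ) : Commute (mp x r) (up x r ε) := by
  unfold up
  exact ((Commute.refl _).mul_right (Commute.refl _)).add_right
    ((Commute.one_right _).smul_right _)

section algebra

lemma alg_identity {y m g iu : A}
    (cym : Commute y m) (cyiu : Commute y iu) (cmiu : Commute m iu)
    (hgc : ∀ a : A, Commute g a)
    (hiu : (m * m + g) * iu = 1) :
    y * iu + m * -(iu * (y * m + m * y) * iu)
      = y * ((g - m * m) * (iu * iu)) := by
  set u : A := m * m + g with hu
  set S : A := y * m + m * y with hS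
  have hP : u * (iu * iu) = iu := by rw [← mul_assoc, hiu, one_mul]
  have ciuS : Commute iu S := by
    rw [hS]
    exact (cyiu.symm.mul_right cmiu.symm).add_right (cmiu.symm.mul_right cyiu.symm)
  have hmove : iu * S * iu = S * (iu * iu) := by rw [ciuS.eq, mul_assoc]
  have t1 : y * iu = y * u * (iu * iu) := by rw [mul_assoc y u, hP]
  have t2 : m * -(iu * S * iu) = -(m * S * (iu * iu)) := by
    rw [hmove, mul_neg, mul_assoc]
  have bracket : y * u - m * S = y * (g - m * m) := by
    have e1 : m * (y * m) = y * (m * m) :=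
      calc m * (y * m) = (m * y) * m := (mul_assoc _ _ _).symm
        _ = (y * m) * m := by rw [← cym.eq]
        _ = y * (m * m) := mul_assoc _ _ _
    have e2 : m * (m * y) = y * (m * m) :=
      calc m * (m * y) = (m * m) * y := (mul_assoc _ _ _).symm
        _ = y * (m * m) := ((cym.mul_right cym).eq).symm
    rw [hu, hS, mul_add, mul_sub, mul_add, e1, e2]
    abel
  rw [t1, t2, ← sub_eq_add_neg, ← sub_mul, bracket, mul_assoc]

end algebra

lemma hasDerivAt_mp (x : A) (r : ℝ) : HasDerivAt (fun ρ : ℝ => mp x ρ) (x - 1) r := by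
  unfold mp
  simpa using ((hasDerivAt_id r).smul_const (x - 1)).const_add (1 : A)

lemma hasDerivAt_up_r (x : A) (ε : ℝ) (r : ℝ) :
    HasDerivAt (fun ρ : ℝ => up x ρ ε)
      ((x - 1) * mp x r + mp x r * (x - 1)) r := by
  unfold up
  exact ((hasDerivAt_mp x r).mul (hasDerivAt_mp x r)).add_const _

lemma ring_inverse_up_eq {x : A} {r ε : ℝ} (U : Aˣ) (hU : (U : A) = up x r ε) :
    Ring.inverse (up x r ε) = ((U⁻¹ : Aˣ) : A) := by
  rw [← hU, Ring.inverse_unit]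

lemma hasDerivAt_inv_up_r {x : A} (hs : ∀ z ∈ spectrum ℂ x, 0 < z.re)
    {r : ℝ} (hr0 : 0 ≤ r) (hr1 : r ≤ 1) (ε : ℝ) :
    HasDerivAt (fun ρ : ℝ => Ring.inverse (up x ρ ε))
      (-(Ring.inverse (up x r ε) * ((x - 1) * mp x r + mp x r * (x - 1)) *
        Ring.inverse (up x r ε))) r := by
  obtain ⟨U, hU⟩ := up_unit hs hr0 hr1 ε
  have hF := hasFDerivAt_ringInverse (𝕜 := ℝ) (R := A) U
  rw [hU] at hF
  have := hF.comp_hasDerivAt r (hasDerivAt_up_r x ε r)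
  simpa [ring_inverse_up_eq U hU, ContinuousLinearMap.neg_apply,
    ContinuousLinearMap.mulLeftRight_apply, Function.comp_def] using this

lemma hasDerivAt_r {x : A} (hs : ∀ z ∈ spectrum ℂ x, 0 < z.re)
    {r : ℝ} (hr0 : 0 ≤ r) (hr1 : r ≤ 1) (ε : ℝ) :
    HasDerivAt (fun ρ : ℝ => mp x ρ * Ring.inverse (up x ρ ε)) (Dp x r ε) r := by
  have h := (hasDerivAt_mp x r).mul (hasDerivAt_inv_up_r hs hr0 hr1 ε)
  refine h.congr_deriv (Eq.symm ?_)
  have hUnit := up_unit hs hr0 hr1 ε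
  have cxu := commute_ring_inverse hUnit (commute_x_up x r ε)
  have cmu := commute_ring_inverse hUnit (commute_mp_up x r ε)
  have hinv : up x r ε * Ring.inverse (up x r ε) = 1 := Ring.mul_inverse_cancel _ hUnit
  have hg : ∀ a : A, Commute ((ε * ε) • (1:A)) a := fun a =>
    ((Commute.one_left a).smul_left _)
  have := alg_identity (y := x - 1) (m := mp x r) (g := (ε*ε) • (1:A))
    (iu := Ring.inverse (up x r ε)) (commute_x_mp x r) cxu cmu hg (by rw [← up]; exact hinv)
  rw [Dp, ← this]

lemma hasDerivAt_up_eps (x : A) (r : ℝ) (ε : ℝ) :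
    HasDerivAt (fun η : ℝ => up x r η) ((ε + ε) • (1:A)) ε := by
  unfold up
  have h : HasDerivAt (fun η : ℝ => η * η) (1 * ε + ε * 1) ε :=
    (hasDerivAt_id ε).mul (hasDerivAt_id ε)
  have h2 := (h.smul_const (1:A)).const_add (mp x r * mp x r)
  simpa [one_mul, mul_one] using h2

lemma hasDerivAt_inv_up_eps {x : A} (hs : ∀ z ∈ spectrum ℂ x, 0 < z.re)
    {r : ℝ} (hr0 : 0 ≤ r) (hr1 : r ≤ 1) (ε : ℝ) :
    HasDerivAt (fun η : ℝ => Ring.inverse (up x r η))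
      (-(Ring.inverse (up x r ε) * ((ε + ε) • (1:A)) * Ring.inverse (up x r ε))) ε := by
  obtain ⟨U, hU⟩ := up_unit hs hr0 hr1 ε
  have hF := hasFDerivAt_ringInverse (𝕜 := ℝ) (R := A) U
  rw [hU] at hF
  have := hF.comp_hasDerivAt ε (hasDerivAt_up_eps x r ε)
  simpa [ring_inverse_up_eq U hU, ContinuousLinearMap.neg_apply,
    ContinuousLinearMap.mulLeftRight_apply, Function.comp_def] using this

lemma hasDerivAt_eps {x : A} (hs : ∀ z ∈ spectrum ℂ x, 0 < z.re)
    {r : ℝ} (hr0 : 0 ≤ r) (hr1 : r ≤ 1) (ε : ℝ) :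
    HasDerivAt (fun η : ℝ => (-η) • ((x - 1) * Ring.inverse (up x r η))) (Dp x r ε) ε := by
  have h3 := (hasDerivAt_inv_up_eps hs hr0 hr1 ε).const_mul (x - 1)
  have h4 : HasDerivAt (fun η : ℝ => -η) (-1 : ℝ) ε := by
    exact hasDerivAt_neg ε
  have h5 := h4.smul h3
  refine h5.congr_deriv (Eq.symm ?_)
  set iu := Ring.inverse (up x r ε) with hiu
  set m := mp x r with hm
  set y := x - 1 with hy
  have hUnit := up_unit hs hr0 hr1 ε
  have hinv : up x r ε * iu = 1 := Ring.mul_inverse_cancel _ hUnit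
  have hP : up x r ε * (iu * iu) = iu := by rw [← mul_assoc, hinv, one_mul]
  have e0 : iu * ((ε + ε) • (1:A)) * iu = (ε + ε) • (iu * iu) := by
    rw [mul_smul_comm, mul_one, smul_mul_assoc]
  have e1 : y * -(iu * ((ε + ε) • (1:A)) * iu) = -((ε+ε) • (y * (iu * iu))) := by
    rw [e0, mul_neg, mul_smul_comm]
  have e2 : (-1 : ℝ) • (y * iu) = -(y * (up x r ε * (iu * iu))) := by
    rw [hP, neg_one_smul]
  have e3 : (-ε) • -((ε+ε) • (y * (iu * iu))) = (ε * (ε+ε)) • (y * (iu * iu)) := by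
    rw [smul_neg, neg_smul, neg_neg, smul_smul]
  have e6 : (ε * (ε + ε)) • y + -(y * up x r ε) = y * ((ε * ε) • (1:A) - m * m) := by
    rw [up, ← hm, mul_add, mul_sub, mul_smul_comm, mul_one]
    rw [mul_add, mul_smul_comm, mul_one, add_smul]
    abel
  rw [e1, e2, e3, ← mul_assoc y (up x r ε), ← smul_mul_assoc, ← neg_mul, ← add_mul,
    e6, mul_assoc, Dp, ← hm, ← hiu, ← hy]
open intervalIntegral MeasureTheory in
lemma continuous_mp1 (x : A) : Continuous fun q : ℝ × ℝ => mp x q.1 := by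
  unfold mp
  exact continuous_const.add (continuous_fst.smul continuous_const)

lemma continuous_up2 (x : A) : Continuous fun q : ℝ × ℝ => up x q.1 q.2 := by
  unfold up
  exact ((continuous_mp1 x).mul (continuous_mp1 x)).add
    ((continuous_snd.mul continuous_snd).smul continuous_const)

lemma contOn_inv_up {x : A} (hs : ∀ z ∈ spectrum ℂ x, 0 < z.re) :
    ContinuousOn (fun q : ℝ × ℝ => Ring.inverse (up x q.1 q.2))
      (Set.Icc (0:ℝ) 1 ×ˢ (Set.univ : Set ℝ)) := by
  intro q hq
  rw [Set.mem_prod] at hq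
  obtain ⟨U, hU⟩ := up_unit hs hq.1.1 hq.1.2 q.2
  have hc : ContinuousAt Ring.inverse (up x q.1 q.2) := by
    rw [← hU]; exact NormedRing.inverse_continuousAt U
  have h2 : ContinuousAt (Ring.inverse ∘ fun q : ℝ × ℝ => up x q.1 q.2) q :=
    ContinuousAt.comp hc (continuous_up2 x).continuousAt
  exact h2.continuousWithinAt

lemma contOn_Dp {x : A} (hs : ∀ z ∈ spectrum ℂ x, 0 < z.re) :
    ContinuousOn (fun q : ℝ × ℝ => Dp x q.1 q.2)
      (Set.Icc (0:ℝ) 1 ×ˢ (Set.univ : Set ℝ)) := by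
  unfold Dp
  have h1 : Continuous fun q : ℝ × ℝ => (q.2 * q.2) • (1:A) - mp x q.1 * mp x q.1 :=
    ((continuous_snd.mul continuous_snd).smul continuous_const).sub
      ((continuous_mp1 x).mul (continuous_mp1 x))
  exact continuousOn_const.mul (h1.continuousOn.mul
    ((contOn_inv_up hs).mul (contOn_inv_up hs)))

open intervalIntegral in
lemma contOn_Dp_r {x : A} (hs : ∀ z ∈ spectrum ℂ x, 0 < z.re) (ε : ℝ) :
    ContinuousOn (fun r : ℝ => Dp x r ε) (Set.Icc (0:ℝ) 1) := by
  have hmap : Set.MapsTo (fun r : ℝ => (r, ε)) (Set.Icc (0:ℝ) 1)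
      (Set.Icc (0:ℝ) 1 ×ˢ (Set.univ : Set ℝ)) := by
    intro r hr; exact Set.mem_prod.mpr ⟨hr, Set.mem_univ _⟩
  exact (contOn_Dp hs).comp
    (Continuous.continuousOn (continuous_id.prodMk continuous_const)) hmap

lemma contOn_Dp_eps {x : A} (hs : ∀ z ∈ spectrum ℂ x, 0 < z.re)
    {r : ℝ} (hr0 : 0 ≤ r) (hr1 : r ≤ 1) (s : Set ℝ) :
    ContinuousOn (fun ε : ℝ => Dp x r ε) s := by
  have hmap : Set.MapsTo (fun ε : ℝ => (r, ε)) s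
      (Set.Icc (0:ℝ) 1 ×ˢ (Set.univ : Set ℝ)) := by
    intro ε _; exact Set.mem_prod.mpr ⟨⟨hr0, hr1⟩, Set.mem_univ _⟩
  exact (contOn_Dp hs).comp
    (Continuous.continuousOn (continuous_const.prodMk continuous_id)) hmap

lemma integral_Dp_r {x : A} (hs : ∀ z ∈ spectrum ℂ x, 0 < z.re) (ε : ℝ) :
    ∫ r in (0:ℝ)..1, Dp x r ε
      = mp x 1 * Ring.inverse (up x 1 ε) - mp x 0 * Ring.inverse (up x 0 ε) := by
  refine intervalIntegral.integral_eq_sub_of_hasDerivAt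
    (f := fun r : ℝ => mp x r * Ring.inverse (up x r ε))
    (f' := fun r : ℝ => Dp x r ε) ?_ ?_
  · intro r hr
    rw [Set.uIcc_of_le zero_le_one] at hr
    exact hasDerivAt_r hs hr.1 hr.2 ε
  · apply ContinuousOn.intervalIntegrable
    rw [Set.uIcc_of_le zero_le_one]
    exact contOn_Dp_r hs ε

lemma integral_Dp_eps {x : A} (hs : ∀ z ∈ spectrum ℂ x, 0 < z.re)
    {r : ℝ} (hr0 : 0 ≤ r) (hr1 : r ≤ 1) (E : ℝ) :
    ∫ ε in (0:ℝ)..E, Dp x r ε = (-E) • ((x - 1) * Ring.inverse (up x r E)) := by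
  have h := intervalIntegral.integral_eq_sub_of_hasDerivAt
    (f := fun η : ℝ => (-η) • ((x - 1) * Ring.inverse (up x r η)))
    (f' := fun η : ℝ => Dp x r η) (a := (0:ℝ)) (b := E)
    (fun ε _ => hasDerivAt_eps hs hr0 hr1 ε)
    ((contOn_Dp_eps hs hr0 hr1 _).intervalIntegrable)
  rw [h]
  simp

open MeasureTheory in
lemma swap_Dp {x : A} (hs : ∀ z ∈ spectrum ℂ x, 0 < z.re) {E : ℝ} (hE : 0 ≤ E) :
    ∫ ε in (0:ℝ)..E, (∫ r in (0:ℝ)..1, Dp x r ε)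
      = ∫ r in (0:ℝ)..1, (∫ ε in (0:ℝ)..E, Dp x r ε) := by
  rw [intervalIntegral.integral_of_le hE, intervalIntegral.integral_of_le zero_le_one]
  simp_rw [intervalIntegral.integral_of_le hE, intervalIntegral.integral_of_le zero_le_one]
  apply MeasureTheory.integral_integral_swap
  rw [Function.uncurry_def]
  have hcont : ContinuousOn (fun z : ℝ × ℝ => Dp x z.2 z.1)
      (Set.Icc (0:ℝ) E ×ˢ Set.Icc (0:ℝ) 1) := by
    have hmap : Set.MapsTo (fun z : ℝ × ℝ => (z.2, z.1))
        (Set.Icc (0:ℝ) E ×ˢ Set.Icc (0:ℝ) 1)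
        (Set.Icc (0:ℝ) 1 ×ˢ (Set.univ : Set ℝ)) := by
      intro z hz
      rw [Set.mem_prod] at hz ⊢
      exact ⟨hz.2, Set.mem_univ _⟩
    exact (contOn_Dp hs).comp continuous_swap.continuousOn hmap
  have hint : IntegrableOn (fun z : ℝ × ℝ => Dp x z.2 z.1)
      (Set.Icc (0:ℝ) E ×ˢ Set.Icc (0:ℝ) 1) (volume.prod volume) :=
    hcont.integrableOn_compact (isCompact_Icc.prod isCompact_Icc)
  have hsub : (Set.Ioc (0:ℝ) E ×ˢ Set.Ioc (0:ℝ) 1) ⊆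
      (Set.Icc (0:ℝ) E ×ˢ Set.Icc (0:ℝ) 1) :=
    Set.prod_mono Set.Ioc_subset_Icc_self Set.Ioc_subset_Icc_self
  rw [Measure.prod_restrict]
  exact hint.mono_set hsub

lemma mp_one (x : A) : mp x 1 = x := by unfold mp; simp

lemma mp_zero (x : A) : mp x 0 = 1 := by unfold mp; simp

lemma up_zero (x : A) (ε : ℝ) : up x 0 ε = (1 + ε*ε) • (1:A) := by
  unfold up; rw [mp_zero, one_mul, add_smul, one_smul]

lemma ring_inverse_smul_one {c : ℝ} (hc : c ≠ 0) :
    Ring.inverse (c • (1:A)) = c⁻¹ • (1:A) := by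
  have h1 : (c • (1:A)) * (c⁻¹ • (1:A)) = 1 := by
    rw [smul_mul_assoc, mul_smul_comm, smul_smul, mul_one, mul_inv_cancel₀ hc, one_smul]
  have h2 : (c⁻¹ • (1:A)) * (c • (1:A)) = 1 := by
    rw [smul_mul_assoc, mul_smul_comm, smul_smul, mul_one, inv_mul_cancel₀ hc, one_smul]
  have : Ring.inverse ((⟨c • (1:A), c⁻¹ • (1:A), h1, h2⟩ : Aˣ) : A)
      = c⁻¹ • (1:A) := Ring.inverse_unit _
  exact this

lemma contOn_inv_up_eps {x : A} (hs : ∀ z ∈ spectrum ℂ x, 0 < z.re)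
    {r : ℝ} (hr0 : 0 ≤ r) (hr1 : r ≤ 1) (t : Set ℝ) :
    ContinuousOn (fun ε : ℝ => Ring.inverse (up x r ε)) t := by
  have hmap : Set.MapsTo (fun ε : ℝ => (r, ε)) t
      (Set.Icc (0:ℝ) 1 ×ˢ (Set.univ : Set ℝ)) := by
    intro ε _; exact Set.mem_prod.mpr ⟨⟨hr0, hr1⟩, Set.mem_univ _⟩
  exact (contOn_inv_up hs).comp
    (Continuous.continuousOn (continuous_const.prodMk continuous_id)) hmap

lemma inv_up_norm_bound {x : A} (hs : ∀ z ∈ spectrum ℂ x, 0 < z.re)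
    {r : ℝ} (hr0 : 0 ≤ r) (hr1 : r ≤ 1) {E : ℝ}
    (hE : (‖(1:A)‖ + ‖x - 1‖)^2 < E * E) :
    ‖Ring.inverse (up x r E)‖ ≤ ‖(1:A)‖ / (E*E - (‖(1:A)‖ + ‖x - 1‖)^2) := by
  set c0 : ℝ := ‖(1:A)‖ + ‖x - 1‖ with hc0def
  have hc0 : 0 ≤ c0 := by positivity
  set iu := Ring.inverse (up x r E) with hiu
  have hUnit := up_unit hs hr0 hr1 E
  have hinv : up x r E * iu = 1 := Ring.mul_inverse_cancel _ hUnit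
  have hrel : (E*E) • iu = 1 - mp x r * mp x r * iu := by
    have h0 : (mp x r * mp x r) * iu + ((E*E) • (1:A)) * iu = 1 := by
      rw [← add_mul, ← up]; exact hinv
    rw [smul_mul_assoc, one_mul] at h0
    exact eq_sub_of_add_eq' h0
  have hm : ‖mp x r‖ ≤ c0 := by
    unfold mp
    calc ‖1 + r • (x - 1)‖ ≤ ‖(1:A)‖ + ‖r • (x - 1)‖ := norm_add_le _ _
      _ = ‖(1:A)‖ + |r| * ‖x - 1‖ := by rw [norm_smul, Real.norm_eq_abs]
      _ ≤ c0 := by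
          rw [abs_of_nonneg hr0, hc0def]
          nlinarith [norm_nonneg (x - 1)]
  have hEE : 0 < E*E - c0^2 := by linarith
  have key : (E*E) * ‖iu‖ ≤ ‖(1:A)‖ + c0^2 * ‖iu‖ := by
    have h1 : ‖(E*E) • iu‖ = (E*E) * ‖iu‖ := by
      rw [norm_smul, Real.norm_eq_abs, abs_of_nonneg (by nlinarith)]
    calc (E*E) * ‖iu‖ = ‖(E*E) • iu‖ := h1.symm
      _ = ‖1 - mp x r * mp x r * iu‖ := by rw [hrel]
      _ ≤ ‖(1:A)‖ + ‖mp x r * mp x r * iu‖ := norm_sub_le _ _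
      _ ≤ ‖(1:A)‖ + c0^2 * ‖iu‖ := by
          have hmm : ‖mp x r * mp x r * iu‖ ≤ c0^2 * ‖iu‖ := by
            calc ‖mp x r * mp x r * iu‖
                ≤ ‖mp x r * mp x r‖ * ‖iu‖ := norm_mul_le _ _
              _ ≤ (‖mp x r‖ * ‖mp x r‖) * ‖iu‖ :=
                  mul_le_mul_of_nonneg_right (norm_mul_le _ _) (norm_nonneg _)
              _ ≤ c0^2 * ‖iu‖ := by
                  have h1 : ‖mp x r‖ * ‖mp x r‖ ≤ c0 * c0 :=
                    mul_le_mul hm hm (norm_nonneg _) hc0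
                  have h2 := mul_le_mul_of_nonneg_right h1 (norm_nonneg iu)
                  rw [pow_two]
                  exact h2
          linarith
  rw [le_div_iff₀ hEE]
  nlinarith [norm_nonneg iu]

open Filter Topology intervalIntegral Real in
lemma key_tendsto (s : Aˣ) (hs : ∀ z ∈ spectrum ℂ (s:A), 0 < z.re) :
    Filter.Tendsto (fun E : ℝ => ∫ ε in (0:ℝ)..E, Ring.inverse ((s:A) * (s:A) + (ε*ε) • (1:A)))
      Filter.atTop (𝓝 ((π/2 : ℝ) • ((s⁻¹ : Aˣ) : A))) := by
  set x := ((s:Aˣ) : A) with hx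
  have hfun : (fun E : ℝ => ∫ ε in (0:ℝ)..E, Ring.inverse (x * x + (ε*ε) • (1:A)))
      = fun E : ℝ => ∫ ε in (0:ℝ)..E, Ring.inverse (up x 1 ε) := by
    funext E
    congr 1
    funext ε
    rw [up, mp_one]
  rw [hfun]
  set J := fun E : ℝ => ∫ ε in (0:ℝ)..E, Ring.inverse (up x 1 ε) with hJ
  set c0 : ℝ := ‖(1:A)‖ + ‖x - 1‖ with hc0def
  have hc0 : 0 ≤ c0 := by positivity
  set R := fun E : ℝ => ∫ r in (0:ℝ)..1, (-E) • ((x - 1) * Ring.inverse (up x r E)) with hR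
  have hIntInv : ∀ E : ℝ, IntervalIntegrable (fun ε => Ring.inverse (up x 1 ε)) MeasureTheory.volume 0 E :=
    fun E => (contOn_inv_up_eps hs zero_le_one le_rfl _).intervalIntegrable
  have hmain : ∀ E : ℝ, 0 ≤ E → x * J E = Real.arctan E • (1:A) + R E := by
    intro E hE
    have hPsi1 : ∫ ε in (0:ℝ)..E, mp x 1 * Ring.inverse (up x 1 ε) = x * J E := by
      have := (ContinuousLinearMap.mul ℝ A x).intervalIntegral_comp_comm (hIntInv E)
      simpa [mp_one] using this
    have hPsi0 : ∫ ε in (0:ℝ)..E, mp x 0 * Ring.inverse (up x 0 ε)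
        = Real.arctan E • (1:A) := by
      have hfn : (fun ε : ℝ => mp x 0 * Ring.inverse (up x 0 ε))
          = fun ε : ℝ => (1/(1+ε^2)) • (1:A) := by
        funext ε
        have hpos : (0:ℝ) < 1 + ε*ε := by nlinarith [mul_self_nonneg ε]
        rw [mp_zero, one_mul, up_zero, ring_inverse_smul_one (ne_of_gt hpos), one_div, sq]
      rw [hfn, intervalIntegral.integral_smul_const, integral_one_div_one_add_sq,
        Real.arctan_zero, sub_zero]
    have hint1 : IntervalIntegrable (fun ε => mp x 1 * Ring.inverse (up x 1 ε))
        MeasureTheory.volume 0 E :=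
      (continuousOn_const.mul (contOn_inv_up_eps hs zero_le_one le_rfl _)).intervalIntegrable
    have hint0 : IntervalIntegrable (fun ε => mp x 0 * Ring.inverse (up x 0 ε))
        MeasureTheory.volume 0 E :=
      (continuousOn_const.mul (contOn_inv_up_eps hs le_rfl zero_le_one _)).intervalIntegrable
    have hsub : ∫ ε in (0:ℝ)..E,
        (mp x 1 * Ring.inverse (up x 1 ε) - mp x 0 * Ring.inverse (up x 0 ε))
        = x * J E - Real.arctan E • (1:A) := by
      rw [intervalIntegral.integral_sub hint1 hint0, hPsi1, hPsi0]
    have hDpform : ∫ ε in (0:ℝ)..E,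
        (mp x 1 * Ring.inverse (up x 1 ε) - mp x 0 * Ring.inverse (up x 0 ε))
        = ∫ ε in (0:ℝ)..E, (∫ r in (0:ℝ)..1, Dp x r ε) := by
      congr 1
      funext ε
      rw [integral_Dp_r hs ε]
    have hswap := swap_Dp hs hE
    have hlast : ∫ r in (0:ℝ)..1, (∫ ε in (0:ℝ)..E, Dp x r ε) = R E := by
      apply intervalIntegral.integral_congr
      intro r hr
      rw [Set.uIcc_of_le zero_le_one] at hr
      exact integral_Dp_eps hs hr.1 hr.2 E
    have : x * J E - Real.arctan E • (1:A) = R E := by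
      rw [← hsub, hDpform, hswap, hlast]
    linear_combination (norm := abel) this
  -- norm bound on R
  have hRbound : ∀ E : ℝ, 2*c0 + 1 ≤ E →
      ‖R E‖ ≤ (2 * (‖x - 1‖ * ‖(1:A)‖)) / E := by
    intro E hE
    have hE1 : (1:ℝ) ≤ E := by linarith
    have hEpos : (0:ℝ) < E := by linarith
    have hc0E : c0^2 < E*E := by nlinarith
    have hEE : 0 < E*E - c0^2 := by linarith
    have hhalf : E*E - c0^2 ≥ E*E/2 := by nlinarith
    have hb : ∀ r ∈ Set.uIoc (0:ℝ) 1,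
        ‖(-E) • ((x - 1) * Ring.inverse (up x r E))‖
          ≤ E * (‖x - 1‖ * (‖(1:A)‖ / (E*E - c0^2))) := by
      intro r hr
      rw [Set.uIoc_of_le zero_le_one] at hr
      have hbnd := inv_up_norm_bound hs (le_of_lt hr.1) hr.2 (E := E) (by rw [← hc0def]; nlinarith)
      rw [norm_smul, Real.norm_eq_abs, abs_neg, abs_of_nonneg (le_of_lt hEpos)]
      have h2 := norm_mul_le (x - 1) (Ring.inverse (up x r E))
      have h3 : ‖(x-1) * Ring.inverse (up x r E)‖ ≤ ‖x - 1‖ * (‖(1:A)‖ / (E*E - c0^2)) := by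
        calc ‖(x-1) * Ring.inverse (up x r E)‖ ≤ ‖x-1‖ * ‖Ring.inverse (up x r E)‖ := h2
          _ ≤ ‖x - 1‖ * (‖(1:A)‖ / (E*E - c0^2)) := by
              apply mul_le_mul_of_nonneg_left _ (norm_nonneg _)
              rw [hc0def]
              exact hbnd
      exact mul_le_mul_of_nonneg_left h3 (le_of_lt hEpos)
    have hnorm := intervalIntegral.norm_integral_le_of_norm_le_const hb
    have hsimp : E * (‖x - 1‖ * (‖(1:A)‖ / (E*E - c0^2))) * |(1:ℝ) - 0|
        = E * ‖x - 1‖ * ‖(1:A)‖ / (E*E - c0^2) := by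
      rw [abs_of_nonneg (by norm_num : (0:ℝ) ≤ (1:ℝ) - 0)]
      ring
    have hle : E * ‖x - 1‖ * ‖(1:A)‖ / (E*E - c0^2) ≤ 2 * (‖x - 1‖ * ‖(1:A)‖) / E := by
      rw [div_le_div_iff₀ hEE hEpos]
      calc E * ‖x - 1‖ * ‖(1:A)‖ * E = 2 * (‖x - 1‖ * ‖(1:A)‖) * (E*E/2) := by ring
        _ ≤ 2 * (‖x - 1‖ * ‖(1:A)‖) * (E*E - c0^2) := by
            apply mul_le_mul_of_nonneg_left hhalf
            positivity
    calc ‖R E‖ ≤ E * (‖x - 1‖ * (‖(1:A)‖ / (E*E - c0^2))) * |(1:ℝ) - 0| := hnorm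
      _ = E * ‖x - 1‖ * ‖(1:A)‖ / (E*E - c0^2) := hsimp
      _ ≤ 2 * (‖x - 1‖ * ‖(1:A)‖) / E := hle
  have hR0 : Filter.Tendsto R atTop (𝓝 (0:A)) := by
    apply squeeze_zero_norm' ((eventually_ge_atTop (2*c0+1)).mono
      (fun E hE => hRbound E hE))
    exact tendsto_const_nhds.div_atTop tendsto_id
  have hXJ : Filter.Tendsto (fun E => x * J E) atTop (𝓝 ((π/2:ℝ) • (1:A))) := by
    have harc : Filter.Tendsto (fun E : ℝ => Real.arctan E • (1:A)) atTop
        (𝓝 ((π/2:ℝ) • (1:A))) :=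
      (tendsto_nhds_of_tendsto_nhdsWithin Real.tendsto_arctan_atTop).smul_const (1:A)
    have hsum := harc.add hR0
    rw [add_zero] at hsum
    apply hsum.congr'
    filter_upwards [eventually_ge_atTop (0:ℝ)] with E hE
    exact (hmain E hE).symm
  have hJt : Filter.Tendsto J atTop (𝓝 (((s⁻¹:Aˣ):A) * ((π/2:ℝ) • (1:A)))) := by
    have hcont : Continuous fun a : A => ((s⁻¹:Aˣ):A) * a := continuous_const.mul continuous_id
    have h2 := (hcont.tendsto _).comp hXJ
    apply h2.congr
    intro E
    show ((s⁻¹:Aˣ):A) * (x * J E) = J E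
    rw [← mul_assoc]
    have : ((s⁻¹:Aˣ):A) * x = 1 := Units.inv_mul s
    rw [this, one_mul]
  have hfin : ((s⁻¹:Aˣ):A) * ((π/2:ℝ) • (1:A)) = (π/2:ℝ) • ((s⁻¹:Aˣ):A) := by
    rw [mul_smul_comm, mul_one]
  rw [hfin] at hJt
  exact hJt

lemma sqrt_unique (s t : Aˣ) (hs : ∀ z ∈ spectrum ℂ (s:A), 0 < z.re)
    (ht : ∀ z ∈ spectrum ℂ (t:A), 0 < z.re)
    (hsq : (s:A) * (s:A) = (t:A) * (t:A)) : (s:A) = (t:A) := by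
  have h1 := key_tendsto s hs
  have h2 := key_tendsto t ht
  rw [hsq] at h1
  have heq := tendsto_nhds_unique h1 h2
  have hne : (π/2 : ℝ) ≠ 0 := by positivity
  have hinv : ((s⁻¹:Aˣ):A) = ((t⁻¹:Aˣ):A) := by
    have h3 := congrArg (fun z : A => (π/2 : ℝ)⁻¹ • z) heq
    simp only [smul_smul, inv_mul_cancel₀ hne, one_smul] at h3
    exact h3
  have hu : s⁻¹ = t⁻¹ := Units.ext hinv
  have : s = t := by rw [← inv_inv s, hu, inv_inv]
  rw [this]



lemma pos_spec_re {s : Aˣ} (hpos : IsPositiveEl ((s : Aˣ) : A)) :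
    ∀ z ∈ spectrum ℂ ((s : Aˣ) : A), 0 < z.re := by
  intro z hz
  obtain ⟨xx, hxx, rfl⟩ := hpos.2 hz
  have h0 : (0:ℂ) ∉ spectrum ℂ ((s : Aˣ) : A) :=
    spectrum.zero_notMem ℂ s.isUnit
  have hne : (Complex.ofReal xx) ≠ 0 := fun h => h0 (h ▸ hz)
  have hxx0 : xx ≠ 0 := by exact_mod_cast hne
  simp only [Complex.ofReal_re]
  exact lt_of_le_of_ne hxx (Ne.symm hxx0)

lemma exp_pi_idem {p : A} (hp : p * p = p) :
    NormedSpace.exp ((Complex.I * ((π : ℝ) : ℂ)) • p) = 1 - 2 * p := by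
  rw [exp_smul_idem _ hp, mul_comm Complex.I, Complex.exp_pi_mul_I]
  have h2 : ((-1 : ℂ) - 1) • p = -(2 * p) := by
    have : ((-1 : ℂ) - 1) = -2 := by norm_num
    rw [this]
    have h3 : ((-2 : ℂ)) • p = -((2:ℂ) • p) := by rw [neg_smul]
    rw [h3, two_smul, two_mul]
  rw [h2, sub_eq_add_neg]

lemma herm_wt_pair {w p q d : A} (hp : IsHermitianWt w p) (hq : IsHermitianWt w q)
    (hpp : p * p = p) (hqq : q * q = q)
    (hxy : (1 - 2*p) * (1 - 2*q) = 1 + d) (hdd : d * d = 0) : d = 0 := by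
  obtain ⟨s1, hpos_p, hsq_p, hn_p⟩ := hp
  obtain ⟨s2, hpos_q, hsq_q, hn_q⟩ := hq
  have heq : ((s1 : Aˣ) : A) = ((s2 : Aˣ) : A) := by
    apply sqrt_unique s1 s2 (pos_spec_re hpos_p) (pos_spec_re hpos_q)
    rw [← pow_two, ← pow_two, hsq_p, hsq_q]
  have hsu : s1 = s2 := Units.ext heq
  subst hsu
  have hx : ‖(s1 : A) * (1 - 2*p) * ((s1⁻¹ : Aˣ) : A)‖ = 1 := by
    have := hn_p π
    rwa [exp_pi_idem hpp] at this
  have hy : ‖(s1 : A) * (1 - 2*q) * ((s1⁻¹ : Aˣ) : A)‖ = 1 := by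
    have := hn_q π
    rwa [exp_pi_idem hqq] at this
  exact wt_cancel hx hy hxy hdd

lemma two_mul_cancel {x y : A} (h : 2 * x = 2 * y) : x = y := by
  have h1 : (2:A) = (2:ℝ) • (1:A) := by
    rw [← Algebra.algebraMap_eq_smul_one]
    exact (map_ofNat (algebraMap ℝ A) 2).symm
  have h2 : (2:ℝ) • x = (2:ℝ) • y := by
    calc (2:ℝ) • x = ((2:ℝ) • (1:A)) * x := by rw [smul_mul_assoc, one_mul]
      _ = 2 * x := by rw [← h1]
      _ = 2 * y := h
      _ = ((2:ℝ) • (1:A)) * y := by rw [h1]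
      _ = (2:ℝ) • y := by rw [smul_mul_assoc, one_mul]
  have := congrArg (fun z : A => (2:ℝ)⁻¹ • z) h2
  simpa [smul_smul] using this

lemma wmpi_products {e f a b ad : A} (hb : IsWMPI e f a b) (had : IsWMPI e f a ad) :
    a * b = a * ad ∧ b * a = ad * a := by
  obtain ⟨hb1, hb2, hbe, hbf⟩ := hb
  obtain ⟨h1, h2, he, hf⟩ := had
  constructor
  · -- e side : p := a*ad, q := a*b
    have hpp : (a*ad)*(a*ad) = a*ad := by rw [← mul_assoc, h1]
    have hqq : (a*b)*(a*b) = a*b := by rw [← mul_assoc, hb1]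
    have hpq : (a*ad)*(a*b) = a*b := by rw [← mul_assoc, h1]
    have hqp : (a*b)*(a*ad) = a*ad := by rw [← mul_assoc, hb1]
    set d : A := 2*(a*b) - 2*(a*ad) with hd
    have hxy : (1 - 2*(a*ad)) * (1 - 2*(a*b)) = 1 + d := by
      have expand : (1 - 2*(a*ad)) * (1 - 2*(a*b))
          = 1 - 2*(a*b) - 2*(a*ad) + 4*((a*ad)*(a*b)) := by noncomm_ring
      rw [expand, hpq, hd]
      noncomm_ring
    have hdd : d * d = 0 := by
      have expandd : d * d = 4*((a*b)*(a*b)) - 4*((a*b)*(a*ad))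
          - 4*((a*ad)*(a*b)) + 4*((a*ad)*(a*ad)) := by rw [hd]; noncomm_ring
      rw [expandd, hqq, hqp, hpq, hpp]
      noncomm_ring
    have hd0 : d = 0 := herm_wt_pair he hbe hpp hqq hxy hdd
    rw [hd] at hd0
    exact two_mul_cancel (sub_eq_zero.mp hd0)
  · -- f side : p := b*a, q := ad*a
    have hpp : (b*a)*(b*a) = b*a := by rw [mul_assoc, ← mul_assoc a b a, hb1]
    have hqq : (ad*a)*(ad*a) = ad*a := by rw [mul_assoc, ← mul_assoc a ad a, h1]
    have hpq : (b*a)*(ad*a) = b*a := by rw [mul_assoc, ← mul_assoc a ad a, h1]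
    have hqp : (ad*a)*(b*a) = ad*a := by rw [mul_assoc, ← mul_assoc a b a, hb1]
    set d : A := 2*(b*a) - 2*(ad*a) with hd
    have hxy : (1 - 2*(b*a)) * (1 - 2*(ad*a)) = 1 + d := by
      have expand : (1 - 2*(b*a)) * (1 - 2*(ad*a))
          = 1 - 2*(ad*a) - 2*(b*a) + 4*((b*a)*(ad*a)) := by noncomm_ring
      rw [expand, hpq, hd]
      noncomm_ring
    have hdd : d * d = 0 := by
      have expandd : d * d = 4*((b*a)*(b*a)) - 4*((b*a)*(ad*a))
          - 4*((ad*a)*(b*a)) + 4*((ad*a)*(ad*a)) := by rw [hd]; noncomm_ring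
      rw [expandd, hpp, hpq, hqp, hqq]
      noncomm_ring
    have hd0 : d = 0 := herm_wt_pair hbf hf hpp hqq hxy hdd
    rw [hd] at hd0
    exact two_mul_cancel (sub_eq_zero.mp hd0)

end WEPaux

/-- `a` is weighted EP with weights `e` and `f` iff there exist
`u, v, u₁, v₁ ∈ A` with `a^†_{e,f} a = u a^†_{e,f} = a v` and
`a a^†_{e,f} = a^†_{e,f} u₁ = v₁ a`, iff there exist `u₂, v₂, u₃, v₃ ∈ A`
with `a^†_{e,f} a = u₂ a^†_{e,f}`, `a a^†_{e,f} = a^†_{e,f} u₃` and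
`a^†_{e,f} = a v₂ = v₃ a`. -/
theorem weighted_EP_iff_factorization_uv
    {A : Type*} [NormedRing A] [NormedAlgebra ℂ A] [CompleteSpace A]
    (e f a : A)
    (he : IsPositiveEl e ∧ IsUnit e) (hf : IsPositiveEl f ∧ IsUnit f)
    (ad : A) (had : IsWMPI e f a ad) :
    (IsWEP e f a ↔
      ∃ u v u₁ v₁ : A, ad * a = u * ad ∧ ad * a = a * v ∧
        a * ad = ad * u₁ ∧ a * ad = v₁ * a) ∧
    (IsWEP e f a ↔
      ∃ u₂ v₂ u₃ v₃ : A, ad * a = u₂ * ad ∧ a * ad = ad * u₃ ∧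
        ad = a * v₂ ∧ ad = v₃ * a) := by
  have h1 : a * ad * a = a := had.1
  have h2 : ad * a * ad = ad := had.2.1
  have comm_of_factor : ∀ v v₁ : A, ad * a = a * v → a * ad = v₁ * a → a * ad = ad * a := by
    intro v v₁ hv hv₁
    have e1 : ad * a = (a * ad) * (ad * a) := by
      calc ad * a = a * v := hv
        _ = (a * ad * a) * v := by rw [h1]
        _ = (a * ad) * (a * v) := by rw [mul_assoc]
        _ = (a * ad) * (ad * a) := by rw [← hv]
    have e2 : a * ad = (a * ad) * (ad * a) := by
      calc a * ad = v₁ * a := hv₁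
        _ = v₁ * (a * ad * a) := by rw [h1]
        _ = (v₁ * (a * ad)) * a := by rw [← mul_assoc]
        _ = ((v₁ * a) * ad) * a := by rw [← mul_assoc]
        _ = ((a * ad) * ad) * a := by rw [← hv₁]
        _ = (a * ad) * (ad * a) := by rw [mul_assoc]
    exact e2.trans e1.symm
  have hC_of_WEP : IsWEP e f a → a * ad = ad * a := by
    rintro ⟨b, hb, hcomm⟩
    obtain ⟨hab, hba⟩ := WEPaux.wmpi_products hb had
    calc a * ad = a * b := hab.symm
      _ = b * a := hcomm
      _ = ad * a := hba
  have hWEP_of_C : a * ad = ad * a → IsWEP e f a := fun hC => ⟨ad, had, hC⟩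
  constructor
  · constructor
    · intro h
      have hC := hC_of_WEP h
      exact ⟨a, ad, a, ad, hC.symm, hC.symm, hC, hC⟩
    · rintro ⟨u, v, u₁, v₁, _, hv, _, hv₁⟩
      exact hWEP_of_C (comm_of_factor v v₁ hv hv₁)
  · constructor
    · intro h
      have hC := hC_of_WEP h
      refine ⟨a, ad * ad, a, ad * ad, hC.symm, hC, ?_, ?_⟩
      · have : a * (ad * ad) = ad := by rw [← mul_assoc, hC, h2]
        exact this.symm
      · have : (ad * ad) * a = ad := by rw [mul_assoc, ← hC, ← mul_assoc, h2]
        exact this.symm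
    · rintro ⟨u₂, v₂, u₃, v₃, _, _, hv₂, hv₃⟩
      have hv : ad * a = a * (v₂ * a) := by rw [← mul_assoc, ← hv₂]
      have hv₁ : a * ad = (a * v₃) * a := by rw [mul_assoc, ← hv₃]
      exact hWEP_of_C (comm_of_factor (v₂ * a) (a * v₃) hv hv₁)
end
end

section
/- Let A be a complex unital Banach algebra, let e, f ∈ A be invertible positive elements, and let a ∈ A be such that a^†_{e,f} exists. Then the following are equivalent: (i) a is weighted EP with weights e and f; (ii) there exist invertible x, y ∈ A such that a^†_{e,f} a = x a a^†_{e,f} = a a^†_{e,f} y; (iii) there exist x₁, y₁ ∈ A with x₁ z = 0 implying z = 0 and y₁ A = A, such that a^†_{e,f} a = x₁ a a^†_{e,f} = a a^†_{e,f} y₁; (iv) there exist x₂, y₂ ∈ A with x₂ z = 0 implying z = 0, such that a^†_{e,f} a = x₂ a a^†_{e,f} = a a^†_{e,f} y₂; (v) there exist z₁, z₂ ∈ A such that a^†_{e,f} a = a z₁ a^†_{e,f} and a a^†_{e,f} = a^†_{e,f} z₂ a. -/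
/-!
Common definitions: hermitian and positive elements of a complex unital Banach
algebra, hermitian elements with respect to the equivalent norm induced by an
invertible positive element (weight), and the weighted Moore–Penrose inverse,
both for Banach algebra elements and for bounded linear operators between
Banach spaces.
-/

noncomputable section

open scoped Topology Nat ENNReal NNReal Real
open Filter

section Aux
variable {A : Type*} [NormedRing A] [NormedAlgebra ℂ A] [CompleteSpace A]


lemma exp_smul_idem (p : A) (hp : p * p = p) (c : ℂ) :
    NormedSpace.exp (c • p) = 1 + (Complex.exp c - 1) • p := by
  have hpn : ∀ n : ℕ, p ^ (n + 1) = p := by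
    intro n; induction n with
    | zero => simp
    | succ k ih => rw [pow_succ, ih, hp]
  have hsA : Summable (fun n : ℕ => (↑(n !) : ℂ)⁻¹ • (c • p) ^ n) :=
    NormedSpace.expSeries_summable' (𝕂 := ℂ) (c • p)
  have hsC : Summable (fun n : ℕ => (↑(n !) : ℂ)⁻¹ • c ^ n) :=
    NormedSpace.expSeries_summable' (𝕂 := ℂ) c
  have hsC' : Summable (fun n : ℕ => (↑((n+1) !) : ℂ)⁻¹ * c ^ (n+1)) := by
    have := (summable_nat_add_iff 1).mpr hsC
    simpa [smul_eq_mul] using this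
  have hexpC : Complex.exp c = 1 + ∑' n : ℕ, (↑((n+1) !) : ℂ)⁻¹ * c ^ (n+1) := by
    rw [Complex.exp_eq_exp_ℂ, NormedSpace.exp_eq_tsum ℂ]
    dsimp only
    rw [Summable.tsum_eq_zero_add hsC]
    simp [smul_eq_mul]
  rw [NormedSpace.exp_eq_tsum ℂ]
  dsimp only
  rw [Summable.tsum_eq_zero_add hsA]
  have hterm : ∀ n : ℕ, (↑((n+1) !) : ℂ)⁻¹ • (c • p) ^ (n+1)
      = ((↑((n+1) !) : ℂ)⁻¹ * c ^ (n+1)) • p := by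
    intro n
    rw [smul_pow, hpn, smul_smul]
  simp only [hterm]
  rw [Summable.tsum_smul_const hsC']
  rw [hexpC]
  simp


lemma sqrt_unique (s t : Aˣ)
    (hs : spectrum ℂ (s : A) ⊆ Complex.ofReal '' Set.Ici (0 : ℝ))
    (ht : spectrum ℂ (t : A) ⊆ Complex.ofReal '' Set.Ici (0 : ℝ))
    (h : (s : A) ^ 2 = (t : A) ^ 2) : (s : A) = (t : A) := by
  rcases subsingleton_or_nontrivial A with hA | hA
  · exact Subsingleton.elim _ _
  -- setup
  set c : ℝ := ‖(t : A)‖ * ‖(1 : A)‖ + 1 with hc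
  have hnorm1 : (0 : ℝ) < ‖(1 : A)‖ := by
    simpa using norm_pos_iff.mpr (one_ne_zero : (1 : A) ≠ 0)
  have hcpos : (0 : ℝ) < c := by positivity
  set δ : ℝ := (‖((t⁻¹ : Aˣ) : A)‖ * ‖(1 : A)‖)⁻¹ with hδ
  have htinv_pos : (0 : ℝ) < ‖((t⁻¹ : Aˣ) : A)‖ := by
    refine norm_pos_iff.mpr ?_
    exact (Units.ne_zero _)
  have hδpos : (0 : ℝ) < δ := by positivity
  -- spectrum of t bounds
  have ht_bounds : ∀ m : ℂ, m ∈ spectrum ℂ (t : A) →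
      ∃ r : ℝ, m = (r : ℂ) ∧ δ ≤ r ∧ r ≤ c - 1 := by
    intro m hm
    obtain ⟨r, hr0, hrm⟩ := ht hm
    refine ⟨r, hrm.symm, ?_, ?_⟩
    · -- r ≥ δ via inverse spectrum
      have hm0 : m ≠ 0 := by
        intro h0
        rw [h0] at hm
        exact (spectrum.zero_notMem_iff ℂ).mpr t.isUnit hm
      have : (↑(Units.mk0 m hm0)⁻¹ : ℂ) ∈ spectrum ℂ ((↑(t⁻¹) : A)) := by
        exact spectrum.inv_mem_iff.mp (by simpa using hm)
      have hnorm : ‖m⁻¹‖ ≤ ‖((t⁻¹ : Aˣ) : A)‖ * ‖(1 : A)‖ := by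
        simpa using spectrum.norm_le_norm_mul_of_mem this
      have hrpos : 0 < r := by
        rcases lt_or_eq_of_le (show (0:ℝ) ≤ r from hr0) with h' | h'
        · exact h'
        · exfalso; apply hm0; rw [← hrm, ← h']; simp
      rw [← hrm] at hnorm
      have : ‖((r : ℂ))⁻¹‖ = r⁻¹ := by
        rw [norm_inv, Complex.norm_real, Real.norm_of_nonneg hr0]
      rw [this] at hnorm
      rw [hδ]
      rw [← inv_inv r]
      exact inv_anti₀ (by positivity) hnorm
    · -- r ≤ c - 1
      have := spectrum.norm_le_norm_mul_of_mem hm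
      rw [← hrm] at this
      rw [Complex.norm_real, Real.norm_of_nonneg hr0] at this
      simp [hc]; linarith
  -- the unit w = s + c•1
  have hcu : IsUnit ((s : A) + (c : ℂ) • 1) := by
    have hmem : (-(c : ℝ) : ℂ) ∉ spectrum ℂ (s : A) := by
      intro hmem
      obtain ⟨r, hr0, hrm⟩ := hs hmem
      have : r = -c := by exact_mod_cast hrm
      simp only [Set.mem_Ici] at hr0
      linarith
    rw [spectrum.notMem_iff] at hmem
    have : ((algebraMap ℂ A) (-(c : ℝ) : ℂ) - (s : A)) = -((s : A) + (c : ℂ) • 1) := by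
      rw [Algebra.algebraMap_eq_smul_one]
      push_cast
      rw [neg_smul]
      abel
    rw [this] at hmem
    exact (IsUnit.neg_iff _).mp hmem
  set w : Aˣ := hcu.unit with hw
  have hwval : (w : A) = (s : A) + (c : ℂ) • 1 := hcu.unit_spec
  set z : A := (c : ℂ) • 1 - (t : A) with hzdef
  -- key relation
  have hkey : (w : A) * ((s : A) - (t : A)) = ((s : A) - (t : A)) * z := by
    rw [hwval, hzdef]
    have hss : (s : A) * (s : A) = (t : A) * (t : A) := by
      rw [← pow_two, ← pow_two, h]
    simp only [add_mul, mul_sub, sub_mul, smul_mul_assoc, mul_smul_comm, one_mul, mul_one, smul_sub]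
    rw [hss]
    abel
  set X : A := (s : A) - (t : A) with hX
  have hstep : X = ((w⁻¹ : Aˣ) : A) * X * z := by
    have := congrArg (fun y => ((w⁻¹ : Aˣ) : A) * y) hkey
    simpa [← mul_assoc, Units.inv_mul, one_mul] using this
  have hXn : ∀ n : ℕ, X = (((w⁻¹ : Aˣ) : A)) ^ n * X * z ^ n := by
    intro n; induction n with
    | zero => simp
    | succ k ih =>
      calc X = ((w⁻¹ : Aˣ) : A) * X * z := hstep
      _ = ((w⁻¹ : Aˣ) : A) * ((((w⁻¹ : Aˣ) : A)) ^ k * X * z ^ k) * z := by rw [← ih]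
      _ = (((w⁻¹ : Aˣ) : A)) ^ (k+1) * X * z ^ (k+1) := by
          rw [pow_succ' (((w⁻¹ : Aˣ) : A)), pow_succ z]
          simp only [mul_assoc]
  -- spectral radii
  have hρ1 : spectralRadius ℂ ((w⁻¹ : Aˣ) : A) ≤ ENNReal.ofReal (1 / c) := by
    rw [spectralRadius]
    refine iSup₂_le fun k hk => ?_
    have hk0 : k ≠ 0 := by
      intro h0
      rw [h0] at hk
      exact (spectrum.zero_notMem_iff ℂ).mpr (w⁻¹).isUnit hk
    have hkinv : k⁻¹ ∈ spectrum ℂ (w : A) := by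
      have := spectrum.inv_mem_iff (r := Units.mk0 k hk0) (a := w⁻¹) |>.mp (by simpa using hk)
      simpa using this
    -- shift
    have : k⁻¹ - (c : ℂ) ∈ spectrum ℂ (s : A) := by
      have hshift : spectrum ℂ (w : A) = spectrum ℂ ((algebraMap ℂ A) (c : ℂ) + (s : A)) := by
        rw [hwval, Algebra.algebraMap_eq_smul_one, add_comm]
      rw [hshift, ← spectrum.singleton_add_eq] at hkinv
      obtain ⟨α, hα, β, hβ, hαβ⟩ := Set.mem_add.mp hkinv
      rw [Set.mem_singleton_iff] at hα
      have : β = k⁻¹ - (c : ℂ) := by rw [← hαβ, hα]; ring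
      rwa [← this]
    obtain ⟨r, hr0, hrm⟩ := hs this
    have hkval : k⁻¹ = ((r + c : ℝ) : ℂ) := by
      push_cast
      rw [hrm]; ring
    have hknorm : ‖k‖ = (r + c)⁻¹ := by
      rw [← inv_inv k, norm_inv, hkval, Complex.norm_real,
        Real.norm_of_nonneg (by have := Set.mem_Ici.mp hr0; linarith)]
    have : ‖k‖ ≤ 1 / c := by
      rw [hknorm, one_div]
      exact inv_anti₀ hcpos (by linarith [Set.mem_Ici.mp hr0])
    calc (‖k‖₊ : ℝ≥0∞) = ENNReal.ofReal ‖k‖ := (ofReal_norm k).symm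
    _ ≤ ENNReal.ofReal (1 / c) := ENNReal.ofReal_le_ofReal this
  have hρ2 : spectralRadius ℂ z ≤ ENNReal.ofReal (c - δ) := by
    rw [spectralRadius]
    refine iSup₂_le fun k hk => ?_
    have hz : spectrum ℂ z = spectrum ℂ ((algebraMap ℂ A) (c : ℂ) - (t : A)) := by
      rw [hzdef, Algebra.algebraMap_eq_smul_one]
    rw [hz, ← spectrum.singleton_sub_eq] at hk
    obtain ⟨α, hα, β, hβ, hαβ⟩ := Set.mem_sub.mp hk
    rw [Set.mem_singleton_iff] at hα
    obtain ⟨r, hrm, hrδ, hrc⟩ := ht_bounds β hβ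
    have hkval : k = ((c - r : ℝ) : ℂ) := by rw [← hαβ, hα, hrm]; push_cast; ring
    have : ‖k‖ = c - r := by
      rw [hkval, Complex.norm_real, Real.norm_of_nonneg (by linarith)]
    have hkle : ‖k‖ ≤ c - δ := by rw [this]; linarith
    calc (‖k‖₊ : ℝ≥0∞) = ENNReal.ofReal ‖k‖ := (ofReal_norm k).symm
    _ ≤ ENNReal.ofReal (c - δ) := ENNReal.ofReal_le_ofReal hkle
  -- δ ≤ c - 1 via nonempty spectrum
  have hδc : δ ≤ c - 1 := by
    obtain ⟨m, hm⟩ := spectrum.nonempty (t : A)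
    obtain ⟨r, _, hrδ, hrc⟩ := ht_bounds m hm
    linarith
  -- product of spectral radii < 1
  have hprod : spectralRadius ℂ ((w⁻¹ : Aˣ) : A) * spectralRadius ℂ z < 1 := by
    calc spectralRadius ℂ ((w⁻¹ : Aˣ) : A) * spectralRadius ℂ z
        ≤ ENNReal.ofReal (1 / c) * ENNReal.ofReal (c - δ) := by
          exact mul_le_mul' hρ1 hρ2
    _ = ENNReal.ofReal ((1 / c) * (c - δ)) := by
          rw [ENNReal.ofReal_mul (by positivity)]
    _ < 1 := by
          rw [← ENNReal.ofReal_one]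
          have h1 : 0 < 1 / c := by positivity
          rw [ENNReal.ofReal_lt_ofReal_iff_of_nonneg (by nlinarith)]
          rw [one_div, inv_mul_lt_iff₀ hcpos]
          linarith
  -- Gelfand formula conclusion
  have h1 := spectrum.pow_nnnorm_pow_one_div_tendsto_nhds_spectralRadius ((w⁻¹ : Aˣ) : A)
  have h2 := spectrum.pow_nnnorm_pow_one_div_tendsto_nhds_spectralRadius z
  have hfin1 : spectralRadius ℂ ((w⁻¹ : Aˣ) : A) ≠ ⊤ :=
    (hρ1.trans_lt ENNReal.ofReal_lt_top).ne
  have hfin2 : spectralRadius ℂ z ≠ ⊤ := (hρ2.trans_lt ENNReal.ofReal_lt_top).ne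
  have hmul : Tendsto (fun n : ℕ => (‖((w⁻¹ : Aˣ) : A) ^ n‖₊ : ℝ≥0∞) ^ (1 / n : ℝ)
      * (‖z ^ n‖₊ : ℝ≥0∞) ^ (1 / n : ℝ)) atTop
      (𝓝 (spectralRadius ℂ ((w⁻¹ : Aˣ) : A) * spectralRadius ℂ z)) :=
    ENNReal.Tendsto.mul h1 (Or.inr hfin2) h2 (Or.inr hfin1)
  obtain ⟨n, hnlt, hn1⟩ :=
    ((hmul.eventually_lt_const hprod).and (eventually_ge_atTop 1)).exists
  have hexp : (0 : ℝ) < 1 / n := by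
    have : (0 : ℝ) < n := by exact_mod_cast hn1
    positivity
  have hbase : (‖((w⁻¹ : Aˣ) : A) ^ n‖₊ : ℝ≥0∞) * (‖z ^ n‖₊ : ℝ≥0∞) < 1 := by
    by_contra hge
    push_neg at hge
    have : (1 : ℝ≥0∞) ≤ ((‖((w⁻¹ : Aˣ) : A) ^ n‖₊ : ℝ≥0∞) * (‖z ^ n‖₊ : ℝ≥0∞)) ^ (1 / n : ℝ) := by
      calc (1 : ℝ≥0∞) = (1 : ℝ≥0∞) ^ (1 / n : ℝ) := (ENNReal.one_rpow _).symm
      _ ≤ _ := ENNReal.rpow_le_rpow hge hexp.le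
    rw [ENNReal.mul_rpow_of_nonneg _ _ hexp.le] at this
    exact absurd hnlt (not_lt.mpr this)
  have hq : (‖((w⁻¹ : Aˣ) : A) ^ n‖₊) * (‖z ^ n‖₊) < 1 := by
    rw [← ENNReal.coe_mul] at hbase
    exact_mod_cast hbase
  have hXle : ‖X‖₊ ≤ (‖((w⁻¹ : Aˣ) : A) ^ n‖₊ * ‖z ^ n‖₊) * ‖X‖₊ := by
    calc ‖X‖₊ = ‖(((w⁻¹ : Aˣ) : A)) ^ n * X * z ^ n‖₊ := by rw [← hXn n]
    _ ≤ ‖(((w⁻¹ : Aˣ) : A)) ^ n * X‖₊ * ‖z ^ n‖₊ := nnnorm_mul_le _ _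
    _ ≤ (‖(((w⁻¹ : Aˣ) : A)) ^ n‖₊ * ‖X‖₊) * ‖z ^ n‖₊ :=
        mul_le_mul_left (nnnorm_mul_le _ _) _
    _ = (‖(((w⁻¹ : Aˣ) : A)) ^ n‖₊ * ‖z ^ n‖₊) * ‖X‖₊ := by ring
  have hX0 : ‖X‖₊ = 0 := by
    by_contra hne
    have hpos : 0 < ‖X‖₊ := pos_iff_ne_zero.mpr hne
    have hqR : (‖((w⁻¹ : Aˣ) : A) ^ n‖₊ : ℝ) * (‖z ^ n‖₊ : ℝ) < 1 := by
      exact_mod_cast hq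
    have hXleR : (‖X‖₊ : ℝ) ≤ ((‖((w⁻¹ : Aˣ) : A) ^ n‖₊ : ℝ) * (‖z ^ n‖₊ : ℝ)) * (‖X‖₊ : ℝ) := by
      exact_mod_cast hXle
    have hposR : (0 : ℝ) < (‖X‖₊ : ℝ) := by exact_mod_cast hpos
    nlinarith
  have : X = 0 := by
    rwa [nnnorm_eq_zero] at hX0
  have := sub_eq_zero.mp (hX ▸ this)
  exact this


lemma herm_wt_idem_eq (e p q : A)
    (hp : IsHermitianWt e p) (hq : IsHermitianWt e q)
    (hpp : p * p = p) (hqq : q * q = q)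
    (hrel : (p * q = q ∧ q * p = p) ∨ (p * q = p ∧ q * p = q)) : p = q := by
  obtain ⟨s₁, hs₁pos, hs₁sq, hs₁⟩ := hp
  obtain ⟨s₂, hs₂pos, hs₂sq, hs₂⟩ := hq
  have hss : (s₁ : A) = (s₂ : A) :=
    sqrt_unique s₁ s₂ hs₁pos.2 hs₂pos.2 (by rw [hs₁sq, hs₂sq])
  have hsu : s₁ = s₂ := Units.ext hss
  subst hsu
  -- conjugation map
  set cj : A → A := fun m => (s₁ : A) * m * ((s₁⁻¹ : Aˣ) : A) with hcj
  have cj_mul : ∀ m n : A, cj m * cj n = cj (m * n) := by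
    intro m n
    simp only [hcj]
    calc (s₁ : A) * m * ↑s₁⁻¹ * ((s₁ : A) * n * ↑s₁⁻¹)
        = (s₁ : A) * m * (↑s₁⁻¹ * (s₁ : A)) * n * ↑s₁⁻¹ := by
          simp only [mul_assoc]
    _ = (s₁ : A) * (m * n) * ↑s₁⁻¹ := by
          rw [Units.inv_mul]; simp only [mul_one, mul_assoc]
  have cj_one : cj 1 = 1 := by
    simp only [hcj, mul_one, Units.mul_inv]
  have cj_pow : ∀ (m : A) (n : ℕ), 1 ≤ n → (cj m) ^ n = cj (m ^ n) := by
    intro m n hn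
    induction n with
    | zero => omega
    | succ k ih =>
      rcases Nat.eq_or_lt_of_le hn with h1 | h1
      · simp [← h1]
      · have hk : 1 ≤ k := by omega
        rw [pow_succ, ih hk, cj_mul, ← pow_succ]
  -- norm-1 elements from hermitian-wt hypothesis at t = π
  have hexp_pi : ∀ m : A, m * m = m →
      NormedSpace.exp ((Complex.I * ((π : ℝ) : ℂ)) • m) = 1 + (-2 : ℂ) • m := by
    intro m hm
    rw [exp_smul_idem m hm]
    congr 1
    have : Complex.exp (Complex.I * ((π : ℝ) : ℂ)) = -1 := by
      rw [mul_comm]; exact_mod_cast Complex.exp_pi_mul_I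
    rw [this]; norm_num
  have hP : ‖cj (1 + (-2 : ℂ) • p)‖ = 1 := by
    have := hs₁ Real.pi
    rwa [hexp_pi p hpp] at this
  have hQ : ‖cj (1 + (-2 : ℂ) • q)‖ = 1 := by
    have := hs₂ Real.pi
    rwa [hexp_pi q hqq] at this
  -- the nilpotent difference
  obtain ⟨d, hd2, hPQ, hgoal⟩ : ∃ d : A, d * d = 0 ∧
      (1 + (-2 : ℂ) • p) * (1 + (-2 : ℂ) • q) = 1 + (2 : ℂ) • d ∧ (d = 0 → p = q) := by
    rcases hrel with ⟨h1, h2⟩ | ⟨h1, h2⟩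
    · refine ⟨q - p, ?_, ?_, fun hz => (sub_eq_zero.mp hz).symm⟩
      · simp only [sub_mul, mul_sub, hpp, hqq, h1, h2]; abel
      · simp only [add_mul, mul_add, one_mul, mul_one, smul_mul_smul_comm, smul_mul_assoc,
          mul_smul_comm, h1, smul_sub]
        module
    · refine ⟨p - q, ?_, ?_, fun hz => sub_eq_zero.mp hz⟩
      · simp only [sub_mul, mul_sub, hpp, hqq, h1, h2]; abel
      · simp only [add_mul, mul_add, one_mul, mul_one, smul_mul_smul_comm, smul_mul_assoc,
          mul_smul_comm, h1, smul_sub]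
        module
  -- powers
  have hpow : ∀ n : ℕ, (1 + (2 : ℂ) • d) ^ n = 1 + ((2 * n : ℕ) : ℂ) • d := by
    intro n
    induction n with
    | zero => simp
    | succ k ih =>
      rw [pow_succ, ih]
      have : ((2 * (k+1) : ℕ) : ℂ) = ((2 * k : ℕ) : ℂ) + 2 := by push_cast; ring
      rw [this]
      simp only [add_mul, mul_add, one_mul, mul_one, smul_mul_smul_comm, smul_mul_assoc,
        mul_smul_comm, hd2, smul_zero, add_smul]
      module
  -- norm bound
  set D : A := cj d with hD
  have cj_aff : ∀ (c : ℂ) (m : A), cj (1 + c • m) = 1 + c • cj m := by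
    intro c m
    simp only [hcj, mul_add, mul_one, mul_smul_comm, add_mul, smul_mul_assoc, Units.mul_inv]
  have hDbound : ∀ n : ℕ, 1 ≤ n → ((2 * n : ℕ) : ℝ) * ‖D‖ ≤ 1 + ‖(1 : A)‖ := by
    intro n hn
    have hnorm_pow : ‖(cj (1 + (-2 : ℂ) • p) * cj (1 + (-2 : ℂ) • q)) ^ n‖ ≤ 1 := by
      calc ‖(cj (1 + (-2 : ℂ) • p) * cj (1 + (-2 : ℂ) • q)) ^ n‖
          ≤ ‖cj (1 + (-2 : ℂ) • p) * cj (1 + (-2 : ℂ) • q)‖ ^ n := norm_pow_le' _ hn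
      _ ≤ (‖cj (1 + (-2 : ℂ) • p)‖ * ‖cj (1 + (-2 : ℂ) • q)‖) ^ n :=
            pow_le_pow_left₀ (norm_nonneg _) (norm_mul_le _ _) n
      _ = 1 := by rw [hP, hQ]; norm_num
    have heq : (cj (1 + (-2 : ℂ) • p) * cj (1 + (-2 : ℂ) • q)) ^ n
        = 1 + ((2 * n : ℕ) : ℂ) • D := by
      rw [cj_mul, hPQ, cj_pow _ n hn, hpow, cj_aff]
    rw [heq] at hnorm_pow
    have h2 : ‖((2 * n : ℕ) : ℂ) • D‖ = ((2 * n : ℕ) : ℝ) * ‖D‖ := by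
      rw [norm_smul]
      congr 1
      simp
    have h3 : ‖((2 * n : ℕ) : ℂ) • D‖ ≤ ‖1 + ((2 * n : ℕ) : ℂ) • D‖ + ‖(1 : A)‖ := by
      have := norm_sub_le (1 + ((2 * n : ℕ) : ℂ) • D) 1
      simpa using this
    linarith
  have hD0 : D = 0 := by
    by_contra hne
    have hpos : 0 < ‖D‖ := norm_pos_iff.mpr hne
    obtain ⟨n, hngt⟩ := exists_nat_gt ((1 + ‖(1 : A)‖) / (2 * ‖D‖))
    have hn1 : 1 ≤ n := by
      by_contra hlt
      have : n = 0 := by omega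
      rw [this] at hngt
      have : (0 : ℝ) < (1 + ‖(1 : A)‖) / (2 * ‖D‖) := by positivity
      simp at hngt
      linarith
    have hb := hDbound n hn1
    rw [div_lt_iff₀ (by positivity)] at hngt
    push_cast at hb
    nlinarith
  have hd0 : d = 0 := by
    have hback : (↑(s₁⁻¹) : A) * D * (s₁ : A) = d := by
      simp only [hD, hcj]
      calc (↑(s₁⁻¹) : A) * ((s₁ : A) * d * ↑(s₁⁻¹)) * (s₁ : A)
          = ((↑(s₁⁻¹) : A) * (s₁ : A)) * d * ((↑(s₁⁻¹) : A) * (s₁ : A)) := by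
            simp only [mul_assoc]
      _ = d := by rw [Units.inv_mul]; simp
    rw [hD0] at hback
    simpa using hback.symm
  exact hgoal hd0

lemma wep_iff_comm (e f a ad : A) (had : IsWMPI e f a ad) :
    IsWEP e f a ↔ a * ad = ad * a := by
  obtain ⟨ha1, ha2, ha3, ha4⟩ := had
  constructor
  · rintro ⟨b, ⟨hb1, hb2, hb3, hb4⟩, hbc⟩
    -- idempotency facts
    have hpE : (a * ad) * (a * ad) = a * ad := by rw [← mul_assoc, ha1]
    have hqE : (a * b) * (a * b) = a * b := by rw [← mul_assoc, hb1]
    have hpF : (ad * a) * (ad * a) = ad * a := by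
      calc (ad * a) * (ad * a) = (ad * a * ad) * a := by simp only [mul_assoc]
      _ = ad * a := by rw [ha2]
    have hqF : (b * a) * (b * a) = b * a := by
      calc (b * a) * (b * a) = (b * a * b) * a := by simp only [mul_assoc]
      _ = b * a := by rw [hb2]
    -- weight e : a*ad = a*b
    have hE : a * ad = a * b := by
      refine herm_wt_idem_eq e (a * ad) (a * b) ha3 hb3 hpE hqE (Or.inl ⟨?_, ?_⟩)
      · rw [← mul_assoc, ha1]
      · rw [← mul_assoc, hb1]
    -- weight f : ad*a = b*a
    have hF : ad * a = b * a := by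
      refine herm_wt_idem_eq f (ad * a) (b * a) ha4 hb4 hpF hqF (Or.inr ⟨?_, ?_⟩)
      · calc (ad * a) * (b * a) = ad * (a * b * a) := by simp only [mul_assoc]
        _ = ad * a := by rw [hb1]
      · calc (b * a) * (ad * a) = b * (a * ad * a) := by simp only [mul_assoc]
        _ = b * a := by rw [ha1]
    rw [hE, hbc, ← hF]
  · intro hcomm
    exact ⟨ad, ⟨ha1, ha2, ha3, ha4⟩, hcomm⟩

end Aux

/-- `a` is weighted EP with weights `e` and `f` iff
(ii) `a^†_{e,f} a = x a a^†_{e,f} = a a^†_{e,f} y` for invertible `x, y`; iff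
(iii) the same with `x₁` left-injective and `y₁` left-surjective; iff
(iv) the same with `x₂` left-injective and arbitrary `y₂`; iff
(v) `a^†_{e,f} a = a z₁ a^†_{e,f}` and `a a^†_{e,f} = a^†_{e,f} z₂ a` for some
`z₁, z₂ ∈ A`. -/
theorem weighted_EP_iff_factorization_xy
    {A : Type*} [NormedRing A] [NormedAlgebra ℂ A] [CompleteSpace A]
    (e f a : A)
    (he : IsPositiveEl e ∧ IsUnit e) (hf : IsPositiveEl f ∧ IsUnit f)
    (ad : A) (had : IsWMPI e f a ad) :
    (IsWEP e f a ↔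
      ∃ x y : Aˣ, ad * a = (x : A) * (a * ad) ∧ ad * a = (a * ad) * (y : A)) ∧
    (IsWEP e f a ↔
      ∃ x₁ y₁ : A, (∀ z : A, x₁ * z = 0 → z = 0) ∧ (∀ w : A, ∃ z : A, y₁ * z = w) ∧
        ad * a = x₁ * (a * ad) ∧ ad * a = (a * ad) * y₁) ∧
    (IsWEP e f a ↔
      ∃ x₂ y₂ : A, (∀ z : A, x₂ * z = 0 → z = 0) ∧
        ad * a = x₂ * (a * ad) ∧ ad * a = (a * ad) * y₂) ∧
    (IsWEP e f a ↔
      ∃ z₁ z₂ : A, ad * a = a * z₁ * ad ∧ a * ad = ad * z₂ * a) := by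
  have hiff := wep_iff_comm e f a ad had
  obtain ⟨ha1, ha2, ha3, ha4⟩ := had
  have hpE : (a * ad) * (a * ad) = a * ad := by rw [← mul_assoc, ha1]
  have hpF : (ad * a) * (ad * a) = ad * a := by
    calc (ad * a) * (ad * a) = (ad * a * ad) * a := by simp only [mul_assoc]
    _ = ad * a := by rw [ha2]
  -- generic backward step from the x-side (left cancellable) and y-side equations
  have hback : ∀ x₁ y₁ : A, (∀ z : A, x₁ * z = 0 → z = 0) →
      ad * a = x₁ * (a * ad) → ad * a = (a * ad) * y₁ → a * ad = ad * a := by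
    intro x₁ y₁ hinj hx hy
    have h3 : (a * ad) * (ad * a) = ad * a := by
      rw [hy, ← mul_assoc, hpE, ← hy]
    have hcancel : x₁ * ((a * ad) * (ad * a) - a * ad) = 0 := by
      rw [mul_sub, ← mul_assoc x₁ (a * ad) (ad * a), ← hx, hpF, sub_self]
    have h2 : (a * ad) * (ad * a) = a * ad := sub_eq_zero.mp (hinj _ hcancel)
    exact h2.symm.trans h3
  refine ⟨?_, ?_, ?_, ?_⟩
  · rw [hiff]
    constructor
    · intro hcomm
      exact ⟨1, 1, by rw [Units.val_one, one_mul, hcomm], by rw [Units.val_one, mul_one, hcomm]⟩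
    · rintro ⟨x, y, hx, hy⟩
      refine hback (x : A) (y : A) ?_ hx hy
      intro z hz
      have := congrArg (fun m => ((x⁻¹ : Aˣ) : A) * m) hz
      simpa [← mul_assoc, Units.inv_mul] using this
  · rw [hiff]
    constructor
    · intro hcomm
      exact ⟨1, 1, fun z hz => by simpa using hz, fun w => ⟨w, by simp⟩,
        by rw [one_mul, hcomm], by rw [mul_one, hcomm]⟩
    · rintro ⟨x₁, y₁, hinj, _, hx, hy⟩
      exact hback x₁ y₁ hinj hx hy
  · rw [hiff]
    constructor
    · intro hcomm
      exact ⟨1, 1, fun z hz => by simpa using hz, by rw [one_mul, hcomm], by rw [mul_one, hcomm]⟩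
    · rintro ⟨x₂, y₂, hinj, hx, hy⟩
      exact hback x₂ y₂ hinj hx hy
  · rw [hiff]
    constructor
    · intro hcomm
      refine ⟨ad * a, a * ad, ?_, ?_⟩
      · rw [← mul_assoc, ha1]; exact hcomm.symm
      · rw [← mul_assoc, ha2]; exact hcomm
    · rintro ⟨z₁, z₂, h1, h2⟩
      have C1 : (a * ad) * (ad * a) = ad * a := by
        rw [h1]
        calc (a * ad) * (a * z₁ * ad) = (a * ad * a) * z₁ * ad := by simp only [mul_assoc]
        _ = a * z₁ * ad := by rw [ha1]
      have C2 : (a * ad) * (ad * a) = a * ad := by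
        rw [h2]
        calc (ad * z₂ * a) * (ad * a) = ad * z₂ * (a * ad * a) := by simp only [mul_assoc]
        _ = ad * z₂ * a := by rw [ha1]
      exact C2.symm.trans C1
end
end

section
/- Let X₁ and X₂ be complex Banach spaces, let T₁ ∈ L(X₁) be a bounded linear isomorphism, let X be a complex Banach space, let E, F ∈ L(X) be invertible positive operators, and suppose there is a bounded linear isomorphism J : X₁ ⊕₁ X₂ → X such that T = J (T₁ ⊕ 0) J^{-1} ∈ L(X). Set T' = J (T₁^{-1} ⊕ 0) J^{-1} ∈ L(X). Then the following are equivalent: (i) T is weighted Moore–Penrose invertible with weights E and F and T^†_{E,F} = T'; (ii) T is weighted EP with weights E and F and T^†_{E,F} = T'; (iii) Q₁ = J (I_{X₁} ⊕ 0) J^{-1} ∈ H(L(X)^E) and Q₂ = J (0 ⊕ I_{X₂}) J^{-1} ∈ H(L(X)^F). -/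
/-!
Common definitions: hermitian and positive elements of a complex unital Banach
algebra, hermitian elements with respect to the equivalent norm induced by an
invertible positive element (weight), and the weighted Moore–Penrose inverse,
both for Banach algebra elements and for bounded linear operators between
Banach spaces.
-/

noncomputable section

/-- The direct sum operator `A₁ ⊕ A₂` on `X₁ ⊕₁ X₂` (the product with the
1-norm `‖x₁ ⊕ x₂‖ = ‖x₁‖ + ‖x₂‖`). -/
def dsumOp {X₁ X₂ : Type*} [NormedAddCommGroup X₁] [NormedSpace ℂ X₁]
    [NormedAddCommGroup X₂] [NormedSpace ℂ X₂]
    (A₁ : X₁ →L[ℂ] X₁) (A₂ : X₂ →L[ℂ] X₂) :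
    WithLp 1 (X₁ × X₂) →L[ℂ] WithLp 1 (X₁ × X₂) :=
  ((WithLp.prodContinuousLinearEquiv 1 ℂ X₁ X₂).symm.toContinuousLinearMap).comp
    ((A₁.prodMap A₂).comp
      (WithLp.prodContinuousLinearEquiv 1 ℂ X₁ X₂).toContinuousLinearMap)

theorem herm_wt_one_sub {A : Type*} [NormedRing A] [NormedAlgebra ℂ A] [CompleteSpace A]
    {u a : A} (h : IsHermitianWt u a) : IsHermitianWt u (1 - a) := by
  obtain ⟨s, hs, hsq, hnorm⟩ := h
  refine ⟨s, hs, hsq, fun t => ?_⟩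
  have hsplit : ((Complex.I * (t : ℂ)) • (1 - a))
      = (Complex.I * (t : ℂ)) • (1 : A) + (Complex.I * ((-t : ℝ) : ℂ)) • a := by
    push_cast
    rw [smul_sub]
    module
  have hc : Commute ((Complex.I * (t : ℂ)) • (1 : A)) ((Complex.I * ((-t : ℝ) : ℂ)) • a) :=
    ((Commute.one_left a).smul_left _).smul_right _
  rw [hsplit, NormedSpace.exp_add_of_commute_of_mem_ball (𝕂 := ℂ) hc
    ((NormedSpace.expSeries_radius_eq_top ℂ A).symm ▸ edist_lt_top _ _)
    ((NormedSpace.expSeries_radius_eq_top ℂ A).symm ▸ edist_lt_top _ _)]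
  have h1 : NormedSpace.exp ((Complex.I * (t : ℂ)) • (1 : A))
      = NormedSpace.exp (Complex.I * (t : ℂ)) • (1 : A) := by
    rw [← Algebra.algebraMap_eq_smul_one, ← Algebra.algebraMap_eq_smul_one,
      NormedSpace.algebraMap_exp_comm]
  rw [h1]
  have := hnorm (-t)
  calc ‖(s : A) * ((NormedSpace.exp (Complex.I * (t : ℂ)) • (1 : A)) *
        NormedSpace.exp ((Complex.I * ((-t : ℝ) : ℂ)) • a)) * ((s⁻¹ : Aˣ) : A)‖
      = ‖NormedSpace.exp (Complex.I * (t : ℂ)) •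
        ((s : A) * NormedSpace.exp ((Complex.I * ((-t : ℝ) : ℂ)) • a) * ((s⁻¹ : Aˣ) : A))‖ := by
        rw [smul_mul_assoc, one_mul, mul_smul_comm, smul_mul_assoc]
    _ = ‖NormedSpace.exp (Complex.I * (t : ℂ))‖ * ‖(s : A) *
        NormedSpace.exp ((Complex.I * ((-t : ℝ) : ℂ)) • a) * ((s⁻¹ : Aˣ) : A)‖ := norm_smul _ _
    _ = 1 := by
        rw [this, mul_one, ← Complex.exp_eq_exp_ℂ, Complex.norm_exp]
        simp [mul_comm]

/-- Proposition 4.1: with `T = J (T₁ ⊕ 0) J⁻¹` and `T' = J (T₁⁻¹ ⊕ 0) J⁻¹`,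
the following are equivalent: (i) `T` is weighted Moore–Penrose invertible
with weights `E, F` and `T^†_{E,F} = T'`; (ii) `T` is weighted EP with weights
`E, F` and `T^†_{E,F} = T'`; (iii) `Q₁ = J (I ⊕ 0) J⁻¹ ∈ H(L(X)^E)` and
`Q₂ = J (0 ⊕ I) J⁻¹ ∈ H(L(X)^F)`. -/
theorem weighted_EP_of_similarity_to_direct_sum
    {X₁ X₂ X : Type*}
    [NormedAddCommGroup X₁] [NormedSpace ℂ X₁] [CompleteSpace X₁]
    [NormedAddCommGroup X₂] [NormedSpace ℂ X₂] [CompleteSpace X₂]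
    [NormedAddCommGroup X] [NormedSpace ℂ X] [CompleteSpace X]
    (T₁ : X₁ ≃L[ℂ] X₁) (E F : X →L[ℂ] X)
    (hE : IsPositiveEl E ∧ IsUnit E) (hF : IsPositiveEl F ∧ IsUnit F)
    (J : WithLp 1 (X₁ × X₂) ≃L[ℂ] X) (T T' : X →L[ℂ] X)
    (hT : T = J.toContinuousLinearMap.comp
      ((dsumOp (T₁ : X₁ →L[ℂ] X₁) (0 : X₂ →L[ℂ] X₂)).comp
        J.symm.toContinuousLinearMap))
    (hT' : T' = J.toContinuousLinearMap.comp
      ((dsumOp ((T₁.symm : X₁ ≃L[ℂ] X₁) : X₁ →L[ℂ] X₁) (0 : X₂ →L[ℂ] X₂)).comp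
        J.symm.toContinuousLinearMap)) :
    (IsWMPIop E F T T' ↔ (IsWMPIop E F T T' ∧ T.comp T' = T'.comp T)) ∧
    (IsWMPIop E F T T' ↔
      (IsHermitianWt E (J.toContinuousLinearMap.comp
          ((dsumOp (1 : X₁ →L[ℂ] X₁) (0 : X₂ →L[ℂ] X₂)).comp
            J.symm.toContinuousLinearMap)) ∧
        IsHermitianWt F (J.toContinuousLinearMap.comp
          ((dsumOp (0 : X₁ →L[ℂ] X₁) (1 : X₂ →L[ℂ] X₂)).comp
            J.symm.toContinuousLinearMap)))) := by
  set Q₁ : X →L[ℂ] X := J.toContinuousLinearMap.comp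
      ((dsumOp (1 : X₁ →L[ℂ] X₁) (0 : X₂ →L[ℂ] X₂)).comp J.symm.toContinuousLinearMap) with hQ₁
  set Q₂ : X →L[ℂ] X := J.toContinuousLinearMap.comp
      ((dsumOp (0 : X₁ →L[ℂ] X₁) (1 : X₂ →L[ℂ] X₂)).comp J.symm.toContinuousLinearMap) with hQ₂
  have hTT' : T.comp T' = Q₁ := by
    ext x
    simp [hT, hT', hQ₁, dsumOp, Prod.map, Prod.ext_iff]
  have hT'T : T'.comp T = Q₁ := by
    ext x
    simp [hT, hT', hQ₁, dsumOp, Prod.map, Prod.ext_iff]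
  have hTTT : Q₁.comp T = T := by
    ext x
    simp [hT, hQ₁, dsumOp, Prod.map, Prod.ext_iff]
  have hT'TT' : Q₁.comp T' = T' := by
    ext x
    simp [hT', hQ₁, dsumOp, Prod.map, Prod.ext_iff]
  have key : ∀ p : X₁ × X₂,
      Prod.map (⇑(0 : X₁ →L[ℂ] X₁)) (⇑(1 : X₂ →L[ℂ] X₂)) p
        + Prod.map (⇑(1 : X₁ →L[ℂ] X₁)) (⇑(0 : X₂ →L[ℂ] X₂)) p = p := by
    rintro ⟨a, b⟩
    simp [Prod.map]
  have hQ2 : Q₂ = 1 - Q₁ := by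
    ext x
    simp only [hQ₁, hQ₂, dsumOp, ContinuousLinearMap.comp_apply,
      ContinuousLinearMap.sub_apply, ContinuousLinearMap.one_apply,
      ContinuousLinearEquiv.coe_coe, WithLp.prodContinuousLinearEquiv_apply,
      WithLp.prodContinuousLinearEquiv_symm_apply]
    simp only [ContinuousLinearMap.coe_prodMap']
    rw [eq_sub_iff_add_eq, ← map_add, ← WithLp.toLp_add, key]
    exact J.apply_symm_apply x
  constructor
  · exact ⟨fun h => ⟨h, by rw [hTT', hT'T]⟩, And.left⟩
  · constructor
    · rintro ⟨-, -, hE1, hF1⟩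
      refine ⟨by rwa [hTT'] at hE1, ?_⟩
      rw [hT'T] at hF1
      rw [hQ2]
      exact herm_wt_one_sub hF1
    · rintro ⟨hE1, hF1⟩
      refine ⟨by rw [hTT', hTTT], by rw [hT'T, hT'TT'], by rwa [hTT'], ?_⟩
      rw [hT'T]
      have := herm_wt_one_sub (hQ2 ▸ hF1)
      rwa [sub_sub_cancel] at this
end
end
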